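/- arXiv:2305.18266 — 8 statements merged into one kernel-verified Lean document; each statement's English description precedes it below -/
import Mathlib

section
/- Let γ > 0 and s > 0 be real numbers, let a > 0 be real, and let ℓ ∈ ℂ satisfy Re ℓ ≥ 0. Then the functions c ↦ e^{sc}·exp(−a e^{γc} − ℓ e^{γc/2}) and c ↦ e^{sc}·(γ(s+γ/2)·a e^{γc} + (γ²/2)·(a e^{γc})·(ℓ e^{γc/2}) + (γ²/4)·(ℓ e^{γc/2})²)·exp(−a e^{γc} − ℓ e^{γc/2}) are Lebesgue integrable on ℝ, and s(s+γ/2) · ∫_ℝ e^{sc} exp(−a e^{γc} − ℓ e^{γc/2}) dc = ∫_ℝ e^{sc} ( γ(s+γ/2)·a e^{γc} + (γ²/2)·(a e^{γc})·(ℓ e^{γc/2}) + (γ²/4)·(ℓ e^{γc/2})² ) exp(−a e^{γc} − ℓ e^{γc/2}) dc. -/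
open MeasureTheory Set Filter Topology


lemma sq_div_four_le_exp {x : ℝ} (hx : 0 ≤ x) : x ^ 2 / 4 ≤ Real.exp x := by
  have h := Real.add_one_le_exp (x / 2)
  have h2 : Real.exp (x / 2) * Real.exp (x / 2) = Real.exp x := by
    rw [← Real.exp_add]; ring_nf
  nlinarith [Real.exp_pos (x / 2)]

lemma real_integrable {γ a : ℝ} (hγ : 0 < γ) (ha : 0 < a) {t : ℝ} (ht : 0 < t) :
    Integrable (fun c : ℝ => Real.exp (t * c - a * Real.exp (γ * c))) := by
  set b : ℝ := a * γ ^ 2 / 4 with hbdef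
  have hb : 0 < b := by positivity
  have hG : Integrable (fun c : ℝ => Real.exp (t * c - b * c ^ 2)) := by
    have h0 := (integrable_exp_neg_mul_sq hb).comp_sub_right (t / (2 * b))
    have h1 := h0.const_mul (Real.exp (t ^ 2 / (4 * b)))
    refine h1.congr (Eventually.of_forall fun c => ?_)
    show Real.exp _ * Real.exp _ = _
    rw [← Real.exp_add]
    congr 1
    field_simp
    ring
  have hIio : IntegrableOn (fun c : ℝ => Real.exp (t * c - a * Real.exp (γ * c))) (Iio 0) := by
    have hexp : IntegrableOn (fun c : ℝ => Real.exp (t * c)) (Iio 0) := by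
      have h1 : Integrable ((Ioi (0:ℝ)).indicator fun x => Real.exp (-t * x)) :=
        (integrable_indicator_iff measurableSet_Ioi).2 (exp_neg_integrableOn_Ioi 0 ht)
      have h2 := h1.comp_neg
      have h3 : (fun x : ℝ => (Ioi (0:ℝ)).indicator (fun x => Real.exp (-t * x)) (-x))
          = (Iio (0:ℝ)).indicator fun x => Real.exp (t * x) := by
        funext x
        by_cases hx : x < 0
        · have h5 : -x ∈ Ioi (0:ℝ) := by simpa using hx
          have h6 : x ∈ Iio (0:ℝ) := hx
          rw [Set.indicator_of_mem h5, Set.indicator_of_mem h6]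
          ring_nf
        · have h5 : -x ∉ Ioi (0:ℝ) := by simpa using hx
          have h6 : x ∉ Iio (0:ℝ) := hx
          rw [Set.indicator_of_notMem h5, Set.indicator_of_notMem h6]
      rw [h3] at h2
      exact (integrable_indicator_iff measurableSet_Iio).1 h2
    refine hexp.mono' ?_ (Eventually.of_forall fun c => ?_)
    · exact (Real.continuous_exp.comp (by continuity)).aestronglyMeasurable.restrict
    · rw [Real.norm_eq_abs, abs_of_pos (Real.exp_pos _)]
      apply Real.exp_le_exp.2
      nlinarith [Real.exp_pos (γ * c), mul_pos ha (Real.exp_pos (γ * c))]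
  have hIci : IntegrableOn (fun c : ℝ => Real.exp (t * c - a * Real.exp (γ * c))) (Ici 0) := by
    refine hG.integrableOn.mono' ?_ ?_
    · exact (Real.continuous_exp.comp (by continuity)).aestronglyMeasurable.restrict
    · rw [ae_restrict_iff' measurableSet_Ici]
      refine Eventually.of_forall fun c hc => ?_
      rw [Real.norm_eq_abs, abs_of_pos (Real.exp_pos _)]
      apply Real.exp_le_exp.2
      have h4 : (γ * c) ^ 2 / 4 ≤ Real.exp (γ * c) :=
        sq_div_four_le_exp (mul_nonneg hγ.le hc)
      have : b * c ^ 2 ≤ a * Real.exp (γ * c) := by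
        rw [hbdef]; nlinarith
      linarith
  have := hIio.union hIci
  rwa [Iio_union_Ici, integrableOn_univ] at this


lemma norm_aux (γ a : ℝ) (ℓ : ℂ) (t c : ℝ) :
    ‖Complex.exp ((t:ℂ) * c) *
      Complex.exp (-(a * Real.exp (γ * c)) - ℓ * Real.exp (γ * c / 2))‖
    = Real.exp (t * c - a * Real.exp (γ * c) - ℓ.re * Real.exp (γ * c / 2)) := by
  rw [← Complex.exp_add, Complex.norm_exp]
  simp only [Complex.add_re, Complex.sub_re, Complex.neg_re, Complex.mul_re,
    Complex.ofReal_re, Complex.ofReal_im, mul_zero, zero_mul, sub_zero]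
  ring_nf

lemma cexp_integrable {γ a : ℝ} (hγ : 0 < γ) (ha : 0 < a) {ℓ : ℂ} (hℓ : 0 ≤ ℓ.re)
    {t : ℝ} (ht : 0 < t) :
    Integrable (fun c : ℝ => Complex.exp ((t:ℂ) * c) *
      Complex.exp (-(a * Real.exp (γ * c)) - ℓ * Real.exp (γ * c / 2))) := by
  refine (real_integrable hγ ha ht).mono' ?_ (Eventually.of_forall fun c => ?_)
  · apply Continuous.aestronglyMeasurable
    fun_prop
  · rw [norm_aux]
    apply Real.exp_le_exp.2
    have := mul_nonneg hℓ (Real.exp_pos (γ * c / 2)).le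
    linarith

lemma split1 (t v c : ℝ) :
    Complex.exp (((t + v : ℝ) : ℂ) * c)
      = Complex.exp ((t:ℂ) * c) * (Real.exp (v * c) : ℂ) := by
  rw [Complex.ofReal_exp, ← Complex.exp_add]
  congr 1
  push_cast
  ring

lemma key_ibp {γ a : ℝ} (hγ : 0 < γ) (ha : 0 < a) {ℓ : ℂ} (hℓ : 0 ≤ ℓ.re)
    {t : ℝ} (ht : 0 < t) :
    (t : ℂ) * ∫ c : ℝ, Complex.exp ((t:ℂ) * c) *
        Complex.exp (-(a * Real.exp (γ * c)) - ℓ * Real.exp (γ * c / 2))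
      = (γ * a : ℝ) * (∫ c : ℝ, Complex.exp (((t + γ : ℝ):ℂ) * c) *
          Complex.exp (-(a * Real.exp (γ * c)) - ℓ * Real.exp (γ * c / 2)))
        + (γ / 2 : ℝ) * ℓ * ∫ c : ℝ, Complex.exp (((t + γ / 2 : ℝ):ℂ) * c) *
          Complex.exp (-(a * Real.exp (γ * c)) - ℓ * Real.exp (γ * c / 2)) := by
  set F : ℝ → ℂ := fun c => Complex.exp (-(a * Real.exp (γ * c)) - ℓ * Real.exp (γ * c / 2))
    with hF
  set Φ : ℝ → ℂ := fun c =>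
    Complex.exp ((t:ℂ) * c - (a * Real.exp (γ * c) : ℝ) - ℓ * (Real.exp (γ * c / 2) : ℝ))
    with hΦ
  have hΦeq : ∀ c : ℝ, Φ c = Complex.exp ((t:ℂ) * c) * F c := by
    intro c
    rw [hΦ, hF, ← Complex.exp_add]
    push_cast
    ring_nf
  -- derivative
  have hderiv : ∀ c : ℝ, HasDerivAt Φ
      (Φ c * ((t:ℂ) - (a * (Real.exp (γ * c) * γ) : ℝ)
        - ℓ * (Real.exp (γ * c / 2) * (γ / 2) : ℝ))) c := by
    intro c
    have h1 : HasDerivAt (fun c : ℝ => t * c) t c := by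
      simpa using (hasDerivAt_id c).const_mul t
    have hγc : HasDerivAt (fun c : ℝ => γ * c) γ c := by
      simpa using (hasDerivAt_id c).const_mul γ
    have hγc2 : HasDerivAt (fun c : ℝ => γ * c / 2) (γ / 2) c := hγc.div_const 2
    have h2 : HasDerivAt (fun c : ℝ => a * Real.exp (γ * c))
        (a * (Real.exp (γ * c) * γ)) c :=
      (((Real.hasDerivAt_exp (γ * c)).comp c hγc)).const_mul a
    have h3 : HasDerivAt (fun c : ℝ => Real.exp (γ * c / 2))
        (Real.exp (γ * c / 2) * (γ / 2)) c :=
      hγc2.exp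
    have hg : HasDerivAt
        (fun c : ℝ => (t:ℂ) * c - ((a * Real.exp (γ * c) : ℝ) : ℂ)
          - ℓ * ((Real.exp (γ * c / 2) : ℝ) : ℂ))
        ((t:ℂ) - ((a * (Real.exp (γ * c) * γ) : ℝ) : ℂ)
          - ℓ * ((Real.exp (γ * c / 2) * (γ / 2) : ℝ) : ℂ)) c := by
      have ha1 : HasDerivAt (fun c : ℝ => (t:ℂ) * c) (t:ℂ) c := by
        simpa using ((hasDerivAt_id c).ofReal_comp (z := c)).const_mul (t:ℂ)
      exact (ha1.sub h2.ofReal_comp).sub (h3.ofReal_comp.const_mul ℓ)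
    exact hg.cexp
  -- rewrite the derivative as a linear combination
  have hsub : 0 < t + γ := by linarith
  have hsub2 : 0 < t + γ / 2 := by linarith
  have hint_t := cexp_integrable hγ ha hℓ ht
  have hint_tγ := cexp_integrable hγ ha hℓ hsub
  have hint_tγ2 := cexp_integrable hγ ha hℓ hsub2
  set b : ℝ := a * γ ^ 2 / 4 with hbdef
  have hb : 0 < b := by positivity
  have hΦ'eq : (fun c : ℝ => Φ c * ((t:ℂ) - (a * (Real.exp (γ * c) * γ) : ℝ)
        - ℓ * (Real.exp (γ * c / 2) * (γ / 2) : ℝ)))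
      = fun c : ℝ => (t:ℂ) * (Complex.exp ((t:ℂ) * c) * F c)
        - (γ * a : ℝ) * (Complex.exp (((t + γ : ℝ):ℂ) * c) * F c)
        - ((γ / 2 : ℝ) * ℓ) * (Complex.exp (((t + γ / 2 : ℝ):ℂ) * c) * F c) := by
    funext c
    have e2 : Real.exp (γ / 2 * c) = Real.exp (γ * c / 2) := by ring_nf
    rw [hΦeq, split1 t γ c, split1 t (γ/2) c, e2]
    push_cast
    ring
  have hintΦ' : Integrable (fun c : ℝ => Φ c * ((t:ℂ) - (a * (Real.exp (γ * c) * γ) : ℝ)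
      - ℓ * (Real.exp (γ * c / 2) * (γ / 2) : ℝ))) := by
    rw [hΦ'eq]
    exact ((hint_t.const_mul _).sub (hint_tγ.const_mul _)).sub (hint_tγ2.const_mul _)
  have hnorm : ∀ c : ℝ, ‖Φ c‖ ≤ Real.exp (t * c - a * Real.exp (γ * c)) := by
    intro c
    rw [hΦeq, norm_aux]
    apply Real.exp_le_exp.2
    have := mul_nonneg hℓ (Real.exp_pos (γ * c / 2)).le
    linarith
  have hbound_bot : Tendsto (fun c : ℝ => Real.exp (t * c - a * Real.exp (γ * c)))
      atBot (nhds 0) := by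
    apply Real.tendsto_exp_atBot.comp
    apply tendsto_atBot_mono (f := fun c : ℝ => t * c)
    · intro c
      nlinarith [mul_pos ha (Real.exp_pos (γ * c))]
    · exact (tendsto_const_mul_atBot_of_pos ht).2 tendsto_id
  have hbound_top : Tendsto (fun c : ℝ => Real.exp (t * c - a * Real.exp (γ * c)))
      atTop (nhds 0) := by
    apply Real.tendsto_exp_atBot.comp
    apply tendsto_atBot_mono' atTop (f₁ := fun c : ℝ => t * c - b * c ^ 2)
    · filter_upwards [eventually_ge_atTop (0:ℝ)] with c hc
      have h4 : (γ * c) ^ 2 / 4 ≤ Real.exp (γ * c) :=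
        sq_div_four_le_exp (mul_nonneg hγ.le hc)
      have : b * c ^ 2 ≤ a * Real.exp (γ * c) := by rw [hbdef]; nlinarith
      linarith
    · have h5 : Tendsto (fun c : ℝ => c * (b * c - t)) atTop atTop := by
        apply Tendsto.atTop_mul_atTop₀ tendsto_id
        exact tendsto_atTop_add_const_right _ (-t)
          (((tendsto_const_mul_atTop_of_pos hb).2 tendsto_id).congr (fun c => by
            simp only [id_eq]))
      have h6 := tendsto_neg_atTop_atBot.comp h5
      refine h6.congr fun c => ?_
      simp only [Function.comp]
      ring
  have h_bot : Tendsto Φ atBot (nhds 0) := by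
    rw [tendsto_zero_iff_norm_tendsto_zero]
    exact squeeze_zero (fun c => norm_nonneg _) hnorm hbound_bot
  have h_top : Tendsto Φ atTop (nhds 0) := by
    rw [tendsto_zero_iff_norm_tendsto_zero]
    exact squeeze_zero (fun c => norm_nonneg _) hnorm hbound_top
  have hzero : (∫ c : ℝ, Φ c * ((t:ℂ) - (a * (Real.exp (γ * c) * γ) : ℝ)
      - ℓ * (Real.exp (γ * c / 2) * (γ / 2) : ℝ))) = 0 := by
    simpa using integral_of_hasDerivAt_of_tendsto hderiv hintΦ' h_bot h_top
  rw [hΦ'eq] at hzero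
  have hA : Integrable (fun c : ℝ => (t:ℂ) * (Complex.exp ((t:ℂ) * c) * F c)) :=
    hint_t.const_mul _
  have hB : Integrable (fun c : ℝ => ((γ * a : ℝ):ℂ) * (Complex.exp (((t + γ : ℝ):ℂ) * c) * F c)) :=
    hint_tγ.const_mul _
  have hC : Integrable (fun c : ℝ =>
      ((γ / 2 : ℝ):ℂ) * ℓ * (Complex.exp (((t + γ / 2 : ℝ):ℂ) * c) * F c)) :=
    hint_tγ2.const_mul _
  have hAB : Integrable (fun c : ℝ => (t:ℂ) * (Complex.exp ((t:ℂ) * c) * F c)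
      - ((γ * a : ℝ):ℂ) * (Complex.exp (((t + γ : ℝ):ℂ) * c) * F c)) := by
    exact hA.sub hB
  rw [integral_sub hAB hC, integral_sub hA hB,
    integral_const_mul, integral_const_mul, integral_const_mul] at hzero
  show (t:ℂ) * ∫ c : ℝ, Complex.exp ((t:ℂ) * c) * F c
    = ((γ * a : ℝ):ℂ) * (∫ c : ℝ, Complex.exp (((t + γ : ℝ):ℂ) * c) * F c)
      + ((γ / 2 : ℝ):ℂ) * ℓ * ∫ c : ℝ, Complex.exp (((t + γ / 2 : ℝ):ℂ) * c) * F c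
  linear_combination hzero

/-- Double integration-by-parts identity in the zero mode `c` underlying the relation
`s(s+γ/2)·H = Ĥ` for the boundary three-point function of Liouville CFT
(Lemma 2.7 of the paper). -/
theorem liouville_zero_mode_ibp (γ s a : ℝ) (hγ : 0 < γ) (hs : 0 < s) (ha : 0 < a)
    (ℓ : ℂ) (hℓ : 0 ≤ ℓ.re) :
    Integrable (fun c : ℝ =>
      Complex.exp (s * c) *
        Complex.exp (-(a * Real.exp (γ * c)) - ℓ * Real.exp (γ * c / 2))) ∧
    Integrable (fun c : ℝ =>
      Complex.exp (s * c) *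
        ((γ * (s + γ / 2)) * (a * Real.exp (γ * c))
          + (γ ^ 2 / 2) * ((a : ℂ) * Real.exp (γ * c)) * (ℓ * Real.exp (γ * c / 2))
          + (γ ^ 2 / 4) * (ℓ * Real.exp (γ * c / 2)) ^ 2) *
        Complex.exp (-(a * Real.exp (γ * c)) - ℓ * Real.exp (γ * c / 2))) ∧
    ((s : ℂ) * (s + γ / 2)) *
        ∫ c : ℝ, Complex.exp (s * c) *
          Complex.exp (-(a * Real.exp (γ * c)) - ℓ * Real.exp (γ * c / 2)) =
      ∫ c : ℝ, Complex.exp (s * c) *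
        ((γ * (s + γ / 2)) * (a * Real.exp (γ * c))
          + (γ ^ 2 / 2) * ((a : ℂ) * Real.exp (γ * c)) * (ℓ * Real.exp (γ * c / 2))
          + (γ ^ 2 / 4) * (ℓ * Real.exp (γ * c / 2)) ^ 2) *
        Complex.exp (-(a * Real.exp (γ * c)) - ℓ * Real.exp (γ * c / 2)) := by
  have h1 : (0:ℝ) < s + γ := by linarith
  have h2 : (0:ℝ) < s + γ / 2 := by linarith
  have h3 : (0:ℝ) < s + γ / 2 + γ := by linarith
  have hIγ := cexp_integrable hγ ha hℓ h1
  have hI3 := cexp_integrable hγ ha hℓ h3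
  have hRHSeq : (fun c : ℝ => Complex.exp ((s:ℂ) * c) *
        ((γ * (s + γ / 2)) * (a * Real.exp (γ * c))
          + (γ ^ 2 / 2) * ((a : ℂ) * Real.exp (γ * c)) * (ℓ * Real.exp (γ * c / 2))
          + (γ ^ 2 / 4) * (ℓ * Real.exp (γ * c / 2)) ^ 2) *
        Complex.exp (-(a * Real.exp (γ * c)) - ℓ * Real.exp (γ * c / 2)))
      = fun c : ℝ =>
        ((γ * (s + γ / 2) * a : ℝ):ℂ) * (Complex.exp (((s + γ : ℝ):ℂ) * c) *
          Complex.exp (-(a * Real.exp (γ * c)) - ℓ * Real.exp (γ * c / 2)))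
        + ((γ ^ 2 / 2 * a : ℝ):ℂ) * ℓ * (Complex.exp (((s + γ / 2 + γ : ℝ):ℂ) * c) *
          Complex.exp (-(a * Real.exp (γ * c)) - ℓ * Real.exp (γ * c / 2)))
        + ((γ ^ 2 / 4 : ℝ):ℂ) * ℓ ^ 2 * (Complex.exp (((s + γ : ℝ):ℂ) * c) *
          Complex.exp (-(a * Real.exp (γ * c)) - ℓ * Real.exp (γ * c / 2))) := by
    funext c
    have e2 : Real.exp (γ / 2 * c) = Real.exp (γ * c / 2) := by ring_nf
    have hsplit3 : Complex.exp (((s + γ / 2 + γ : ℝ):ℂ) * c)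
        = Complex.exp ((s:ℂ) * c) * (Real.exp (γ * c / 2) : ℂ) * (Real.exp (γ * c) : ℂ) := by
      rw [split1 (s + γ / 2) γ c, split1 s (γ / 2) c, e2]
    have harg : γ * c / 2 + γ * c / 2 = γ * c := by ring
    have hE : ((Real.exp (γ * c / 2) : ℝ):ℂ) * ((Real.exp (γ * c / 2) : ℝ):ℂ)
        = ((Real.exp (γ * c) : ℝ):ℂ) := by
      rw [← Complex.ofReal_mul, ← Real.exp_add, harg]
    rw [split1 s γ c, hsplit3]
    linear_combination (norm := (push_cast; ring_nf)) ((γ:ℂ) ^ 2 / 4 * ℓ ^ 2 * Complex.exp ((s:ℂ) * c) *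
      Complex.exp (-(a * Real.exp (γ * c)) - ℓ * Real.exp (γ * c / 2))) * hE
  have hA : Integrable (fun c : ℝ => ((γ * (s + γ / 2) * a : ℝ):ℂ) *
      (Complex.exp (((s + γ : ℝ):ℂ) * c) *
        Complex.exp (-(a * Real.exp (γ * c)) - ℓ * Real.exp (γ * c / 2)))) :=
    hIγ.const_mul _
  have hB : Integrable (fun c : ℝ => ((γ ^ 2 / 2 * a : ℝ):ℂ) * ℓ *
      (Complex.exp (((s + γ / 2 + γ : ℝ):ℂ) * c) *
        Complex.exp (-(a * Real.exp (γ * c)) - ℓ * Real.exp (γ * c / 2)))) :=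
    hI3.const_mul _
  have hC : Integrable (fun c : ℝ => ((γ ^ 2 / 4 : ℝ):ℂ) * ℓ ^ 2 *
      (Complex.exp (((s + γ : ℝ):ℂ) * c) *
        Complex.exp (-(a * Real.exp (γ * c)) - ℓ * Real.exp (γ * c / 2)))) :=
    hIγ.const_mul _
  have hAB : Integrable (fun c : ℝ => ((γ * (s + γ / 2) * a : ℝ):ℂ) *
      (Complex.exp (((s + γ : ℝ):ℂ) * c) *
        Complex.exp (-(a * Real.exp (γ * c)) - ℓ * Real.exp (γ * c / 2)))
      + ((γ ^ 2 / 2 * a : ℝ):ℂ) * ℓ *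
      (Complex.exp (((s + γ / 2 + γ : ℝ):ℂ) * c) *
        Complex.exp (-(a * Real.exp (γ * c)) - ℓ * Real.exp (γ * c / 2)))) := by
    exact hA.add hB
  refine ⟨cexp_integrable hγ ha hℓ hs, ?_, ?_⟩
  · rw [hRHSeq]
    exact hAB.add hC
  · have hint3 : (∫ c : ℝ, Complex.exp ((s:ℂ) * c) *
        ((γ * (s + γ / 2)) * (a * Real.exp (γ * c))
          + (γ ^ 2 / 2) * ((a : ℂ) * Real.exp (γ * c)) * (ℓ * Real.exp (γ * c / 2))
          + (γ ^ 2 / 4) * (ℓ * Real.exp (γ * c / 2)) ^ 2) *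
        Complex.exp (-(a * Real.exp (γ * c)) - ℓ * Real.exp (γ * c / 2)))
        = ((γ * (s + γ / 2) * a : ℝ):ℂ) * (∫ c : ℝ, Complex.exp (((s + γ : ℝ):ℂ) * c) *
            Complex.exp (-(a * Real.exp (γ * c)) - ℓ * Real.exp (γ * c / 2)))
          + ((γ ^ 2 / 2 * a : ℝ):ℂ) * ℓ * (∫ c : ℝ, Complex.exp (((s + γ / 2 + γ : ℝ):ℂ) * c) *
            Complex.exp (-(a * Real.exp (γ * c)) - ℓ * Real.exp (γ * c / 2)))
          + ((γ ^ 2 / 4 : ℝ):ℂ) * ℓ ^ 2 * (∫ c : ℝ, Complex.exp (((s + γ : ℝ):ℂ) * c) *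
            Complex.exp (-(a * Real.exp (γ * c)) - ℓ * Real.exp (γ * c / 2))) := by
      rw [hRHSeq, integral_add hAB hC, integral_add hA hB,
        integral_const_mul, integral_const_mul, integral_const_mul]
    rw [hint3]
    have key1 := key_ibp hγ ha hℓ hs
    have key2 := key_ibp hγ ha hℓ h2
    rw [show s + γ / 2 + γ / 2 = s + γ by ring] at key2
    push_cast at key1 key2 ⊢
    linear_combination ((s:ℂ) + (γ:ℂ) / 2) * key1 + (γ:ℂ) / 2 * ℓ * key2
end

section
/- Let γ > 0 be real, let s ∈ (−γ/2, 0), let a > 0 be real, and let ℓ ∈ ℂ satisfy Re ℓ ≥ 0. Then the function c ↦ e^{sc}·(exp(−a e^{γc} − ℓ e^{γc/2}) − 1) is Lebesgue integrable on ℝ, the right-hand side below is absolutely convergent, and s(s+γ/2) · ∫_ℝ e^{sc} ( exp(−a e^{γc} − ℓ e^{γc/2}) − 1 ) dc = ∫_ℝ e^{sc} ( γ(s+γ/2)·a e^{γc} + (γ²/2)·(a e^{γc})·(ℓ e^{γc/2}) + (γ²/4)·(ℓ e^{γc/2})² ) exp(−a e^{γc} − ℓ e^{γc/2}) dc. -/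
open MeasureTheory Set Filter
open scoped Topology

lemma intOn_Iic_exp {k : ℝ} (hk : 0 < k) :
    IntegrableOn (fun c : ℝ => Real.exp (k * c)) (Set.Iic 0) := by
  have h : Integrable ((Set.Iic (0:ℝ)).indicator Real.exp) :=
    (integrable_indicator_iff measurableSet_Iic).2 (integrableOn_exp_Iic 0)
  have h2 := h.comp_mul_left' (ne_of_gt hk)
  rw [← integrable_indicator_iff measurableSet_Iic]
  refine h2.congr ?_
  filter_upwards with c
  by_cases hc : c ≤ 0
  · simp [Set.indicator_of_mem, hc, Set.mem_Iic,
      mul_nonpos_of_nonneg_of_nonpos hk.le hc]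
  · push_neg at hc
    have : ¬ (k * c ≤ 0) := by nlinarith
    simp [Set.indicator, this, not_le.2 hc]

lemma intOn_Ioi_exp {k : ℝ} (hk : k < 0) :
    IntegrableOn (fun c : ℝ => Real.exp (k * c)) (Set.Ioi 0) := by
  have := exp_neg_integrableOn_Ioi 0 (neg_pos.2 hk)
  simpa using this

lemma tendsto_exp_mul_atBot {k : ℝ} (hk : 0 < k) :
    Tendsto (fun c : ℝ => Real.exp (k * c)) atBot (𝓝 0) :=
  Real.tendsto_exp_atBot.comp (tendsto_id.const_mul_atBot hk)

lemma tendsto_exp_mul_atTop_zero {k : ℝ} (hk : k < 0) :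
    Tendsto (fun c : ℝ => Real.exp (k * c)) atTop (𝓝 0) :=
  Real.tendsto_exp_atBot.comp (tendsto_id.const_mul_atTop_of_neg hk)

lemma mul_exp_neg_le_one {x : ℝ} (hx : 0 ≤ x) : x * Real.exp (-x) ≤ 1 := by
  rw [Real.exp_neg]
  rw [mul_inv_le_iff₀ (Real.exp_pos x), one_mul]
  linarith [Real.add_one_le_exp x]

lemma sq_mul_exp_neg_le_four {x : ℝ} (hx : 0 ≤ x) : x ^ 2 * Real.exp (-x) ≤ 4 := by
  have h2 : Real.exp x = Real.exp (x/2) * Real.exp (x/2) := by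
    rw [← Real.exp_add]; ring_nf
  have h1 : x / 2 + 1 ≤ Real.exp (x / 2) := Real.add_one_le_exp _
  rw [Real.exp_neg, mul_inv_le_iff₀ (Real.exp_pos x)]
  nlinarith

lemma norm_cexp_sub_one_le {z : ℂ} (hz : z.re ≤ 0) : ‖Complex.exp z - 1‖ ≤ 2 * ‖z‖ := by
  by_cases h : ‖z‖ ≤ 1
  · exact Complex.norm_exp_sub_one_le h
  · push_neg at h
    calc ‖Complex.exp z - 1‖ ≤ ‖Complex.exp z‖ + ‖(1:ℂ)‖ := norm_sub_le _ _
    _ ≤ 1 + 1 := by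
        rw [Complex.norm_exp, norm_one]
        simp only [add_le_add_iff_right]
        exact Real.exp_le_one_iff.2 hz
    _ ≤ 2 * ‖z‖ := by
        have : (1:ℝ) < ‖z‖ := h
        linarith

noncomputable def Wz (γ a : ℝ) (ℓ : ℂ) (c : ℝ) : ℂ :=
  -(a * Real.exp (γ * c)) - ℓ * Real.exp (γ * c / 2)

noncomputable def fF (γ s a : ℝ) (ℓ : ℂ) (c : ℝ) : ℂ :=
  Complex.exp (s * c) * (Complex.exp (Wz γ a ℓ c) - 1)

noncomputable def gG (γ s a : ℝ) (ℓ : ℂ) (c : ℝ) : ℂ :=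
  Complex.exp (s * c) *
    ((γ * (s + γ / 2)) * (a * Real.exp (γ * c))
      + (γ ^ 2 / 2) * ((a : ℂ) * Real.exp (γ * c)) * (ℓ * Real.exp (γ * c / 2))
      + (γ ^ 2 / 4) * (ℓ * Real.exp (γ * c / 2)) ^ 2) *
    Complex.exp (Wz γ a ℓ c)

noncomputable def HH (γ s a : ℝ) (ℓ : ℂ) (c : ℝ) : ℂ :=
  ((s : ℂ) + γ / 2) * (Complex.exp (s * c) * (Complex.exp (Wz γ a ℓ c) - 1))
    + (γ : ℂ) / 2 * (Complex.exp (s * c) *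
        ((ℓ * Real.exp (γ * c / 2)) * Complex.exp (Wz γ a ℓ c)))

lemma dre (k : ℝ) (c : ℝ) :
    HasDerivAt (fun c : ℝ => ((Real.exp (k * c)) : ℂ)) ((k : ℂ) * Real.exp (k * c)) c := by
  have h : HasDerivAt (fun c : ℝ => Real.exp (k * c)) (k * Real.exp (k * c)) c := by
    simpa [mul_comm] using (HasDerivAt.exp ((hasDerivAt_id c).const_mul k))
  simpa using h.ofReal_comp

lemma dre2 (γ : ℝ) (c : ℝ) :
    HasDerivAt (fun c : ℝ => ((Real.exp (γ * c / 2)) : ℂ))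
      (((γ / 2 : ℝ) : ℂ) * Real.exp (γ * c / 2)) c := by
  have h := dre (γ / 2) c
  have he : (fun c : ℝ => ((Real.exp (γ / 2 * c)) : ℂ)) =
      (fun c : ℝ => ((Real.exp (γ * c / 2)) : ℂ)) := by
    funext x; ring_nf
  rw [he] at h
  convert h using 2
  ring_nf

lemma ds (s : ℝ) (c : ℝ) :
    HasDerivAt (fun c : ℝ => Complex.exp (s * c)) ((s : ℂ) * Complex.exp (s * c)) c := by
  have h : HasDerivAt (fun c : ℝ => ((s * c : ℝ) : ℂ)) ((s : ℝ) : ℂ) c := by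
    simpa using ((hasDerivAt_id c).const_mul s).ofReal_comp
  have := h.cexp
  simp only [Complex.ofReal_mul] at this
  simpa [mul_comm] using this

lemma dW (γ a : ℝ) (ℓ : ℂ) (c : ℝ) :
    HasDerivAt (Wz γ a ℓ)
      (-((a : ℂ) * ((γ : ℂ) * Real.exp (γ * c))) -
        ℓ * (((γ / 2 : ℝ) : ℂ) * Real.exp (γ * c / 2))) c := by
  exact (((dre γ c).const_mul (a : ℂ)).neg).sub ((dre2 γ c).const_mul ℓ)

lemma dH (γ s a : ℝ) (ℓ : ℂ) (c : ℝ) :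
    HasDerivAt (HH γ s a ℓ)
      (((s : ℂ) * ((s : ℂ) + γ / 2)) * fF γ s a ℓ c - gG γ s a ℓ c) c := by
  have hE := (dW γ a ℓ c).cexp
  have h1 := ((ds s c).mul (hE.sub_const 1)).const_mul ((s : ℂ) + γ / 2)
  have h2 := ((ds s c).mul (((dre2 γ c).const_mul ℓ).mul hE)).const_mul ((γ : ℂ) / 2)
  have h := h1.add h2
  refine h.congr_deriv ?_
  simp only [Pi.mul_apply]
  unfold fF gG Wz
  push_cast
  ring

section bounds
variable {γ s a : ℝ} {ℓ : ℂ}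

lemma Wre_le (ha : 0 < a) (hℓ : 0 ≤ ℓ.re) (c : ℝ) :
    (Wz γ a ℓ c).re ≤ -(a * Real.exp (γ * c)) := by
  unfold Wz
  have : (ℓ * (Real.exp (γ * c / 2) : ℂ)).re = ℓ.re * Real.exp (γ * c / 2) := by
    simp [Complex.mul_re, -Complex.ofReal_exp]
  simp only [Complex.sub_re, Complex.neg_re, this]
  have h2 : 0 ≤ ℓ.re * Real.exp (γ * c / 2) := mul_nonneg hℓ (Real.exp_pos _).le
  have h3 : (((a : ℂ) * (Real.exp (γ * c) : ℂ))).re = a * Real.exp (γ * c) := by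
    simp [Complex.mul_re, -Complex.ofReal_exp]
  rw [h3]; linarith

lemma normE_le (ha : 0 < a) (hℓ : 0 ≤ ℓ.re) (c : ℝ) :
    ‖Complex.exp (Wz γ a ℓ c)‖ ≤ Real.exp (-(a * Real.exp (γ * c))) := by
  rw [Complex.norm_exp]
  exact Real.exp_le_exp.2 (Wre_le ha hℓ c)

lemma normE_le_one (ha : 0 < a) (hℓ : 0 ≤ ℓ.re) (c : ℝ) :
    ‖Complex.exp (Wz γ a ℓ c)‖ ≤ 1 := by
  refine (normE_le ha hℓ c).trans ?_
  rw [Real.exp_le_one_iff]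
  have := mul_pos ha (Real.exp_pos (γ * c))
  linarith

lemma normW_le (ha : 0 < a) (c : ℝ) :
    ‖Wz γ a ℓ c‖ ≤ a * Real.exp (γ * c) + ‖ℓ‖ * Real.exp (γ * c / 2) := by
  unfold Wz
  refine (norm_sub_le _ _).trans ?_
  gcongr
  · rw [norm_neg, norm_mul]
    simp [Complex.norm_real, Real.norm_eq_abs, abs_of_pos ha,
      abs_of_pos (Real.exp_pos _), -Complex.ofReal_exp]
  · rw [norm_mul]
    gcongr
    simp [Complex.norm_real, Real.norm_eq_abs, abs_of_pos (Real.exp_pos _), -Complex.ofReal_exp]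

end bounds

lemma contW (γ a : ℝ) (ℓ : ℂ) : Continuous (Wz γ a ℓ) := by
  unfold Wz; fun_prop

lemma contF (γ s a : ℝ) (ℓ : ℂ) : Continuous (fF γ s a ℓ) := by
  unfold fF Wz; fun_prop

lemma contG (γ s a : ℝ) (ℓ : ℂ) : Continuous (gG γ s a ℓ) := by
  unfold gG Wz; fun_prop

section integrab
variable {γ s a : ℝ} {ℓ : ℂ}

lemma normF_le (ha : 0 < a) (hℓ : 0 ≤ ℓ.re) (c : ℝ) :
    ‖fF γ s a ℓ c‖ ≤ Real.exp (s * c) *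
      (2 * (a * Real.exp (γ * c) + ‖ℓ‖ * Real.exp (γ * c / 2))) := by
  unfold fF
  rw [norm_mul]
  have h1 : ‖Complex.exp ((s : ℂ) * c)‖ = Real.exp (s * c) := by
    rw [Complex.norm_exp]
    norm_num [Complex.mul_re]
  rw [h1]
  gcongr
  refine (norm_cexp_sub_one_le ?_).trans ?_
  · refine (Wre_le ha hℓ c).trans ?_
    have := mul_pos ha (Real.exp_pos (γ * c)); linarith
  · have := normW_le (γ := γ) (ℓ := ℓ) ha c
    linarith

lemma norm_cexp_s (s c : ℝ) : ‖Complex.exp ((s : ℂ) * c)‖ = Real.exp (s * c) := by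
  rw [Complex.norm_exp]
  norm_num [Complex.mul_re]

lemma intF (hγ : 0 < γ) (hs1 : -(γ/2) < s) (hs2 : s < 0) (ha : 0 < a) (hℓ : 0 ≤ ℓ.re) :
    Integrable (fF γ s a ℓ) := by
  have h1 : IntegrableOn (fF γ s a ℓ) (Iic 0) := by
    refine Integrable.mono'
      ((intOn_Iic_exp (k := s + γ/2) (by linarith)).const_mul (2 * (a + ‖ℓ‖)))
      ((contF γ s a ℓ).aestronglyMeasurable.restrict) ?_
    filter_upwards [ae_restrict_mem measurableSet_Iic] with c hc
    refine (normF_le ha hℓ c).trans ?_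
    have hc0 : c ≤ 0 := hc
    have e1 : Real.exp (s * c) * Real.exp (γ * c) = Real.exp ((s + γ/2) * c) * Real.exp (γ/2 * c) := by
      rw [← Real.exp_add, ← Real.exp_add]; ring_nf
    have e2 : Real.exp (s * c) * Real.exp (γ * c / 2) = Real.exp ((s + γ/2) * c) := by
      rw [← Real.exp_add]; ring_nf
    have e3 : Real.exp (γ/2 * c) ≤ 1 := Real.exp_le_one_iff.2 (by nlinarith)
    have e4 : (0:ℝ) < Real.exp ((s + γ/2) * c) := Real.exp_pos _
    have hℓn : (0:ℝ) ≤ ‖ℓ‖ := norm_nonneg _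
    have k1 : Real.exp (s * c) * Real.exp (γ * c) ≤ Real.exp ((s + γ/2) * c) := by
      rw [e1]; nlinarith
    nlinarith [mul_le_mul_of_nonneg_left k1 ha.le,
      mul_le_mul_of_nonneg_left e2.le hℓn]
  have h2 : IntegrableOn (fF γ s a ℓ) (Ioi 0) := by
    refine Integrable.mono'
      ((intOn_Ioi_exp (k := s) hs2).const_mul 2)
      ((contF γ s a ℓ).aestronglyMeasurable.restrict) ?_
    filter_upwards with c
    unfold fF
    rw [norm_mul, norm_cexp_s]
    have : ‖Complex.exp (Wz γ a ℓ c) - 1‖ ≤ 2 := by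
      calc ‖Complex.exp (Wz γ a ℓ c) - 1‖ ≤ ‖Complex.exp (Wz γ a ℓ c)‖ + ‖(1:ℂ)‖ :=
        norm_sub_le _ _
      _ ≤ 1 + 1 := by rw [norm_one]; exact add_le_add (normE_le_one ha hℓ c) le_rfl
      _ = 2 := by norm_num
    calc Real.exp (s*c) * ‖Complex.exp (Wz γ a ℓ c) - 1‖ ≤ Real.exp (s*c) * 2 := by
          exact mul_le_mul_of_nonneg_left this (Real.exp_pos _).le
    _ = 2 * Real.exp (s*c) := by ring
  have := h1.union h2
  rwa [Iic_union_Ioi, integrableOn_univ] at this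

lemma normP_le (hγ : 0 < γ) (hsg : 0 < s + γ/2) (ha : 0 < a) (c : ℝ) :
    ‖((γ : ℂ) * (s + γ / 2)) * (a * Real.exp (γ * c))
      + (γ ^ 2 / 2) * ((a : ℂ) * Real.exp (γ * c)) * (ℓ * Real.exp (γ * c / 2))
      + (γ ^ 2 / 4) * (ℓ * Real.exp (γ * c / 2)) ^ 2‖ ≤
    γ * (s + γ/2) * a * Real.exp (γ * c)
      + γ^2/2 * a * ‖ℓ‖ * (Real.exp (γ * c) * Real.exp (γ * c / 2))
      + γ^2/4 * ‖ℓ‖^2 * Real.exp (γ * c) := by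
  refine (norm_add_le _ _).trans ?_
  have t1 : ‖((γ : ℂ) * (s + γ / 2)) * (a * Real.exp (γ * c))‖
      = γ * (s + γ/2) * a * Real.exp (γ * c) := by
    have e : ((γ : ℂ) * ((s : ℂ) + γ / 2)) * ((a : ℂ) * Real.exp (γ * c))
        = ((γ * (s + γ/2) * a * Real.exp (γ * c) : ℝ) : ℂ) := by push_cast; ring
    rw [e, Complex.norm_real, Real.norm_eq_abs, abs_of_pos]
    positivity
  have t2 : ‖((γ:ℂ) ^ 2 / 2) * ((a : ℂ) * Real.exp (γ * c)) * (ℓ * Real.exp (γ * c / 2))‖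
      = γ^2/2 * a * ‖ℓ‖ * (Real.exp (γ * c) * Real.exp (γ * c / 2)) := by
    have e : ((γ:ℂ) ^ 2 / 2) * ((a : ℂ) * Real.exp (γ * c)) * (ℓ * Real.exp (γ * c / 2))
        = ((γ^2/2 * a * Real.exp (γ * c) * Real.exp (γ * c / 2) : ℝ) : ℂ) * ℓ := by
      push_cast; ring
    rw [e, norm_mul, Complex.norm_real, Real.norm_eq_abs, abs_of_pos (by positivity)]
    ring
  have e2 : Real.exp (γ * c / 2) ^ 2 = Real.exp (γ * c) := by
    rw [sq, ← Real.exp_add]; ring_nf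
  have t3 : ‖((γ:ℂ) ^ 2 / 4) * (ℓ * Real.exp (γ * c / 2)) ^ 2‖
      = γ^2/4 * ‖ℓ‖^2 * Real.exp (γ * c) := by
    have e : ((γ:ℂ) ^ 2 / 4) * (ℓ * Real.exp (γ * c / 2)) ^ 2
        = ((γ^2/4 * (Real.exp (γ * c / 2))^2 : ℝ) : ℂ) * ℓ^2 := by push_cast; ring
    rw [e, norm_mul, Complex.norm_real, Real.norm_eq_abs, abs_of_pos (by positivity),
      norm_pow, e2]
    ring
  have h := norm_add_le (((γ : ℂ) * (s + γ / 2)) * (a * Real.exp (γ * c)))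
    (((γ:ℂ) ^ 2 / 2) * ((a : ℂ) * Real.exp (γ * c)) * (ℓ * Real.exp (γ * c / 2)))
  rw [t3]
  refine add_le_add (h.trans ?_) le_rfl
  rw [t1, t2]

set_option maxHeartbeats 1000000 in
lemma intG (hγ : 0 < γ) (hs1 : -(γ/2) < s) (hs2 : s < 0) (ha : 0 < a) (hℓ : 0 ≤ ℓ.re) :
    Integrable (gG γ s a ℓ) := by
  have hsg : 0 < s + γ/2 := by linarith
  have hLn : (0:ℝ) ≤ ‖ℓ‖ := norm_nonneg _
  set C : ℝ := γ*(s+γ/2)*a + γ^2/2*a*‖ℓ‖ + γ^2/4*‖ℓ‖^2 with hC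
  have hC0 : 0 ≤ C := by positivity
  have key : ∀ c : ℝ, ‖gG γ s a ℓ c‖ ≤ Real.exp (s * c) *
      (γ * (s + γ/2) * a * Real.exp (γ * c)
        + γ^2/2 * a * ‖ℓ‖ * (Real.exp (γ * c) * Real.exp (γ * c / 2))
        + γ^2/4 * ‖ℓ‖^2 * Real.exp (γ * c)) * ‖Complex.exp (Wz γ a ℓ c)‖ := by
    intro c
    unfold gG
    rw [norm_mul, norm_mul, norm_cexp_s]
    gcongr
    exact normP_le hγ hsg ha c
  have h1 : IntegrableOn (gG γ s a ℓ) (Iic 0) := by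
    refine Integrable.mono'
      ((intOn_Iic_exp (k := s + γ/2) hsg).const_mul C)
      ((contG γ s a ℓ).aestronglyMeasurable.restrict) ?_
    filter_upwards [ae_restrict_mem measurableSet_Iic] with c hc
    have hc0 : c ≤ 0 := hc
    refine (key c).trans ?_
    set X := Real.exp (γ * c) with hX
    set u := Real.exp (γ * c / 2) with hu
    have hXu : X ≤ u := Real.exp_le_exp.2 (by nlinarith)
    have hu1 : u ≤ 1 := Real.exp_le_one_iff.2 (by nlinarith)
    have hX1 : X ≤ 1 := Real.exp_le_one_iff.2 (by nlinarith)
    have hXp : 0 < X := Real.exp_pos _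
    have hup : 0 < u := Real.exp_pos _
    have heq : Real.exp (s * c) * u = Real.exp ((s + γ/2) * c) := by
      rw [hu, ← Real.exp_add]; ring_nf
    have hE1 : ‖Complex.exp (Wz γ a ℓ c)‖ ≤ 1 := normE_le_one ha hℓ c
    have hEn : 0 ≤ ‖Complex.exp (Wz γ a ℓ c)‖ := norm_nonneg _
    have hXuu : X * u ≤ u := by nlinarith
    have hP : γ * (s + γ/2) * a * X + γ^2/2 * a * ‖ℓ‖ * (X * u) + γ^2/4 * ‖ℓ‖^2 * X
        ≤ C * u := by
      rw [hC]
      nlinarith [mul_le_mul_of_nonneg_left hXu (by positivity : (0:ℝ) ≤ γ*(s+γ/2)*a),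
        mul_le_mul_of_nonneg_left hXuu (by positivity : (0:ℝ) ≤ γ^2/2*a*‖ℓ‖),
        mul_le_mul_of_nonneg_left hXu (by positivity : (0:ℝ) ≤ γ^2/4*‖ℓ‖^2)]
    have hPn : 0 ≤ γ * (s + γ/2) * a * X + γ^2/2 * a * ‖ℓ‖ * (X * u) + γ^2/4 * ‖ℓ‖^2 * X := by
      positivity
    calc Real.exp (s * c) * (γ * (s + γ/2) * a * X + γ^2/2 * a * ‖ℓ‖ * (X * u)
          + γ^2/4 * ‖ℓ‖^2 * X) * ‖Complex.exp (Wz γ a ℓ c)‖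
        ≤ Real.exp (s * c) * (C * u) * 1 := by
          have := Real.exp_pos (s * c)
          gcongr
      _ = C * Real.exp ((s + γ/2) * c) := by rw [← heq]; ring
  have h2 : IntegrableOn (gG γ s a ℓ) (Ioi 0) := by
    refine Integrable.mono'
      ((intOn_Ioi_exp (k := s) hs2).const_mul (4 * C / a^2))
      ((contG γ s a ℓ).aestronglyMeasurable.restrict) ?_
    filter_upwards [ae_restrict_mem measurableSet_Ioi] with c hc
    have hc0 : (0:ℝ) ≤ c := (mem_Ioi.1 hc).le
    refine (key c).trans ?_
    set X := Real.exp (γ * c) with hX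
    set u := Real.exp (γ * c / 2) with hu
    have hXp : 0 < X := Real.exp_pos _
    have hup : 0 < u := Real.exp_pos _
    have hX1 : 1 ≤ X := Real.one_le_exp_iff.2 (by nlinarith)
    have huX : u ≤ X := Real.exp_le_exp.2 (by nlinarith)
    have hXX : X ≤ X^2 := by nlinarith
    have hE : ‖Complex.exp (Wz γ a ℓ c)‖ ≤ Real.exp (-(a * X)) := normE_le ha hℓ c
    have hP : γ * (s + γ/2) * a * X + γ^2/2 * a * ‖ℓ‖ * (X * u) + γ^2/4 * ‖ℓ‖^2 * X
        ≤ C * X^2 := by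
      rw [hC]
      nlinarith [mul_le_mul_of_nonneg_left hXX (by positivity : (0:ℝ) ≤ γ*(s+γ/2)*a),
        mul_le_mul_of_nonneg_left (mul_le_mul_of_nonneg_left huX hXp.le)
          (by positivity : (0:ℝ) ≤ γ^2/2*a*‖ℓ‖),
        mul_le_mul_of_nonneg_left hXX (by positivity : (0:ℝ) ≤ γ^2/4*‖ℓ‖^2)]
    have hsq : X^2 * Real.exp (-(a * X)) ≤ 4 / a^2 := by
      have h4 := sq_mul_exp_neg_le_four (x := a * X) (by positivity)
      rw [div_eq_mul_inv, ← mul_le_mul_iff_of_pos_left (show (0:ℝ) < a^2 by positivity)]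
      calc a^2 * (X^2 * Real.exp (-(a*X))) = (a*X)^2 * Real.exp (-(a*X)) := by ring
        _ ≤ 4 := h4
        _ = a^2 * (4 * (a^2)⁻¹) := by field_simp
    calc Real.exp (s * c) * (γ * (s + γ/2) * a * X + γ^2/2 * a * ‖ℓ‖ * (X * u)
          + γ^2/4 * ‖ℓ‖^2 * X) * ‖Complex.exp (Wz γ a ℓ c)‖
        ≤ Real.exp (s * c) * (C * X^2) * Real.exp (-(a * X)) := by
          have hPn : 0 ≤ γ * (s + γ/2) * a * X + γ^2/2 * a * ‖ℓ‖ * (X * u)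
              + γ^2/4 * ‖ℓ‖^2 * X := by positivity
          have := Real.exp_pos (s * c)
          gcongr
      _ = C * (X^2 * Real.exp (-(a * X))) * Real.exp (s * c) := by ring
      _ ≤ C * (4 / a^2) * Real.exp (s * c) := by
          have := Real.exp_pos (s * c)
          gcongr
      _ = 4 * C / a^2 * Real.exp (s * c) := by ring
  have := h1.union h2
  rwa [Iic_union_Ioi, integrableOn_univ] at this

lemma normH_le (hγ : 0 < γ) (hsg : 0 < s + γ/2) (c : ℝ) :
    ‖HH γ s a ℓ c‖ ≤ (s + γ/2) * ‖fF γ s a ℓ c‖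
      + γ/2 * ‖ℓ‖ * (Real.exp (s * c) *
          (Real.exp (γ * c / 2) * ‖Complex.exp (Wz γ a ℓ c)‖)) := by
  unfold HH fF
  refine (norm_add_le _ _).trans ?_
  simp only [norm_mul]
  have e1 : ‖((s : ℂ) + γ/2)‖ = s + γ/2 := by
    rw [show ((s:ℂ) + γ/2) = ((s + γ/2 : ℝ) : ℂ) by push_cast; ring, Complex.norm_real,
      Real.norm_eq_abs, abs_of_pos hsg]
  have e2 : ‖((γ : ℂ)/2)‖ = γ/2 := by
    rw [show ((γ:ℂ)/2) = ((γ/2 : ℝ) : ℂ) by push_cast; ring, Complex.norm_real,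
      Real.norm_eq_abs, abs_of_pos (by linarith)]
  have e3 : ‖((Real.exp (γ * c / 2) : ℝ) : ℂ)‖ = Real.exp (γ * c / 2) := by
    rw [Complex.norm_real, Real.norm_eq_abs, abs_of_pos (Real.exp_pos _)]
  rw [e1, e2, e3, norm_cexp_s]
  ring_nf
  exact le_refl _

lemma tendstoH_atBot (hγ : 0 < γ) (hs1 : -(γ/2) < s) (ha : 0 < a) (hℓ : 0 ≤ ℓ.re) :
    Tendsto (HH γ s a ℓ) atBot (𝓝 0) := by
  have hsg : 0 < s + γ/2 := by linarith
  refine squeeze_zero_norm (a := fun c => (s + γ/2) * (2*a) * Real.exp ((s + γ) * c)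
      + ((s + γ/2) * (2*‖ℓ‖) + γ/2 * ‖ℓ‖) * Real.exp ((s + γ/2) * c)) (fun c => ?_) ?_
  · refine (normH_le hγ hsg c).trans ?_
    have hf := normF_le (γ := γ) (s := s) ha hℓ c
    have hE1 : ‖Complex.exp (Wz γ a ℓ c)‖ ≤ 1 := normE_le_one ha hℓ c
    have hEn : (0:ℝ) ≤ ‖Complex.exp (Wz γ a ℓ c)‖ := norm_nonneg _
    have e1 : Real.exp (s * c) * Real.exp (γ * c) = Real.exp ((s + γ) * c) := by
      rw [← Real.exp_add]; ring_nf
    have e2 : Real.exp (s * c) * Real.exp (γ * c / 2) = Real.exp ((s + γ/2) * c) := by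
      rw [← Real.exp_add]; ring_nf
    have hLn : (0:ℝ) ≤ ‖ℓ‖ := norm_nonneg _
    have h2 : Real.exp (s * c) * (Real.exp (γ * c / 2) * ‖Complex.exp (Wz γ a ℓ c)‖)
        ≤ Real.exp ((s + γ/2) * c) := by
      rw [← e2]
      have h := mul_le_mul_of_nonneg_left hE1
        (mul_nonneg (Real.exp_pos (s*c)).le (Real.exp_pos (γ*c/2)).le)
      nlinarith [h]
    have h1 : ‖fF γ s a ℓ c‖ ≤ 2*a * Real.exp ((s+γ)*c) + 2*‖ℓ‖ * Real.exp ((s+γ/2)*c) := by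
      refine hf.trans ?_
      rw [← e1, ← e2]; ring_nf; exact le_refl _
    nlinarith [mul_le_mul_of_nonneg_left h1 hsg.le,
      mul_le_mul_of_nonneg_left h2 (by positivity : (0:ℝ) ≤ γ/2 * ‖ℓ‖)]
  · have t1 := (tendsto_exp_mul_atBot (k := s + γ) (by linarith)).const_mul ((s + γ/2) * (2*a))
    have t2 := (tendsto_exp_mul_atBot (k := s + γ/2) hsg).const_mul
      ((s + γ/2) * (2*‖ℓ‖) + γ/2 * ‖ℓ‖)
    simpa using t1.add t2

lemma tendstoH_atTop (hγ : 0 < γ) (hs1 : -(γ/2) < s) (hs2 : s < 0) (ha : 0 < a)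
    (hℓ : 0 ≤ ℓ.re) : Tendsto (HH γ s a ℓ) atTop (𝓝 0) := by
  have hsg : 0 < s + γ/2 := by linarith
  refine squeeze_zero_norm (a := fun c =>
      ((s + γ/2) * 2 + γ/2 * ‖ℓ‖ * (1 + 1/a)) * Real.exp (s * c)) (fun c => ?_) ?_
  · refine (normH_le hγ hsg c).trans ?_
    have hE1 : ‖Complex.exp (Wz γ a ℓ c)‖ ≤ 1 := normE_le_one ha hℓ c
    have hf : ‖fF γ s a ℓ c‖ ≤ 2 * Real.exp (s * c) := by
      unfold fF
      rw [norm_mul, norm_cexp_s]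
      have : ‖Complex.exp (Wz γ a ℓ c) - 1‖ ≤ 2 := by
        calc ‖Complex.exp (Wz γ a ℓ c) - 1‖ ≤ ‖Complex.exp (Wz γ a ℓ c)‖ + ‖(1:ℂ)‖ :=
          norm_sub_le _ _
        _ ≤ 1 + 1 := by rw [norm_one]; exact add_le_add hE1 le_rfl
        _ = 2 := by norm_num
      nlinarith [Real.exp_pos (s * c)]
    have hu : Real.exp (γ * c / 2) * ‖Complex.exp (Wz γ a ℓ c)‖ ≤ 1 + 1/a := by
      set u := Real.exp (γ * c / 2) with hudef
      have hup : 0 < u := Real.exp_pos _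
      have hE : ‖Complex.exp (Wz γ a ℓ c)‖ ≤ Real.exp (-(a * Real.exp (γ * c))) :=
        normE_le ha hℓ c
      have hX : Real.exp (γ * c) = u ^ 2 := by
        rw [hudef, sq, ← Real.exp_add]; ring_nf
      have h1 : a * u^2 * Real.exp (-(a * u^2)) ≤ 1 :=
        mul_exp_neg_le_one (by positivity)
      have h2 : Real.exp (-(a * u^2)) ≤ 1 := Real.exp_le_one_iff.2 (by nlinarith)
      have hE' : ‖Complex.exp (Wz γ a ℓ c)‖ ≤ Real.exp (-(a * u^2)) := by rwa [hX] at hE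
      have hEn : (0:ℝ) ≤ ‖Complex.exp (Wz γ a ℓ c)‖ := norm_nonneg _
      have huu : u ≤ 1 + u^2 := by nlinarith [sq_nonneg (u - 1)]
      calc u * ‖Complex.exp (Wz γ a ℓ c)‖ ≤ u * Real.exp (-(a * u^2)) := by
            exact mul_le_mul_of_nonneg_left hE' hup.le
        _ ≤ (1 + u^2) * Real.exp (-(a * u^2)) := by
            exact mul_le_mul_of_nonneg_right huu (Real.exp_pos _).le
        _ = Real.exp (-(a * u^2)) + (1/a) * (a * u^2 * Real.exp (-(a * u^2))) := by
            field_simp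
        _ ≤ 1 + 1/a * 1 := by
            refine add_le_add h2 ?_
            exact mul_le_mul_of_nonneg_left h1 (by positivity)
        _ = 1 + 1/a := by ring
    have hLn : (0:ℝ) ≤ ‖ℓ‖ := norm_nonneg _
    have hsc := Real.exp_pos (s * c)
    nlinarith [mul_le_mul_of_nonneg_left hf hsg.le,
      mul_le_mul_of_nonneg_left (mul_le_mul_of_nonneg_left hu hsc.le)
        (by positivity : (0:ℝ) ≤ γ/2 * ‖ℓ‖)]
  · simpa using (tendsto_exp_mul_atTop_zero hs2).const_mul
      ((s + γ/2) * 2 + γ/2 * ‖ℓ‖ * (1 + 1/a))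

/-- Once-truncated double integration-by-parts identity in the zero mode `c` underlying the
truncated definition `s(s+γ/2)·R = R̂` of the boundary reflection coefficient of Liouville CFT
(Lemma 2.13 of the paper). -/
theorem liouville_zero_mode_ibp_truncated (γ s a : ℝ) (hγ : 0 < γ)
    (hs : s ∈ Set.Ioo (-(γ / 2)) 0) (ha : 0 < a) (ℓ : ℂ) (hℓ : 0 ≤ ℓ.re) :
    Integrable (fun c : ℝ =>
      Complex.exp (s * c) *
        (Complex.exp (-(a * Real.exp (γ * c)) - ℓ * Real.exp (γ * c / 2)) - 1)) ∧
    Integrable (fun c : ℝ =>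
      Complex.exp (s * c) *
        ((γ * (s + γ / 2)) * (a * Real.exp (γ * c))
          + (γ ^ 2 / 2) * ((a : ℂ) * Real.exp (γ * c)) * (ℓ * Real.exp (γ * c / 2))
          + (γ ^ 2 / 4) * (ℓ * Real.exp (γ * c / 2)) ^ 2) *
        Complex.exp (-(a * Real.exp (γ * c)) - ℓ * Real.exp (γ * c / 2))) ∧
    ((s : ℂ) * (s + γ / 2)) *
        ∫ c : ℝ, Complex.exp (s * c) *
          (Complex.exp (-(a * Real.exp (γ * c)) - ℓ * Real.exp (γ * c / 2)) - 1) =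
      ∫ c : ℝ, Complex.exp (s * c) *
        ((γ * (s + γ / 2)) * (a * Real.exp (γ * c))
          + (γ ^ 2 / 2) * ((a : ℂ) * Real.exp (γ * c)) * (ℓ * Real.exp (γ * c / 2))
          + (γ ^ 2 / 4) * (ℓ * Real.exp (γ * c / 2)) ^ 2) *
        Complex.exp (-(a * Real.exp (γ * c)) - ℓ * Real.exp (γ * c / 2)) := by
  obtain ⟨hs1, hs2⟩ := hs
  have hf : Integrable (fF γ s a ℓ) := intF hγ hs1 hs2 ha hℓ
  have hg : Integrable (gG γ s a ℓ) := intG hγ hs1 hs2 ha hℓ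
  refine ⟨hf, hg, ?_⟩
  have hφ : Integrable
      (fun c => ((s : ℂ) * ((s : ℂ) + γ/2)) * fF γ s a ℓ c - gG γ s a ℓ c) :=
    (hf.const_mul _).sub hg
  have hIic : ∫ c in Iic (0:ℝ),
      (((s : ℂ) * ((s : ℂ) + γ/2)) * fF γ s a ℓ c - gG γ s a ℓ c) = HH γ s a ℓ 0 - 0 :=
    integral_Iic_of_hasDerivAt_of_tendsto' (fun x _ => dH γ s a ℓ x) hφ.integrableOn
      (tendstoH_atBot hγ hs1 ha hℓ)
  have hIoi : ∫ c in Ioi (0:ℝ),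
      (((s : ℂ) * ((s : ℂ) + γ/2)) * fF γ s a ℓ c - gG γ s a ℓ c) = 0 - HH γ s a ℓ 0 :=
    integral_Ioi_of_hasDerivAt_of_tendsto' (fun x _ => dH γ s a ℓ x) hφ.integrableOn
      (tendstoH_atTop hγ hs1 hs2 ha hℓ)
  have hzero : ∫ c : ℝ,
      (((s : ℂ) * ((s : ℂ) + γ/2)) * fF γ s a ℓ c - gG γ s a ℓ c) = 0 := by
    rw [← intervalIntegral.integral_Iic_add_Ioi hφ.integrableOn hφ.integrableOn, hIic, hIoi]
    ring
  rw [integral_sub (hf.const_mul _) hg, integral_const_mul, sub_eq_zero] at hzero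
  exact hzero
end integrab
end

section
/- Let γ > 0 be real, let s ∈ (−γ, −γ/2), let a > 0 be real, and let ℓ ∈ ℂ satisfy Re ℓ ≥ 0. Then the function c ↦ e^{sc}·(exp(−a e^{γc} − ℓ e^{γc/2}) − 1 + ℓ e^{γc/2}) is Lebesgue integrable on ℝ, the right-hand side below is absolutely convergent, and s(s+γ/2) · ∫_ℝ e^{sc} ( exp(−a e^{γc} − ℓ e^{γc/2}) − 1 + ℓ e^{γc/2} ) dc = ∫_ℝ e^{sc} ( γ(s+γ/2)·a e^{γc} + (γ²/2)·(a e^{γc})·(ℓ e^{γc/2}) + (γ²/4)·(ℓ e^{γc/2})² ) exp(−a e^{γc} − ℓ e^{γc/2}) dc. -/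
open MeasureTheory Set Filter

lemma re_neg_mul_nonpos {w : ℂ} (hw : 0 ≤ w.re) {t : ℝ} (ht : 0 ≤ t) :
    (-((t : ℂ) * w)).re ≤ 0 := by
  simp only [Complex.neg_re, Complex.mul_re, Complex.ofReal_re, Complex.ofReal_im, zero_mul,
    sub_zero]
  exact neg_nonpos.2 (mul_nonneg ht hw)

lemma hasDerivAt_cexp_neg_mul (w : ℂ) (t : ℝ) :
    HasDerivAt (fun t : ℝ => Complex.exp (-((t : ℂ) * w)))
      (Complex.exp (-((t : ℂ) * w)) * (-w)) t := by
  have h1 : HasDerivAt (fun t : ℝ => -((t : ℂ) * w)) (-w) t := by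
    exact (((hasDerivAt_id t).ofReal_comp.mul_const w).neg).congr_deriv (by simp)
  exact h1.cexp

lemma norm_cexp_neg_sub_one_le (w : ℂ) (hw : 0 ≤ w.re) :
    ‖Complex.exp (-w) - 1‖ ≤ ‖w‖ := by
  have hcont : Continuous (fun t : ℝ => Complex.exp (-((t : ℂ) * w)) * (-w)) := by fun_prop
  have key : ∫ t in (0:ℝ)..1, Complex.exp (-((t : ℂ) * w)) * (-w)
      = Complex.exp (-w) - 1 := by
    have := intervalIntegral.integral_eq_sub_of_hasDerivAt
      (f := fun t : ℝ => Complex.exp (-((t : ℂ) * w)))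
      (f' := fun t : ℝ => Complex.exp (-((t : ℂ) * w)) * (-w))
      (fun t _ => hasDerivAt_cexp_neg_mul w t) ((hcont.intervalIntegrable 0 1))
    simpa using this
  rw [← key]
  have := intervalIntegral.norm_integral_le_of_norm_le_const
    (a := (0:ℝ)) (b := 1) (C := ‖w‖)
    (f := fun t : ℝ => Complex.exp (-((t : ℂ) * w)) * (-w)) ?_
  · simpa using this
  · intro t ht
    rw [Set.uIoc_of_le (by norm_num : (0:ℝ) ≤ 1)] at ht
    have ht0 : 0 ≤ t := le_of_lt ht.1
    rw [norm_mul, norm_neg]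
    have h1 : ‖Complex.exp (-((t : ℂ) * w))‖ ≤ 1 := by
      rw [Complex.norm_exp]
      exact Real.exp_le_one_iff.2 (re_neg_mul_nonpos hw ht0)
    calc ‖Complex.exp (-((t : ℂ) * w))‖ * ‖w‖ ≤ 1 * ‖w‖ :=
          mul_le_mul_of_nonneg_right h1 (norm_nonneg w)
      _ = ‖w‖ := one_mul _

lemma norm_cexp_neg_sub_one_add_le (w : ℂ) (hw : 0 ≤ w.re) :
    ‖Complex.exp (-w) - 1 + w‖ ≤ ‖w‖ ^ 2 := by
  have hder : ∀ t : ℝ, HasDerivAt (fun t : ℝ => Complex.exp (-((t : ℂ) * w)) + (t : ℂ) * w)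
      (Complex.exp (-((t : ℂ) * w)) * (-w) + w) t := by
    intro t
    have h2 : HasDerivAt (fun t : ℝ => (t : ℂ) * w) w t := by
      simpa using (hasDerivAt_id t).ofReal_comp.mul_const w
    exact (hasDerivAt_cexp_neg_mul w t).add h2
  have hcont : Continuous (fun t : ℝ => Complex.exp (-((t : ℂ) * w)) * (-w) + w) := by fun_prop
  have key : ∫ t in (0:ℝ)..1, (Complex.exp (-((t : ℂ) * w)) * (-w) + w)
      = Complex.exp (-w) - 1 + w := by
    have := intervalIntegral.integral_eq_sub_of_hasDerivAt
      (f := fun t : ℝ => Complex.exp (-((t : ℂ) * w)) + (t : ℂ) * w)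
      (f' := fun t : ℝ => Complex.exp (-((t : ℂ) * w)) * (-w) + w)
      (fun t _ => hder t) ((hcont.intervalIntegrable 0 1))
    rw [this]
    push_cast
    simp only [zero_mul, neg_zero, Complex.exp_zero, one_mul]
    ring
  rw [← key]
  have := intervalIntegral.norm_integral_le_of_norm_le_const
    (a := (0:ℝ)) (b := 1) (C := ‖w‖ ^ 2)
    (f := fun t : ℝ => Complex.exp (-((t : ℂ) * w)) * (-w) + w) ?_
  · simpa using this
  · intro t ht
    rw [Set.uIoc_of_le (by norm_num : (0:ℝ) ≤ 1)] at ht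
    have ht0 : 0 ≤ t := le_of_lt ht.1
    have heq : Complex.exp (-((t : ℂ) * w)) * (-w) + w
        = w * (1 - Complex.exp (-((t : ℂ) * w))) := by ring
    beta_reduce
    rw [heq, norm_mul]
    have h1 : ‖1 - Complex.exp (-((t : ℂ) * w))‖ ≤ ‖w‖ := by
      rw [norm_sub_rev]
      calc ‖Complex.exp (-((t : ℂ) * w)) - 1‖ ≤ ‖(t : ℂ) * w‖ := by
            refine norm_cexp_neg_sub_one_le _ ?_
            simp only [Complex.mul_re, Complex.ofReal_re, Complex.ofReal_im, zero_mul, sub_zero]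
            exact mul_nonneg ht0 hw
        _ ≤ ‖w‖ := by
            rw [norm_mul, Complex.norm_real, Real.norm_eq_abs, abs_of_nonneg ht0]
            nlinarith [norm_nonneg w, ht.2]
    calc ‖w‖ * ‖1 - Complex.exp (-((t : ℂ) * w))‖ ≤ ‖w‖ * ‖w‖ :=
          mul_le_mul_of_nonneg_left h1 (norm_nonneg w)
      _ = ‖w‖ ^ 2 := (sq ‖w‖).symm

lemma integrable_exp_lin_sub_exp {p b g : ℝ} (hp : 0 < p) (hb : 0 < b) (hg : 0 < g) :
    Integrable (fun c : ℝ => Real.exp (p * c - b * Real.exp (g * c))) := by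
  have hk : 0 < b * g ^ 2 / 4 := by positivity
  set k := b * g ^ 2 / 4 with hk_def
  have hgauss : Integrable (fun c : ℝ => Real.exp (p * c - k * c ^ 2)) := by
    have h0 : Integrable (fun c : ℝ => Real.exp (-k * c ^ 2)) := integrable_exp_neg_mul_sq hk
    have h1 := (h0.comp_sub_right (p / (2 * k))).const_mul (Real.exp (p ^ 2 / (4 * k)))
    have heq : (fun c : ℝ => Real.exp (p * c - k * c ^ 2))
        = fun c : ℝ => Real.exp (p ^ 2 / (4 * k)) * Real.exp (-k * (c - p / (2 * k)) ^ 2) := by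
      funext c
      rw [← Real.exp_add]
      congr 1
      field_simp
      ring
    rw [heq]
    exact h1
  have hcont : Continuous (fun c : ℝ => Real.exp (p * c - b * Real.exp (g * c))) := by fun_prop
  rw [← integrableOn_univ, ← Set.Iic_union_Ioi (a := (0:ℝ))]
  refine IntegrableOn.union ?_ ?_
  · -- on Iic 0, dominate by exp (p*c)
    refine Integrable.mono' (integrableOn_exp_mul_Iic hp 0) hcont.aestronglyMeasurable.restrict ?_
    refine (ae_restrict_iff' measurableSet_Iic).2 (ae_of_all _ fun c _ => ?_)
    rw [Real.norm_eq_abs, Real.abs_exp, Real.exp_le_exp]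
    nlinarith [Real.exp_pos (g * c), hb.le, (Real.exp_pos (g * c)).le]
  · -- on Ioi 0, dominate by the gaussian
    refine Integrable.mono' hgauss.integrableOn hcont.aestronglyMeasurable.restrict ?_
    refine (ae_restrict_iff' measurableSet_Ioi).2 (ae_of_all _ fun c hc => ?_)
    rw [Real.norm_eq_abs, Real.abs_exp, Real.exp_le_exp]
    have hc0 : (0:ℝ) ≤ c := le_of_lt hc
    -- need  - b * exp (g c) ≤ - k * c ^ 2, i.e. k c² ≤ b exp (g c)
    have h2 : (1 + g * c / 2) ^ 2 ≤ Real.exp (g * c) := by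
      rw [show Real.exp (g * c) = Real.exp (g * c / 2) ^ 2 by
        rw [← Real.exp_nat_mul]; congr 1; ring]
      have h3 : 1 + g * c / 2 ≤ Real.exp (g * c / 2) := by
        have := Real.add_one_le_exp (g * c / 2); linarith
      nlinarith [mul_nonneg (mul_nonneg hg.le hc0) (by norm_num : (0:ℝ) ≤ 1)]
    have h4 : k * c ^ 2 ≤ b * Real.exp (g * c) := by
      have h5 : (g * c / 2) ^ 2 ≤ (1 + g * c / 2) ^ 2 := by nlinarith [mul_nonneg hg.le hc0]
      calc k * c ^ 2 = b * (g * c / 2) ^ 2 := by rw [hk_def]; ring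
        _ ≤ b * (1 + g * c / 2) ^ 2 := by nlinarith
        _ ≤ b * Real.exp (g * c) := by nlinarith
    linarith

lemma integrable_two_sided {f : ℝ → ℂ} (hcont : Continuous f) {C₁ C₂ p q : ℝ}
    (hp : 0 < p) (hq : q < 0)
    (h₁ : ∀ c : ℝ, c ≤ 0 → ‖f c‖ ≤ C₁ * Real.exp (p * c))
    (h₂ : ∀ c : ℝ, 0 ≤ c → ‖f c‖ ≤ C₂ * Real.exp (q * c)) :
    Integrable f := by
  rw [← integrableOn_univ, ← Set.Iic_union_Ioi (a := (0:ℝ))]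
  refine IntegrableOn.union ?_ ?_
  · refine Integrable.mono' ((integrableOn_exp_mul_Iic hp 0).const_mul C₁)
      hcont.aestronglyMeasurable.restrict ?_
    exact (ae_restrict_iff' measurableSet_Iic).2 (ae_of_all _ h₁)
  · have hint : IntegrableOn (fun c : ℝ => C₂ * Real.exp (-(-q) * c)) (Ioi (0:ℝ)) :=
      (exp_neg_integrableOn_Ioi 0 (neg_pos.2 hq)).const_mul C₂
    refine Integrable.mono' hint hcont.aestronglyMeasurable.restrict ?_
    refine (ae_restrict_iff' measurableSet_Ioi).2 (ae_of_all _ fun c hc => ?_)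
    rw [neg_neg]
    exact h₂ c (le_of_lt hc)

lemma norm_E_le (a γ : ℝ) (ℓ : ℂ) (hℓ : 0 ≤ ℓ.re) (ha : 0 ≤ a) (c : ℝ) :
    ‖Complex.exp (-((a : ℂ) * Real.exp (γ * c)) - ℓ * Real.exp (γ * c / 2))‖
      ≤ Real.exp (-(a * Real.exp (γ * c))) := by
  rw [Complex.norm_exp, Real.exp_le_exp]
  set x := Real.exp (γ * c) with hx
  set y := Real.exp (γ * c / 2) with hy
  have hre : (-((a : ℂ) * (x : ℂ)) - ℓ * (y : ℂ)).re = -(a * x) - ℓ.re * y := by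
    simp [Complex.sub_re, Complex.neg_re, Complex.mul_re, Complex.ofReal_re, Complex.ofReal_im]
  rw [hre]
  nlinarith [Real.exp_pos (γ * c / 2), mul_nonneg hℓ (hy ▸ (Real.exp_pos (γ * c / 2)).le)]

lemma norm_cexp_ofReal_mul (s c : ℝ) : ‖Complex.exp ((s : ℂ) * (c : ℂ))‖ = Real.exp (s * c) := by
  rw [Complex.norm_exp]
  congr 1
  simp [Complex.mul_re]

lemma integrable_kernel (γ s a : ℝ) (hγ : 0 < γ) (ha : 0 < a) (ℓ : ℂ) (hℓ : 0 ≤ ℓ.re)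
    {h : ℝ → ℂ} (hcont : Continuous h) {C p : ℝ} (hsp : 0 < s + p)
    
    (hC : ∀ c, ‖h c‖ ≤ C * Real.exp (p * c)) :
    Integrable (fun c : ℝ => Complex.exp ((s : ℂ) * (c : ℂ)) * h c *
      Complex.exp (-((a : ℂ) * Real.exp (γ * c)) - ℓ * Real.exp (γ * c / 2))) := by
  have hdom : Integrable (fun c : ℝ => C * Real.exp ((s + p) * c - a * Real.exp (γ * c))) :=
    (integrable_exp_lin_sub_exp hsp ha hγ).const_mul C
  have hcont2 : Continuous (fun c : ℝ => Complex.exp ((s : ℂ) * (c : ℂ)) * h c *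
      Complex.exp (-((a : ℂ) * Real.exp (γ * c)) - ℓ * Real.exp (γ * c / 2))) := by
    fun_prop
  refine Integrable.mono' hdom hcont2.aestronglyMeasurable (ae_of_all _ fun c => ?_)
  rw [norm_mul, norm_mul, norm_cexp_ofReal_mul]
  calc Real.exp (s * c) * ‖h c‖ * ‖Complex.exp (-((a : ℂ) * Real.exp (γ * c))
        - ℓ * Real.exp (γ * c / 2))‖
      ≤ Real.exp (s * c) * (C * Real.exp (p * c)) * Real.exp (-(a * Real.exp (γ * c))) := by
        apply mul_le_mul
        · exact mul_le_mul_of_nonneg_left (hC c) (Real.exp_pos _).le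
        · exact norm_E_le a γ ℓ hℓ ha.le c
        · exact norm_nonneg _
        · have hC0 : (0:ℝ) ≤ C := by
            have := (norm_nonneg (h 0)).trans (hC 0)
            simpa using this
          exact mul_nonneg (Real.exp_pos _).le (mul_nonneg hC0 (Real.exp_pos _).le)
    _ = C * Real.exp ((s + p) * c - a * Real.exp (γ * c)) := by
        rw [show (s + p) * c - a * Real.exp (γ * c)
          = s * c + (p * c + -(a * Real.exp (γ * c))) by ring, Real.exp_add, Real.exp_add]
        ring

lemma norm_coe_mul_coe (r x : ℝ) (hr : 0 ≤ r) (hx : 0 ≤ x) :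
    ‖(r : ℂ) * (x : ℂ)‖ = r * x := by
  rw [norm_mul, Complex.norm_real, Complex.norm_real, Real.norm_eq_abs, Real.norm_eq_abs,
    abs_of_nonneg hr, abs_of_nonneg hx]

lemma norm_const_mul_coe (ℓ : ℂ) (x : ℝ) (hx : 0 ≤ x) :
    ‖ℓ * (x : ℂ)‖ = ‖ℓ‖ * x := by
  rw [norm_mul, Complex.norm_real, Real.norm_eq_abs, abs_of_nonneg hx]

lemma re_mix (a x : ℝ) (ℓ : ℂ) (y : ℝ) :
    ((a : ℂ) * (x : ℂ) + ℓ * (y : ℂ)).re = a * x + ℓ.re * y := by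
  simp [Complex.add_re, Complex.mul_re, Complex.ofReal_re, Complex.ofReal_im]


set_option maxHeartbeats 1600000 in
/-- Twice-truncated integration-by-parts identity in the zero mode `c`, extending the
probabilistic definitions of the Liouville correlation functions `H` and `R` to a wider
parameter range (Remark 2.17 of the paper). -/
theorem liouville_zero_mode_ibp_double_truncated (γ s a : ℝ) (hγ : 0 < γ)
    (hs : s ∈ Set.Ioo (-γ) (-(γ / 2))) (ha : 0 < a) (ℓ : ℂ) (hℓ : 0 ≤ ℓ.re) :
    Integrable (fun c : ℝ =>
      Complex.exp (s * c) *
        (Complex.exp (-(a * Real.exp (γ * c)) - ℓ * Real.exp (γ * c / 2)) - 1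
          + ℓ * Real.exp (γ * c / 2))) ∧
    Integrable (fun c : ℝ =>
      Complex.exp (s * c) *
        ((γ * (s + γ / 2)) * (a * Real.exp (γ * c))
          + (γ ^ 2 / 2) * ((a : ℂ) * Real.exp (γ * c)) * (ℓ * Real.exp (γ * c / 2))
          + (γ ^ 2 / 4) * (ℓ * Real.exp (γ * c / 2)) ^ 2) *
        Complex.exp (-(a * Real.exp (γ * c)) - ℓ * Real.exp (γ * c / 2))) ∧
    ((s : ℂ) * (s + γ / 2)) *
        ∫ c : ℝ, Complex.exp (s * c) *
          (Complex.exp (-(a * Real.exp (γ * c)) - ℓ * Real.exp (γ * c / 2)) - 1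
            + ℓ * Real.exp (γ * c / 2)) =
      ∫ c : ℝ, Complex.exp (s * c) *
        ((γ * (s + γ / 2)) * (a * Real.exp (γ * c))
          + (γ ^ 2 / 2) * ((a : ℂ) * Real.exp (γ * c)) * (ℓ * Real.exp (γ * c / 2))
          + (γ ^ 2 / 4) * (ℓ * Real.exp (γ * c / 2)) ^ 2) *
        Complex.exp (-(a * Real.exp (γ * c)) - ℓ * Real.exp (γ * c / 2)) := by
  obtain ⟨hs1, hs2⟩ := hs
  have hsg : 0 < s + γ := by linarith
  have hsg2 : s + γ / 2 < 0 := by linarith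
  have hs0 : s < 0 := by linarith
  have hsg3 : 0 < s + (γ + γ / 2) := by linarith
  have hint1 : Integrable (fun c : ℝ => (Complex.exp ((s : ℂ) * (c : ℂ))) * ((a : ℂ) * (Real.exp (γ * c) : ℂ)) * (Complex.exp (-((a : ℂ) * (Real.exp (γ * c) : ℂ)) - (ℓ * (Real.exp (γ * c / 2) : ℂ))))) := by
    refine integrable_kernel γ s a hγ ha ℓ hℓ (by fun_prop) (C := a) hsg (fun c => le_of_eq ?_)
    exact norm_coe_mul_coe a _ ha.le (Real.exp_pos _).le
  have hint3 : Integrable (fun c : ℝ => (Complex.exp ((s : ℂ) * (c : ℂ))) * (((a : ℂ) * (Real.exp (γ * c) : ℂ)) * (ℓ * (Real.exp (γ * c / 2) : ℂ))) * (Complex.exp (-((a : ℂ) * (Real.exp (γ * c) : ℂ)) - (ℓ * (Real.exp (γ * c / 2) : ℂ))))) := by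
    refine integrable_kernel γ s a hγ ha ℓ hℓ (by fun_prop) (C := a * ‖ℓ‖) hsg3
      (fun c => le_of_eq ?_)
    rw [show (γ + γ / 2) * c = γ * c + γ * c / 2 by ring, Real.exp_add,
      norm_mul, norm_coe_mul_coe a _ ha.le (Real.exp_pos _).le,
      norm_const_mul_coe ℓ _ (Real.exp_pos _).le]
    ring
  have hint4 : Integrable (fun c : ℝ => (Complex.exp ((s : ℂ) * (c : ℂ))) * (ℓ * (Real.exp (γ * c / 2) : ℂ)) ^ 2 * (Complex.exp (-((a : ℂ) * (Real.exp (γ * c) : ℂ)) - (ℓ * (Real.exp (γ * c / 2) : ℂ))))) := by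
    refine integrable_kernel γ s a hγ ha ℓ hℓ (by fun_prop) (C := ‖ℓ‖ ^ 2) hsg
      (fun c => le_of_eq ?_)
    rw [show γ * c = γ * c / 2 + γ * c / 2 by ring, Real.exp_add,
      norm_pow, norm_const_mul_coe ℓ _ (Real.exp_pos _).le]
    ring
  have hwre : ∀ c : ℝ, 0 ≤ (((a : ℂ) * (Real.exp (γ * c) : ℂ)) + (ℓ * (Real.exp (γ * c / 2) : ℂ))).re := by
    intro c
    rw [re_mix]
    nlinarith [mul_nonneg hℓ (Real.exp_pos (γ * c / 2)).le, Real.exp_pos (γ * c),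
      mul_nonneg ha.le (Real.exp_pos (γ * c)).le]
  have hnormw : ∀ c : ℝ, c ≤ 0 →
      ‖((a : ℂ) * (Real.exp (γ * c) : ℂ)) + (ℓ * (Real.exp (γ * c / 2) : ℂ))‖ ≤ (a + ‖ℓ‖) * Real.exp (γ * c / 2) := by
    intro c hc
    have hee : Real.exp (γ * c) ≤ Real.exp (γ * c / 2) := by
      apply Real.exp_le_exp.2; nlinarith
    calc ‖((a : ℂ) * (Real.exp (γ * c) : ℂ)) + (ℓ * (Real.exp (γ * c / 2) : ℂ))‖ ≤ ‖((a : ℂ) * (Real.exp (γ * c) : ℂ))‖ + ‖(ℓ * (Real.exp (γ * c / 2) : ℂ))‖ := norm_add_le _ _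
      _ = a * Real.exp (γ * c) + ‖ℓ‖ * Real.exp (γ * c / 2) := by
          rw [norm_coe_mul_coe a _ ha.le (Real.exp_pos _).le,
            norm_const_mul_coe ℓ _ (Real.exp_pos _).le]
      _ ≤ (a + ‖ℓ‖) * Real.exp (γ * c / 2) := by
          nlinarith [norm_nonneg ℓ]
  have harg : ∀ c : ℝ, -((a : ℂ) * (Real.exp (γ * c) : ℂ)) - (ℓ * (Real.exp (γ * c / 2) : ℂ)) = -(((a : ℂ) * (Real.exp (γ * c) : ℂ)) + (ℓ * (Real.exp (γ * c / 2) : ℂ))) := fun c => by ring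
  have hint0 : Integrable (fun c : ℝ => (Complex.exp ((s : ℂ) * (c : ℂ))) * ((Complex.exp (-((a : ℂ) * (Real.exp (γ * c) : ℂ)) - (ℓ * (Real.exp (γ * c / 2) : ℂ)))) - 1 + (ℓ * (Real.exp (γ * c / 2) : ℂ)))) := by
    refine integrable_two_sided (by fun_prop) hsg hsg2 (C₁ := (a + ‖ℓ‖) ^ 2 + a)
      (C₂ := 2 + ‖ℓ‖) ?_ ?_
    · intro c hc
      rw [norm_mul, norm_cexp_ofReal_mul]
      have hkey : ((Complex.exp (-((a : ℂ) * (Real.exp (γ * c) : ℂ)) - (ℓ * (Real.exp (γ * c / 2) : ℂ)))) - 1 + (ℓ * (Real.exp (γ * c / 2) : ℂ))) = (Complex.exp (-(((a : ℂ) * (Real.exp (γ * c) : ℂ)) + (ℓ * (Real.exp (γ * c / 2) : ℂ)))) - 1 + (((a : ℂ) * (Real.exp (γ * c) : ℂ)) + (ℓ * (Real.exp (γ * c / 2) : ℂ)))) - ((a : ℂ) * (Real.exp (γ * c) : ℂ)) := by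
        rw [harg c]; ring
      have h3 : ‖((Complex.exp (-((a : ℂ) * (Real.exp (γ * c) : ℂ)) - (ℓ * (Real.exp (γ * c / 2) : ℂ)))) - 1 + (ℓ * (Real.exp (γ * c / 2) : ℂ)))‖ ≤ ((a + ‖ℓ‖) ^ 2 + a) * Real.exp (γ * c) := by
        rw [hkey]
        have h4 := norm_sub_le (Complex.exp (-(((a : ℂ) * (Real.exp (γ * c) : ℂ)) + (ℓ * (Real.exp (γ * c / 2) : ℂ)))) - 1 + (((a : ℂ) * (Real.exp (γ * c) : ℂ)) + (ℓ * (Real.exp (γ * c / 2) : ℂ)))) ((a : ℂ) * (Real.exp (γ * c) : ℂ))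
        have h5 := norm_cexp_neg_sub_one_add_le (((a : ℂ) * (Real.exp (γ * c) : ℂ)) + (ℓ * (Real.exp (γ * c / 2) : ℂ))) (hwre c)
        have h6 := hnormw c hc
        have h7 : ‖((a : ℂ) * (Real.exp (γ * c) : ℂ)) + (ℓ * (Real.exp (γ * c / 2) : ℂ))‖ ^ 2 ≤ ((a + ‖ℓ‖) * Real.exp (γ * c / 2)) ^ 2 := by
          have := norm_nonneg (((a : ℂ) * (Real.exp (γ * c) : ℂ)) + (ℓ * (Real.exp (γ * c / 2) : ℂ))); nlinarith
        have h8 : ((a + ‖ℓ‖) * Real.exp (γ * c / 2)) ^ 2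
            = (a + ‖ℓ‖) ^ 2 * Real.exp (γ * c) := by
          rw [mul_pow, show γ * c = γ * c / 2 + γ * c / 2 by ring, Real.exp_add]; ring
        have h9 : ‖((a : ℂ) * (Real.exp (γ * c) : ℂ))‖ = a * Real.exp (γ * c) :=
          norm_coe_mul_coe a _ ha.le (Real.exp_pos _).le
        rw [h9] at h4
        nlinarith [Real.exp_pos (γ * c)]
      calc Real.exp (s * c) * ‖((Complex.exp (-((a : ℂ) * (Real.exp (γ * c) : ℂ)) - (ℓ * (Real.exp (γ * c / 2) : ℂ)))) - 1 + (ℓ * (Real.exp (γ * c / 2) : ℂ)))‖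
          ≤ Real.exp (s * c) * (((a + ‖ℓ‖) ^ 2 + a) * Real.exp (γ * c)) :=
            mul_le_mul_of_nonneg_left h3 (Real.exp_pos _).le
        _ = ((a + ‖ℓ‖) ^ 2 + a) * Real.exp ((s + γ) * c) := by
            rw [show (s + γ) * c = s * c + γ * c by ring, Real.exp_add]; ring
    · intro c hc
      rw [norm_mul, norm_cexp_ofReal_mul]
      have hE1 : ‖(Complex.exp (-((a : ℂ) * (Real.exp (γ * c) : ℂ)) - (ℓ * (Real.exp (γ * c / 2) : ℂ))))‖ ≤ 1 := by
        refine le_trans (norm_E_le a γ ℓ hℓ ha.le c) ?_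
        rw [show (1:ℝ) = Real.exp 0 by simp, Real.exp_le_exp]
        nlinarith [Real.exp_pos (γ * c)]
      have h3 : ‖((Complex.exp (-((a : ℂ) * (Real.exp (γ * c) : ℂ)) - (ℓ * (Real.exp (γ * c / 2) : ℂ)))) - 1 + (ℓ * (Real.exp (γ * c / 2) : ℂ)))‖ ≤ 2 + ‖ℓ‖ * Real.exp (γ * c / 2) := by
        have h4 := norm_add_le ((Complex.exp (-((a : ℂ) * (Real.exp (γ * c) : ℂ)) - (ℓ * (Real.exp (γ * c / 2) : ℂ)))) - 1) (ℓ * (Real.exp (γ * c / 2) : ℂ))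
        have h5 := norm_sub_le (Complex.exp (-((a : ℂ) * (Real.exp (γ * c) : ℂ)) - (ℓ * (Real.exp (γ * c / 2) : ℂ)))) (1 : ℂ)
        have h6 : ‖(ℓ * (Real.exp (γ * c / 2) : ℂ))‖ = ‖ℓ‖ * Real.exp (γ * c / 2) :=
          norm_const_mul_coe ℓ _ (Real.exp_pos _).le
        rw [h6] at h4
        simp only [norm_one] at h5
        calc ‖(Complex.exp (-((a : ℂ) * (Real.exp (γ * c) : ℂ)) - (ℓ * (Real.exp (γ * c / 2) : ℂ)))) - 1 + (ℓ * (Real.exp (γ * c / 2) : ℂ))‖ ≤ ‖(Complex.exp (-((a : ℂ) * (Real.exp (γ * c) : ℂ)) - (ℓ * (Real.exp (γ * c / 2) : ℂ)))) - 1‖ + ‖ℓ‖ * Real.exp (γ * c / 2) := h4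
          _ ≤ 2 + ‖ℓ‖ * Real.exp (γ * c / 2) := by nlinarith
      have hle : Real.exp (s * c) ≤ Real.exp ((s + γ / 2) * c) := by
        apply Real.exp_le_exp.2; nlinarith
      have he2 : Real.exp (γ * c / 2) * Real.exp (s * c) = Real.exp ((s + γ / 2) * c) := by
        rw [← Real.exp_add]; congr 1; ring
      calc Real.exp (s * c) * ‖((Complex.exp (-((a : ℂ) * (Real.exp (γ * c) : ℂ)) - (ℓ * (Real.exp (γ * c / 2) : ℂ)))) - 1 + (ℓ * (Real.exp (γ * c / 2) : ℂ)))‖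
          ≤ Real.exp (s * c) * (2 + ‖ℓ‖ * Real.exp (γ * c / 2)) :=
            mul_le_mul_of_nonneg_left h3 (Real.exp_pos _).le
        _ = 2 * Real.exp (s * c) + ‖ℓ‖ * (Real.exp (γ * c / 2) * Real.exp (s * c)) := by
            ring
        _ ≤ 2 * Real.exp ((s + γ / 2) * c) + ‖ℓ‖ * Real.exp ((s + γ / 2) * c) := by
            rw [he2]
            nlinarith [norm_nonneg ℓ]
        _ = (2 + ‖ℓ‖) * Real.exp ((s + γ / 2) * c) := by ring
  have hint2 : Integrable (fun c : ℝ => (Complex.exp ((s : ℂ) * (c : ℂ))) * ((ℓ * (Real.exp (γ * c / 2) : ℂ)) * (Complex.exp (-((a : ℂ) * (Real.exp (γ * c) : ℂ)) - (ℓ * (Real.exp (γ * c / 2) : ℂ)))) - (ℓ * (Real.exp (γ * c / 2) : ℂ)))) := by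
    refine integrable_two_sided (by fun_prop) hsg hsg2
      (C₁ := ‖ℓ‖ * (a + ‖ℓ‖)) (C₂ := 2 * ‖ℓ‖) ?_ ?_
    · intro c hc
      rw [norm_mul, norm_cexp_ofReal_mul]
      have hkey : ((ℓ * (Real.exp (γ * c / 2) : ℂ)) * (Complex.exp (-((a : ℂ) * (Real.exp (γ * c) : ℂ)) - (ℓ * (Real.exp (γ * c / 2) : ℂ)))) - (ℓ * (Real.exp (γ * c / 2) : ℂ))) = (ℓ * (Real.exp (γ * c / 2) : ℂ)) * (Complex.exp (-(((a : ℂ) * (Real.exp (γ * c) : ℂ)) + (ℓ * (Real.exp (γ * c / 2) : ℂ)))) - 1) := by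
        rw [harg c]; ring
      have h6 : ‖(ℓ * (Real.exp (γ * c / 2) : ℂ))‖ = ‖ℓ‖ * Real.exp (γ * c / 2) :=
        norm_const_mul_coe ℓ _ (Real.exp_pos _).le
      have h3 : ‖((ℓ * (Real.exp (γ * c / 2) : ℂ)) * (Complex.exp (-((a : ℂ) * (Real.exp (γ * c) : ℂ)) - (ℓ * (Real.exp (γ * c / 2) : ℂ)))) - (ℓ * (Real.exp (γ * c / 2) : ℂ)))‖ ≤ ‖ℓ‖ * (a + ‖ℓ‖) * Real.exp (γ * c) := by
        rw [hkey, norm_mul, h6]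
        have h5 := norm_cexp_neg_sub_one_le (((a : ℂ) * (Real.exp (γ * c) : ℂ)) + (ℓ * (Real.exp (γ * c / 2) : ℂ))) (hwre c)
        have h7 := hnormw c hc
        have h8 : Real.exp (γ * c / 2) * Real.exp (γ * c / 2) = Real.exp (γ * c) := by
          rw [← Real.exp_add]; congr 1; ring
        have h9 : (0:ℝ) ≤ ‖ℓ‖ * Real.exp (γ * c / 2) := by positivity
        calc ‖ℓ‖ * Real.exp (γ * c / 2) * ‖Complex.exp (-(((a : ℂ) * (Real.exp (γ * c) : ℂ)) + (ℓ * (Real.exp (γ * c / 2) : ℂ)))) - 1‖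
            ≤ ‖ℓ‖ * Real.exp (γ * c / 2) * ((a + ‖ℓ‖) * Real.exp (γ * c / 2)) := by
              apply mul_le_mul_of_nonneg_left (le_trans h5 h7) h9
          _ = ‖ℓ‖ * (a + ‖ℓ‖) * Real.exp (γ * c) := by
              rw [← h8]; ring
      calc Real.exp (s * c) * ‖((ℓ * (Real.exp (γ * c / 2) : ℂ)) * (Complex.exp (-((a : ℂ) * (Real.exp (γ * c) : ℂ)) - (ℓ * (Real.exp (γ * c / 2) : ℂ)))) - (ℓ * (Real.exp (γ * c / 2) : ℂ)))‖
          ≤ Real.exp (s * c) * (‖ℓ‖ * (a + ‖ℓ‖) * Real.exp (γ * c)) :=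
            mul_le_mul_of_nonneg_left h3 (Real.exp_pos _).le
        _ = ‖ℓ‖ * (a + ‖ℓ‖) * Real.exp ((s + γ) * c) := by
            rw [show (s + γ) * c = s * c + γ * c by ring, Real.exp_add]; ring
    · intro c hc
      rw [norm_mul, norm_cexp_ofReal_mul]
      have hE1 : ‖(Complex.exp (-((a : ℂ) * (Real.exp (γ * c) : ℂ)) - (ℓ * (Real.exp (γ * c / 2) : ℂ))))‖ ≤ 1 := by
        refine le_trans (norm_E_le a γ ℓ hℓ ha.le c) ?_
        rw [show (1:ℝ) = Real.exp 0 by simp, Real.exp_le_exp]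
        nlinarith [Real.exp_pos (γ * c)]
      have h6 : ‖(ℓ * (Real.exp (γ * c / 2) : ℂ))‖ = ‖ℓ‖ * Real.exp (γ * c / 2) :=
        norm_const_mul_coe ℓ _ (Real.exp_pos _).le
      have h3 : ‖((ℓ * (Real.exp (γ * c / 2) : ℂ)) * (Complex.exp (-((a : ℂ) * (Real.exp (γ * c) : ℂ)) - (ℓ * (Real.exp (γ * c / 2) : ℂ)))) - (ℓ * (Real.exp (γ * c / 2) : ℂ)))‖ ≤ 2 * ‖ℓ‖ * Real.exp (γ * c / 2) := by
        have hkey : ((ℓ * (Real.exp (γ * c / 2) : ℂ)) * (Complex.exp (-((a : ℂ) * (Real.exp (γ * c) : ℂ)) - (ℓ * (Real.exp (γ * c / 2) : ℂ)))) - (ℓ * (Real.exp (γ * c / 2) : ℂ))) = (ℓ * (Real.exp (γ * c / 2) : ℂ)) * ((Complex.exp (-((a : ℂ) * (Real.exp (γ * c) : ℂ)) - (ℓ * (Real.exp (γ * c / 2) : ℂ)))) - 1) := by ring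
        rw [hkey, norm_mul, h6]
        have h5 := norm_sub_le (Complex.exp (-((a : ℂ) * (Real.exp (γ * c) : ℂ)) - (ℓ * (Real.exp (γ * c / 2) : ℂ)))) (1 : ℂ)
        simp only [norm_one] at h5
        have h9 : (0:ℝ) ≤ ‖ℓ‖ * Real.exp (γ * c / 2) := by positivity
        calc ‖ℓ‖ * Real.exp (γ * c / 2) * ‖(Complex.exp (-((a : ℂ) * (Real.exp (γ * c) : ℂ)) - (ℓ * (Real.exp (γ * c / 2) : ℂ)))) - 1‖
            ≤ ‖ℓ‖ * Real.exp (γ * c / 2) * 2 := by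
              apply mul_le_mul_of_nonneg_left (by nlinarith) h9
          _ = 2 * ‖ℓ‖ * Real.exp (γ * c / 2) := by ring
      have he2 : Real.exp (γ * c / 2) * Real.exp (s * c) = Real.exp ((s + γ / 2) * c) := by
        rw [← Real.exp_add]; congr 1; ring
      calc Real.exp (s * c) * ‖((ℓ * (Real.exp (γ * c / 2) : ℂ)) * (Complex.exp (-((a : ℂ) * (Real.exp (γ * c) : ℂ)) - (ℓ * (Real.exp (γ * c / 2) : ℂ)))) - (ℓ * (Real.exp (γ * c / 2) : ℂ)))‖
          ≤ Real.exp (s * c) * (2 * ‖ℓ‖ * Real.exp (γ * c / 2)) :=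
            mul_le_mul_of_nonneg_left h3 (Real.exp_pos _).le
        _ = 2 * ‖ℓ‖ * Real.exp ((s + γ / 2) * c) := by
            rw [← he2]; ring
  have hes : ∀ c : ℝ, HasDerivAt (fun c : ℝ => Complex.exp ((s : ℂ) * (c : ℂ)))
      ((s : ℂ) * Complex.exp ((s : ℂ) * (c : ℂ))) c := by
    intro c
    have h1 : HasDerivAt (fun c : ℝ => (s : ℂ) * (c : ℂ)) (s : ℂ) c := by
      simpa using HasDerivAt.const_mul (s : ℂ) (hasDerivAt_id c).ofReal_comp
    have := h1.cexp
    convert this using 1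
    ring
  have hUd : ∀ c : ℝ, HasDerivAt (fun c : ℝ => ((a : ℂ) * (Real.exp (γ * c) : ℂ)))
      ((γ : ℂ) * ((a : ℂ) * (Real.exp (γ * c) : ℂ))) c := by
    intro c
    have h1 : HasDerivAt (fun c : ℝ => Real.exp (γ * c)) (Real.exp (γ * c) * γ) c := by
      exact ((Real.hasDerivAt_exp (γ * c)).comp c
        ((hasDerivAt_id c).const_mul γ)).congr_deriv (by simp)
    have h2 := HasDerivAt.const_mul (a : ℂ) h1.ofReal_comp
    refine h2.congr_deriv ?_
    push_cast
    ring
  have hVd : ∀ c : ℝ, HasDerivAt (fun c : ℝ => (ℓ * (Real.exp (γ * c / 2) : ℂ)))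
      (((γ : ℂ) / 2) * (ℓ * (Real.exp (γ * c / 2) : ℂ))) c := by
    intro c
    have h0 : HasDerivAt (fun c : ℝ => γ * c / 2) (γ / 2) c := by
      simpa using ((hasDerivAt_id c).const_mul γ).div_const 2
    have h1 : HasDerivAt (fun c : ℝ => Real.exp (γ * c / 2)) (Real.exp (γ * c / 2) * (γ / 2)) c := by
      exact (Real.hasDerivAt_exp (γ * c / 2)).comp c h0
    have h2 := HasDerivAt.const_mul ℓ h1.ofReal_comp
    refine h2.congr_deriv ?_
    push_cast
    ring
  have hEd : ∀ c : ℝ, HasDerivAt (fun c : ℝ => (Complex.exp (-((a : ℂ) * (Real.exp (γ * c) : ℂ)) - (ℓ * (Real.exp (γ * c / 2) : ℂ)))))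
      ((-((γ : ℂ) * ((a : ℂ) * (Real.exp (γ * c) : ℂ))) - ((γ : ℂ) / 2) * (ℓ * (Real.exp (γ * c / 2) : ℂ))) * (Complex.exp (-((a : ℂ) * (Real.exp (γ * c) : ℂ)) - (ℓ * (Real.exp (γ * c / 2) : ℂ))))) c := by
    intro c
    have := (((hUd c).neg).sub (hVd c)).cexp
    simp only [Pi.sub_apply, Pi.neg_apply] at this
    convert this using 1
    ring
  have hFd : ∀ c : ℝ, HasDerivAt (fun c : ℝ => ((Complex.exp (-((a : ℂ) * (Real.exp (γ * c) : ℂ)) - (ℓ * (Real.exp (γ * c / 2) : ℂ)))) - 1 + (ℓ * (Real.exp (γ * c / 2) : ℂ)))) ((-((γ : ℂ) * ((a : ℂ) * (Real.exp (γ * c) : ℂ))) - ((γ : ℂ) / 2) * (ℓ * (Real.exp (γ * c / 2) : ℂ))) * (Complex.exp (-((a : ℂ) * (Real.exp (γ * c) : ℂ)) - (ℓ * (Real.exp (γ * c / 2) : ℂ)))) + ((γ : ℂ) / 2) * (ℓ * (Real.exp (γ * c / 2) : ℂ))) c := by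
    intro c
    exact ((hEd c).sub_const 1).add (hVd c)
  have hGd : ∀ c : ℝ, HasDerivAt (fun c : ℝ => ((ℓ * (Real.exp (γ * c / 2) : ℂ)) * (Complex.exp (-((a : ℂ) * (Real.exp (γ * c) : ℂ)) - (ℓ * (Real.exp (γ * c / 2) : ℂ)))) - (ℓ * (Real.exp (γ * c / 2) : ℂ)))) (((γ : ℂ) / 2) * (ℓ * (Real.exp (γ * c / 2) : ℂ)) * (Complex.exp (-((a : ℂ) * (Real.exp (γ * c) : ℂ)) - (ℓ * (Real.exp (γ * c / 2) : ℂ)))) + (ℓ * (Real.exp (γ * c / 2) : ℂ)) * ((-((γ : ℂ) * ((a : ℂ) * (Real.exp (γ * c) : ℂ))) - ((γ : ℂ) / 2) * (ℓ * (Real.exp (γ * c / 2) : ℂ))) * (Complex.exp (-((a : ℂ) * (Real.exp (γ * c) : ℂ)) - (ℓ * (Real.exp (γ * c / 2) : ℂ))))) - ((γ : ℂ) / 2) * (ℓ * (Real.exp (γ * c / 2) : ℂ))) c := by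
    intro c
    exact ((hVd c).mul (hEd c)).sub (hVd c)
  have huvA : Integrable (fun c : ℝ => (Complex.exp ((s : ℂ) * (c : ℂ))) * ((-((γ : ℂ) * ((a : ℂ) * (Real.exp (γ * c) : ℂ))) - ((γ : ℂ) / 2) * (ℓ * (Real.exp (γ * c / 2) : ℂ))) * (Complex.exp (-((a : ℂ) * (Real.exp (γ * c) : ℂ)) - (ℓ * (Real.exp (γ * c / 2) : ℂ)))) + ((γ : ℂ) / 2) * (ℓ * (Real.exp (γ * c / 2) : ℂ)))) := by
    have h := (hint1.const_mul (-(γ : ℂ))).add (hint2.const_mul (-((γ : ℂ) / 2)))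
    refine h.congr (Filter.EventuallyEq.of_eq (funext fun c => ?_))
    try simp only [Pi.add_apply]
    ring
  have huvB : Integrable (fun c : ℝ => (Complex.exp ((s : ℂ) * (c : ℂ))) * (((γ : ℂ) / 2) * (ℓ * (Real.exp (γ * c / 2) : ℂ)) * (Complex.exp (-((a : ℂ) * (Real.exp (γ * c) : ℂ)) - (ℓ * (Real.exp (γ * c / 2) : ℂ)))) + (ℓ * (Real.exp (γ * c / 2) : ℂ)) * ((-((γ : ℂ) * ((a : ℂ) * (Real.exp (γ * c) : ℂ))) - ((γ : ℂ) / 2) * (ℓ * (Real.exp (γ * c / 2) : ℂ))) * (Complex.exp (-((a : ℂ) * (Real.exp (γ * c) : ℂ)) - (ℓ * (Real.exp (γ * c / 2) : ℂ))))) - ((γ : ℂ) / 2) * (ℓ * (Real.exp (γ * c / 2) : ℂ)))) := by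
    have h := ((hint2.const_mul ((γ : ℂ) / 2)).add (hint3.const_mul (-(γ : ℂ)))).add
      (hint4.const_mul (-((γ : ℂ) / 2)))
    refine h.congr (Filter.EventuallyEq.of_eq (funext fun c => ?_))
    try simp only [Pi.add_apply]
    ring
  have hu'vA : Integrable (fun c : ℝ => ((s : ℂ) * (Complex.exp ((s : ℂ) * (c : ℂ)))) * ((Complex.exp (-((a : ℂ) * (Real.exp (γ * c) : ℂ)) - (ℓ * (Real.exp (γ * c / 2) : ℂ)))) - 1 + (ℓ * (Real.exp (γ * c / 2) : ℂ)))) := by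
    have h := hint0.const_mul (s : ℂ)
    refine h.congr (Filter.EventuallyEq.of_eq (funext fun c => ?_))
    try simp only [Pi.add_apply]
    ring
  have hu'vB : Integrable (fun c : ℝ => ((s : ℂ) * (Complex.exp ((s : ℂ) * (c : ℂ)))) * ((ℓ * (Real.exp (γ * c / 2) : ℂ)) * (Complex.exp (-((a : ℂ) * (Real.exp (γ * c) : ℂ)) - (ℓ * (Real.exp (γ * c / 2) : ℂ)))) - (ℓ * (Real.exp (γ * c / 2) : ℂ)))) := by
    have h := hint2.const_mul (s : ℂ)
    refine h.congr (Filter.EventuallyEq.of_eq (funext fun c => ?_))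
    try simp only [Pi.add_apply]
    ring
  have hIBP1 : ∫ c : ℝ, (Complex.exp ((s : ℂ) * (c : ℂ))) * ((-((γ : ℂ) * ((a : ℂ) * (Real.exp (γ * c) : ℂ))) - ((γ : ℂ) / 2) * (ℓ * (Real.exp (γ * c / 2) : ℂ))) * (Complex.exp (-((a : ℂ) * (Real.exp (γ * c) : ℂ)) - (ℓ * (Real.exp (γ * c / 2) : ℂ)))) + ((γ : ℂ) / 2) * (ℓ * (Real.exp (γ * c / 2) : ℂ))) = - ∫ c : ℝ, ((s : ℂ) * (Complex.exp ((s : ℂ) * (c : ℂ)))) * ((Complex.exp (-((a : ℂ) * (Real.exp (γ * c) : ℂ)) - (ℓ * (Real.exp (γ * c / 2) : ℂ)))) - 1 + (ℓ * (Real.exp (γ * c / 2) : ℂ))) :=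
    integral_mul_deriv_eq_deriv_mul_of_integrable (fun c _ => hes c) (fun c _ => hFd c) huvA hu'vA hint0
  have hIBP2 : ∫ c : ℝ, (Complex.exp ((s : ℂ) * (c : ℂ))) * (((γ : ℂ) / 2) * (ℓ * (Real.exp (γ * c / 2) : ℂ)) * (Complex.exp (-((a : ℂ) * (Real.exp (γ * c) : ℂ)) - (ℓ * (Real.exp (γ * c / 2) : ℂ)))) + (ℓ * (Real.exp (γ * c / 2) : ℂ)) * ((-((γ : ℂ) * ((a : ℂ) * (Real.exp (γ * c) : ℂ))) - ((γ : ℂ) / 2) * (ℓ * (Real.exp (γ * c / 2) : ℂ))) * (Complex.exp (-((a : ℂ) * (Real.exp (γ * c) : ℂ)) - (ℓ * (Real.exp (γ * c / 2) : ℂ))))) - ((γ : ℂ) / 2) * (ℓ * (Real.exp (γ * c / 2) : ℂ))) = - ∫ c : ℝ, ((s : ℂ) * (Complex.exp ((s : ℂ) * (c : ℂ)))) * ((ℓ * (Real.exp (γ * c / 2) : ℂ)) * (Complex.exp (-((a : ℂ) * (Real.exp (γ * c) : ℂ)) - (ℓ * (Real.exp (γ * c / 2) : ℂ)))) - (ℓ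 * (Real.exp (γ * c / 2) : ℂ))) :=
    integral_mul_deriv_eq_deriv_mul_of_integrable (fun c _ => hes c) (fun c _ => hGd c) huvB hu'vB hint2
  have j1A : Integrable (fun c : ℝ => (-(γ : ℂ)) * ((Complex.exp ((s : ℂ) * (c : ℂ))) * ((a : ℂ) * (Real.exp (γ * c) : ℂ)) * (Complex.exp (-((a : ℂ) * (Real.exp (γ * c) : ℂ)) - (ℓ * (Real.exp (γ * c / 2) : ℂ)))))) :=
    hint1.const_mul _
  have j2A : Integrable (fun c : ℝ => (-((γ : ℂ) / 2)) * ((Complex.exp ((s : ℂ) * (c : ℂ))) * ((ℓ * (Real.exp (γ * c / 2) : ℂ)) * (Complex.exp (-((a : ℂ) * (Real.exp (γ * c) : ℂ)) - (ℓ * (Real.exp (γ * c / 2) : ℂ)))) - (ℓ * (Real.exp (γ * c / 2) : ℂ))))) :=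
    hint2.const_mul _
  have hA : (s : ℂ) * (∫ c : ℝ, (Complex.exp ((s : ℂ) * (c : ℂ))) * ((Complex.exp (-((a : ℂ) * (Real.exp (γ * c) : ℂ)) - (ℓ * (Real.exp (γ * c / 2) : ℂ)))) - 1 + (ℓ * (Real.exp (γ * c / 2) : ℂ))))
      = (γ : ℂ) * (∫ c : ℝ, (Complex.exp ((s : ℂ) * (c : ℂ))) * ((a : ℂ) * (Real.exp (γ * c) : ℂ)) * (Complex.exp (-((a : ℂ) * (Real.exp (γ * c) : ℂ)) - (ℓ * (Real.exp (γ * c / 2) : ℂ)))))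
        + ((γ : ℂ) / 2) * (∫ c : ℝ, (Complex.exp ((s : ℂ) * (c : ℂ))) * ((ℓ * (Real.exp (γ * c / 2) : ℂ)) * (Complex.exp (-((a : ℂ) * (Real.exp (γ * c) : ℂ)) - (ℓ * (Real.exp (γ * c / 2) : ℂ)))) - (ℓ * (Real.exp (γ * c / 2) : ℂ)))) := by
    have e1 : (fun c : ℝ => (Complex.exp ((s : ℂ) * (c : ℂ))) * ((-((γ : ℂ) * ((a : ℂ) * (Real.exp (γ * c) : ℂ))) - ((γ : ℂ) / 2) * (ℓ * (Real.exp (γ * c / 2) : ℂ))) * (Complex.exp (-((a : ℂ) * (Real.exp (γ * c) : ℂ)) - (ℓ * (Real.exp (γ * c / 2) : ℂ)))) + ((γ : ℂ) / 2) * (ℓ * (Real.exp (γ * c / 2) : ℂ))))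
        = fun c : ℝ => (-(γ : ℂ)) * ((Complex.exp ((s : ℂ) * (c : ℂ))) * ((a : ℂ) * (Real.exp (γ * c) : ℂ)) * (Complex.exp (-((a : ℂ) * (Real.exp (γ * c) : ℂ)) - (ℓ * (Real.exp (γ * c / 2) : ℂ))))) + (-((γ : ℂ) / 2)) * ((Complex.exp ((s : ℂ) * (c : ℂ))) * ((ℓ * (Real.exp (γ * c / 2) : ℂ)) * (Complex.exp (-((a : ℂ) * (Real.exp (γ * c) : ℂ)) - (ℓ * (Real.exp (γ * c / 2) : ℂ)))) - (ℓ * (Real.exp (γ * c / 2) : ℂ)))) :=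
      funext fun c => by ring
    have e2 : (fun c : ℝ => ((s : ℂ) * (Complex.exp ((s : ℂ) * (c : ℂ)))) * ((Complex.exp (-((a : ℂ) * (Real.exp (γ * c) : ℂ)) - (ℓ * (Real.exp (γ * c / 2) : ℂ)))) - 1 + (ℓ * (Real.exp (γ * c / 2) : ℂ))))
        = fun c : ℝ => (s : ℂ) * ((Complex.exp ((s : ℂ) * (c : ℂ))) * ((Complex.exp (-((a : ℂ) * (Real.exp (γ * c) : ℂ)) - (ℓ * (Real.exp (γ * c / 2) : ℂ)))) - 1 + (ℓ * (Real.exp (γ * c / 2) : ℂ)))) := funext fun c => by ring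
    rw [e1, e2, integral_add j1A j2A, integral_const_mul, integral_const_mul,
      integral_const_mul] at hIBP1
    linear_combination hIBP1
  have j2B : Integrable (fun c : ℝ => ((γ : ℂ) / 2) * ((Complex.exp ((s : ℂ) * (c : ℂ))) * ((ℓ * (Real.exp (γ * c / 2) : ℂ)) * (Complex.exp (-((a : ℂ) * (Real.exp (γ * c) : ℂ)) - (ℓ * (Real.exp (γ * c / 2) : ℂ)))) - (ℓ * (Real.exp (γ * c / 2) : ℂ))))) :=
    hint2.const_mul _
  have j3B : Integrable (fun c : ℝ => (-(γ : ℂ)) * ((Complex.exp ((s : ℂ) * (c : ℂ))) * (((a : ℂ) * (Real.exp (γ * c) : ℂ)) * (ℓ * (Real.exp (γ * c / 2) : ℂ))) * (Complex.exp (-((a : ℂ) * (Real.exp (γ * c) : ℂ)) - (ℓ * (Real.exp (γ * c / 2) : ℂ)))))) :=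
    hint3.const_mul _
  have j4B : Integrable (fun c : ℝ => (-((γ : ℂ) / 2)) * ((Complex.exp ((s : ℂ) * (c : ℂ))) * (ℓ * (Real.exp (γ * c / 2) : ℂ)) ^ 2 * (Complex.exp (-((a : ℂ) * (Real.exp (γ * c) : ℂ)) - (ℓ * (Real.exp (γ * c / 2) : ℂ)))))) :=
    hint4.const_mul _
  have j34B : Integrable (fun c : ℝ => (-(γ : ℂ)) * ((Complex.exp ((s : ℂ) * (c : ℂ))) * (((a : ℂ) * (Real.exp (γ * c) : ℂ)) * (ℓ * (Real.exp (γ * c / 2) : ℂ))) * (Complex.exp (-((a : ℂ) * (Real.exp (γ * c) : ℂ)) - (ℓ * (Real.exp (γ * c / 2) : ℂ)))))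
      + (-((γ : ℂ) / 2)) * ((Complex.exp ((s : ℂ) * (c : ℂ))) * (ℓ * (Real.exp (γ * c / 2) : ℂ)) ^ 2 * (Complex.exp (-((a : ℂ) * (Real.exp (γ * c) : ℂ)) - (ℓ * (Real.exp (γ * c / 2) : ℂ)))))) := j3B.add j4B
  have hB : (s : ℂ) * (∫ c : ℝ, (Complex.exp ((s : ℂ) * (c : ℂ))) * ((ℓ * (Real.exp (γ * c / 2) : ℂ)) * (Complex.exp (-((a : ℂ) * (Real.exp (γ * c) : ℂ)) - (ℓ * (Real.exp (γ * c / 2) : ℂ)))) - (ℓ * (Real.exp (γ * c / 2) : ℂ))))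
      = (-((γ : ℂ) / 2)) * (∫ c : ℝ, (Complex.exp ((s : ℂ) * (c : ℂ))) * ((ℓ * (Real.exp (γ * c / 2) : ℂ)) * (Complex.exp (-((a : ℂ) * (Real.exp (γ * c) : ℂ)) - (ℓ * (Real.exp (γ * c / 2) : ℂ)))) - (ℓ * (Real.exp (γ * c / 2) : ℂ))))
        + (γ : ℂ) * (∫ c : ℝ, (Complex.exp ((s : ℂ) * (c : ℂ))) * (((a : ℂ) * (Real.exp (γ * c) : ℂ)) * (ℓ * (Real.exp (γ * c / 2) : ℂ))) * (Complex.exp (-((a : ℂ) * (Real.exp (γ * c) : ℂ)) - (ℓ * (Real.exp (γ * c / 2) : ℂ)))))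
        + ((γ : ℂ) / 2) * (∫ c : ℝ, (Complex.exp ((s : ℂ) * (c : ℂ))) * (ℓ * (Real.exp (γ * c / 2) : ℂ)) ^ 2 * (Complex.exp (-((a : ℂ) * (Real.exp (γ * c) : ℂ)) - (ℓ * (Real.exp (γ * c / 2) : ℂ))))) := by
    have e1 : (fun c : ℝ => (Complex.exp ((s : ℂ) * (c : ℂ))) * (((γ : ℂ) / 2) * (ℓ * (Real.exp (γ * c / 2) : ℂ)) * (Complex.exp (-((a : ℂ) * (Real.exp (γ * c) : ℂ)) - (ℓ * (Real.exp (γ * c / 2) : ℂ)))) + (ℓ * (Real.exp (γ * c / 2) : ℂ)) * ((-((γ : ℂ) * ((a : ℂ) * (Real.exp (γ * c) : ℂ))) - ((γ : ℂ) / 2) * (ℓ * (Real.exp (γ * c / 2) : ℂ))) * (Complex.exp (-((a : ℂ) * (Real.exp (γ * c) : ℂ)) - (ℓ * (Real.exp (γ * c / 2) : ℂ))))) - ((γ : ℂ) / 2) * (ℓ * (Real.exp (γ * c / 2) : ℂ))))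
        = fun c : ℝ => ((γ : ℂ) / 2) * ((Complex.exp ((s : ℂ) * (c : ℂ))) * ((ℓ * (Real.exp (γ * c / 2) : ℂ)) * (Complex.exp (-((a : ℂ) * (Real.exp (γ * c) : ℂ)) - (ℓ * (Real.exp (γ * c / 2) : ℂ)))) - (ℓ * (Real.exp (γ * c / 2) : ℂ))))
          + ((-(γ : ℂ)) * ((Complex.exp ((s : ℂ) * (c : ℂ))) * (((a : ℂ) * (Real.exp (γ * c) : ℂ)) * (ℓ * (Real.exp (γ * c / 2) : ℂ))) * (Complex.exp (-((a : ℂ) * (Real.exp (γ * c) : ℂ)) - (ℓ * (Real.exp (γ * c / 2) : ℂ)))))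
            + (-((γ : ℂ) / 2)) * ((Complex.exp ((s : ℂ) * (c : ℂ))) * (ℓ * (Real.exp (γ * c / 2) : ℂ)) ^ 2 * (Complex.exp (-((a : ℂ) * (Real.exp (γ * c) : ℂ)) - (ℓ * (Real.exp (γ * c / 2) : ℂ)))))) :=
      funext fun c => by ring
    have e2 : (fun c : ℝ => ((s : ℂ) * (Complex.exp ((s : ℂ) * (c : ℂ)))) * ((ℓ * (Real.exp (γ * c / 2) : ℂ)) * (Complex.exp (-((a : ℂ) * (Real.exp (γ * c) : ℂ)) - (ℓ * (Real.exp (γ * c / 2) : ℂ)))) - (ℓ * (Real.exp (γ * c / 2) : ℂ))))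
        = fun c : ℝ => (s : ℂ) * ((Complex.exp ((s : ℂ) * (c : ℂ))) * ((ℓ * (Real.exp (γ * c / 2) : ℂ)) * (Complex.exp (-((a : ℂ) * (Real.exp (γ * c) : ℂ)) - (ℓ * (Real.exp (γ * c / 2) : ℂ)))) - (ℓ * (Real.exp (γ * c / 2) : ℂ)))) := funext fun c => by ring
    rw [e1, e2, integral_add j2B j34B, integral_add j3B j4B, integral_const_mul,
      integral_const_mul, integral_const_mul, integral_const_mul] at hIBP2
    linear_combination hIBP2
  refine ⟨hint0, ?_, ?_⟩
  · have h := ((hint1.const_mul ((γ : ℂ) * ((s : ℂ) + (γ : ℂ) / 2))).add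
      (hint3.const_mul ((γ : ℂ) ^ 2 / 2))).add (hint4.const_mul ((γ : ℂ) ^ 2 / 4))
    refine h.congr (Filter.EventuallyEq.of_eq (funext fun c => ?_))
    simp only [Pi.add_apply]
    push_cast
    ring
  · have j1R : Integrable (fun c : ℝ => ((γ : ℂ) * ((s : ℂ) + (γ : ℂ) / 2)) * ((Complex.exp ((s : ℂ) * (c : ℂ))) * ((a : ℂ) * (Real.exp (γ * c) : ℂ)) * (Complex.exp (-((a : ℂ) * (Real.exp (γ * c) : ℂ)) - (ℓ * (Real.exp (γ * c / 2) : ℂ)))))) :=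
      hint1.const_mul _
    have j3R : Integrable (fun c : ℝ => ((γ : ℂ) ^ 2 / 2) * ((Complex.exp ((s : ℂ) * (c : ℂ))) * (((a : ℂ) * (Real.exp (γ * c) : ℂ)) * (ℓ * (Real.exp (γ * c / 2) : ℂ))) * (Complex.exp (-((a : ℂ) * (Real.exp (γ * c) : ℂ)) - (ℓ * (Real.exp (γ * c / 2) : ℂ)))))) :=
      hint3.const_mul _
    have j4R : Integrable (fun c : ℝ => ((γ : ℂ) ^ 2 / 4) * ((Complex.exp ((s : ℂ) * (c : ℂ))) * (ℓ * (Real.exp (γ * c / 2) : ℂ)) ^ 2 * (Complex.exp (-((a : ℂ) * (Real.exp (γ * c) : ℂ)) - (ℓ * (Real.exp (γ * c / 2) : ℂ)))))) :=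
      hint4.const_mul _
    have j34R : Integrable (fun c : ℝ => ((γ : ℂ) ^ 2 / 2) * ((Complex.exp ((s : ℂ) * (c : ℂ))) * (((a : ℂ) * (Real.exp (γ * c) : ℂ)) * (ℓ * (Real.exp (γ * c / 2) : ℂ))) * (Complex.exp (-((a : ℂ) * (Real.exp (γ * c) : ℂ)) - (ℓ * (Real.exp (γ * c / 2) : ℂ)))))
        + ((γ : ℂ) ^ 2 / 4) * ((Complex.exp ((s : ℂ) * (c : ℂ))) * (ℓ * (Real.exp (γ * c / 2) : ℂ)) ^ 2 * (Complex.exp (-((a : ℂ) * (Real.exp (γ * c) : ℂ)) - (ℓ * (Real.exp (γ * c / 2) : ℂ)))))) := j3R.add j4R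
    have hRHS : (∫ c : ℝ, Complex.exp ((s : ℂ) * (c : ℂ)) *
        (((γ : ℂ) * ((s : ℂ) + (γ : ℂ) / 2)) * ((a : ℂ) * (Real.exp (γ * c) : ℂ))
          + ((γ : ℂ) ^ 2 / 2) * ((a : ℂ) * (Real.exp (γ * c) : ℂ)) * (ℓ * (Real.exp (γ * c / 2) : ℂ))
          + ((γ : ℂ) ^ 2 / 4) * (ℓ * (Real.exp (γ * c / 2) : ℂ)) ^ 2) * (Complex.exp (-((a : ℂ) * (Real.exp (γ * c) : ℂ)) - (ℓ * (Real.exp (γ * c / 2) : ℂ)))))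
        = ((γ : ℂ) * ((s : ℂ) + (γ : ℂ) / 2)) * (∫ c : ℝ, (Complex.exp ((s : ℂ) * (c : ℂ))) * ((a : ℂ) * (Real.exp (γ * c) : ℂ)) * (Complex.exp (-((a : ℂ) * (Real.exp (γ * c) : ℂ)) - (ℓ * (Real.exp (γ * c / 2) : ℂ)))))
          + ((γ : ℂ) ^ 2 / 2) * (∫ c : ℝ, (Complex.exp ((s : ℂ) * (c : ℂ))) * (((a : ℂ) * (Real.exp (γ * c) : ℂ)) * (ℓ * (Real.exp (γ * c / 2) : ℂ))) * (Complex.exp (-((a : ℂ) * (Real.exp (γ * c) : ℂ)) - (ℓ * (Real.exp (γ * c / 2) : ℂ)))))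
          + ((γ : ℂ) ^ 2 / 4) * (∫ c : ℝ, (Complex.exp ((s : ℂ) * (c : ℂ))) * (ℓ * (Real.exp (γ * c / 2) : ℂ)) ^ 2 * (Complex.exp (-((a : ℂ) * (Real.exp (γ * c) : ℂ)) - (ℓ * (Real.exp (γ * c / 2) : ℂ))))) := by
      have e1 : (fun c : ℝ => Complex.exp ((s : ℂ) * (c : ℂ)) *
          (((γ : ℂ) * ((s : ℂ) + (γ : ℂ) / 2)) * ((a : ℂ) * (Real.exp (γ * c) : ℂ))
            + ((γ : ℂ) ^ 2 / 2) * ((a : ℂ) * (Real.exp (γ * c) : ℂ)) * (ℓ * (Real.exp (γ * c / 2) : ℂ))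
            + ((γ : ℂ) ^ 2 / 4) * (ℓ * (Real.exp (γ * c / 2) : ℂ)) ^ 2) * (Complex.exp (-((a : ℂ) * (Real.exp (γ * c) : ℂ)) - (ℓ * (Real.exp (γ * c / 2) : ℂ)))))
          = fun c : ℝ => ((γ : ℂ) * ((s : ℂ) + (γ : ℂ) / 2)) * ((Complex.exp ((s : ℂ) * (c : ℂ))) * ((a : ℂ) * (Real.exp (γ * c) : ℂ)) * (Complex.exp (-((a : ℂ) * (Real.exp (γ * c) : ℂ)) - (ℓ * (Real.exp (γ * c / 2) : ℂ)))))
            + (((γ : ℂ) ^ 2 / 2) * ((Complex.exp ((s : ℂ) * (c : ℂ))) * (((a : ℂ) * (Real.exp (γ * c) : ℂ)) * (ℓ * (Real.exp (γ * c / 2) : ℂ))) * (Complex.exp (-((a : ℂ) * (Real.exp (γ * c) : ℂ)) - (ℓ * (Real.exp (γ * c / 2) : ℂ)))))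
              + ((γ : ℂ) ^ 2 / 4) * ((Complex.exp ((s : ℂ) * (c : ℂ))) * (ℓ * (Real.exp (γ * c / 2) : ℂ)) ^ 2 * (Complex.exp (-((a : ℂ) * (Real.exp (γ * c) : ℂ)) - (ℓ * (Real.exp (γ * c / 2) : ℂ)))))) :=
        funext fun c => by ring
      rw [e1, integral_add j1R j34R, integral_add j3R j4R, integral_const_mul,
        integral_const_mul, integral_const_mul]
      ring
    rw [hRHS]
    linear_combination ((s : ℂ) + (γ : ℂ) / 2) * hA + ((γ : ℂ) / 2) * hB
end

section
/- Let γ ∈ (0,2), set Q = γ/2 + 2/γ, and let β₁, β₂ ∈ (0, 2/γ) satisfy β₁ + β₂ > 2/γ; set β₃ = 4/γ − β₁ − β₂ (equivalently β₁ + β₂ + β₃ = 2Q − γ). Let σ₁, σ₂, σ₃ ∈ ℝ and define μ_i = (sin(πγ²/4))^{−1/2} · cos(πγ(σ_i − Q/2)) for i = 1,2,3. Then the three integrals below converge and μ₁ ∫_{−∞}^{0} |x|^{−γβ₁/2} |x−1|^{−γβ₂/2} dx + μ₂ ∫_{0}^{1} x^{−γβ₁/2} (1−x)^{−γβ₂/2}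 dx + μ₃ ∫_{1}^{∞} x^{−γβ₁/2} (x−1)^{−γβ₂/2} dx = (1/π) · (sin(πγ²/4))^{−1/2} · Γ(1 − γβ₂/2) · Γ(1 − γβ₃/2) · Γ(γβ₂/2 + γβ₃/2 − 1) · ( cos(πγ(σ₁ − Q/2)) sin(πγβ₂/2) + cos(πγ(σ₂ − Q/2)) sin(πγβ₃/2) − cos(πγ(σ₃ − Q/2)) sin(πγ(β₂+β₃)/2) ). -/
open MeasureTheory

section Helpers
open Set Real
open MeasureTheory Set Real


lemma beta_Ioo (p q : ℝ) (hp : 0 < p) (hq : 0 < q) :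
    IntegrableOn (fun x : ℝ => x ^ (p-1) * (1-x) ^ (q-1)) (Ioo 0 1) ∧
    ∫ x in Ioo (0:ℝ) 1, x ^ (p-1) * (1-x) ^ (q-1)
      = Real.Gamma p * Real.Gamma q / Real.Gamma (p+q) := by
  have hpc : (0:ℝ) < (p:ℂ).re := by simpa using hp
  have hqc : (0:ℝ) < (q:ℂ).re := by simpa using hq
  have hconv := Complex.betaIntegral_convergent hpc hqc
  have hcongr : ∀ x ∈ Ioo (0:ℝ) 1,
      ((x:ℂ) ^ ((p:ℂ)-1) * (1-(x:ℂ)) ^ ((q:ℂ)-1)) = ((x ^ (p-1) * (1-x) ^ (q-1) : ℝ) : ℂ) := by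
    intro x hx
    rw [show ((p:ℂ)-1) = ((p-1:ℝ):ℂ) by push_cast; ring,
      show ((q:ℂ)-1) = ((q-1:ℝ):ℂ) by push_cast; ring,
      show (1-(x:ℂ)) = ((1-x:ℝ):ℂ) by push_cast; ring,
      ← Complex.ofReal_cpow hx.1.le, ← Complex.ofReal_cpow (by linarith [hx.2] : (0:ℝ) ≤ 1 - x),
      ← Complex.ofReal_mul]
  have hint : IntegrableOn (fun x : ℝ => x ^ (p-1) * (1-x) ^ (q-1)) (Ioo 0 1) := by
    have h1 : IntegrableOn (fun x : ℝ => (x:ℂ) ^ ((p:ℂ)-1) * (1-(x:ℂ)) ^ ((q:ℂ)-1)) (Ioo 0 1) :=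
      (hconv.1).mono_set Ioo_subset_Ioc_self
    have h2 := h1.congr_fun hcongr measurableSet_Ioo
    exact (by simpa using h2.re : Integrable (fun x : ℝ => x ^ (p-1) * (1-x) ^ (q-1)) (volume.restrict (Ioo 0 1)))
  refine ⟨hint, ?_⟩
  have hβ := Complex.Gamma_mul_Gamma_eq_betaIntegral hpc hqc
  have hval : Complex.betaIntegral p q = ((∫ x in Ioo (0:ℝ) 1, x ^ (p-1) * (1-x) ^ (q-1) : ℝ) : ℂ) := by
    rw [Complex.betaIntegral, intervalIntegral.integral_of_le zero_le_one,
      integral_Ioc_eq_integral_Ioo, setIntegral_congr_fun measurableSet_Ioo hcongr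
      
      ]
    exact integral_ofReal
  rw [hval] at hβ
  have hG : Real.Gamma p * Real.Gamma q
      = Real.Gamma (p+q) * ∫ x in Ioo (0:ℝ) 1, x ^ (p-1) * (1-x) ^ (q-1) := by
    have := congrArg Complex.re hβ
    simpa [← Complex.ofReal_add, Complex.Gamma_ofReal, ← Complex.ofReal_mul] using this
  have hGpos : 0 < Real.Gamma (p+q) := Real.Gamma_pos_of_pos (by linarith)
  field_simp [hG]
  rw [hG]; ring


lemma img_inv : (fun t : ℝ => t⁻¹) '' Ioo 0 1 = Ioi 1 := by
  ext y
  constructor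
  · rintro ⟨t, ⟨ht0, ht1⟩, rfl⟩
    exact one_lt_inv₀ ht0 |>.2 ht1
  · intro hy
    have hy0 : (0:ℝ) < y := lt_trans one_pos hy
    exact ⟨y⁻¹, ⟨inv_pos.2 hy0, inv_lt_one_of_one_lt₀ hy⟩, inv_inv y⟩

lemma img_one_sub_inv : (fun t : ℝ => 1 - t⁻¹) '' Ioo 0 1 = Iio 0 := by
  ext y
  constructor
  · rintro ⟨t, ⟨ht0, ht1⟩, rfl⟩
    have : 1 < t⁻¹ := one_lt_inv₀ ht0 |>.2 ht1
    simpa using by linarith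
  · intro hy
    have h1y : (1:ℝ) < 1 - y := by simpa using by linarith [mem_Iio.1 hy]
    refine ⟨(1-y)⁻¹, ⟨inv_pos.2 (by linarith), inv_lt_one_of_one_lt₀ h1y⟩, ?_⟩
    field_simp
    ring

lemma I3_lem (a b : ℝ) (ha0 : 0 < a) (hb0 : 0 < b) (hb1 : b < 1) (hab : 1 < a + b) :
    IntegrableOn (fun x : ℝ => x ^ (-a) * (x-1) ^ (-b)) (Ioi 1) ∧
    ∫ x in Ioi (1:ℝ), x ^ (-a) * (x-1) ^ (-b)
      = Real.Gamma (a+b-1) * Real.Gamma (1-b) / Real.Gamma a := by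
  obtain ⟨hint, hval⟩ := beta_Ioo (a+b-1) (1-b) (by linarith) (by linarith)
  have hderiv : ∀ t ∈ Ioo (0:ℝ) 1,
      HasDerivWithinAt (fun t : ℝ => t⁻¹) (-(t^2)⁻¹) (Ioo 0 1) t :=
    fun t ht => (hasDerivAt_inv (ne_of_gt ht.1)).hasDerivWithinAt
  have hinj : InjOn (fun t : ℝ => t⁻¹) (Ioo 0 1) := inv_injective.injOn
  have hpt : ∀ t ∈ Ioo (0:ℝ) 1,
      |(-(t^2)⁻¹)| • ((fun x : ℝ => x ^ (-a) * (x-1) ^ (-b)) (t⁻¹))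
        = t ^ ((a+b-1)-1 : ℝ) * (1-t) ^ ((1-b)-1 : ℝ) := by
    rintro t ⟨ht0, ht1⟩
    have h1t : (0:ℝ) < 1 - t := by linarith
    have e4 : (((t:ℝ)^2)⁻¹) = t ^ (-2 : ℝ) := by
      rw [← Real.rpow_natCast t 2, ← Real.rpow_neg ht0.le]; norm_num
    have e0 : |(-((t:ℝ)^2)⁻¹)| = t ^ (-2 : ℝ) := by
      rw [abs_neg, abs_of_pos (by positivity), e4]
    have e1 : ((t:ℝ)⁻¹) ^ (-a : ℝ) = t ^ (a : ℝ) := by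
      rw [Real.inv_rpow ht0.le, ← Real.rpow_neg ht0.le, neg_neg]
    have e2 : (t⁻¹ - 1 : ℝ) = (1-t)/t := by field_simp
    have e3 : ((1-t)/t : ℝ) ^ (-b : ℝ) = (1-t) ^ (-b : ℝ) * t ^ (b : ℝ) := by
      rw [Real.div_rpow h1t.le ht0.le, div_eq_mul_inv, ← Real.rpow_neg ht0.le, neg_neg]
    have e5 : t ^ ((a+b-1)-1 : ℝ) = t ^ (-2:ℝ) * (t ^ (a:ℝ) * t ^ (b:ℝ)) := by
      rw [← Real.rpow_add ht0, ← Real.rpow_add ht0]; ring_nf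
    have e6 : (1-t : ℝ) ^ ((1-b)-1 : ℝ) = (1-t) ^ (-b : ℝ) := by norm_num
    simp only [smul_eq_mul, e0, e1, e2, e3, e4, e5, e6]
    rw [abs_neg, abs_of_pos (Real.rpow_pos_of_pos ht0 _)]
    ring
  constructor
  · rw [← img_inv,
      integrableOn_image_iff_integrableOn_abs_deriv_smul measurableSet_Ioo hderiv hinj]
    exact hint.congr_fun (fun t ht => (hpt t ht).symm) measurableSet_Ioo
  · rw [← img_inv,
      integral_image_eq_integral_abs_deriv_smul measurableSet_Ioo hderiv hinj,
      setIntegral_congr_fun measurableSet_Ioo hpt, hval,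
      show (a+b-1)+(1-b) = a by ring]

lemma I1_lem (a b : ℝ) (ha0 : 0 < a) (ha1 : a < 1) (hb0 : 0 < b) (hab : 1 < a + b) :
    IntegrableOn (fun x : ℝ => |x| ^ (-a) * |x-1| ^ (-b)) (Iio 0) ∧
    ∫ x in Iio (0:ℝ), |x| ^ (-a) * |x-1| ^ (-b)
      = Real.Gamma (a+b-1) * Real.Gamma (1-a) / Real.Gamma b := by
  obtain ⟨hint, hval⟩ := beta_Ioo (a+b-1) (1-a) (by linarith) (by linarith)
  have hderiv : ∀ t ∈ Ioo (0:ℝ) 1,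
      HasDerivWithinAt (fun t : ℝ => 1 - t⁻¹) ((t^2)⁻¹) (Ioo 0 1) t := by
    intro t ht
    simpa using ((hasDerivAt_inv (ne_of_gt ht.1)).const_sub 1).hasDerivWithinAt
  have hinj : InjOn (fun t : ℝ => 1 - t⁻¹) (Ioo 0 1) := by
    intro x _ y _ h
    exact inv_injective (by dsimp at h; linarith)
  have hpt : ∀ t ∈ Ioo (0:ℝ) 1,
      |((t:ℝ)^2)⁻¹| • ((fun x : ℝ => |x| ^ (-a) * |x-1| ^ (-b)) (1 - t⁻¹))
        = t ^ ((a+b-1)-1 : ℝ) * (1-t) ^ ((1-a)-1 : ℝ) := by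
    rintro t ⟨ht0, ht1⟩
    have h1t : (0:ℝ) < 1 - t := by linarith
    have hti : (1:ℝ) < t⁻¹ := one_lt_inv₀ ht0 |>.2 ht1
    have e4 : (((t:ℝ)^2)⁻¹) = t ^ (-2 : ℝ) := by
      rw [← Real.rpow_natCast t 2, ← Real.rpow_neg ht0.le]; norm_num
    have e0 : |((t:ℝ)^2)⁻¹| = t ^ (-2 : ℝ) := by rw [abs_of_pos (by positivity), e4]
    have eabs1 : |1 - t⁻¹| = (1-t)/t := by
      rw [abs_of_nonpos (by linarith)]; field_simp; ring
    have eabs2 : |1 - t⁻¹ - 1| = t⁻¹ := by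
      rw [show (1 - t⁻¹ - 1 : ℝ) = -t⁻¹ by ring, abs_neg, abs_of_pos (by positivity)]
    have e1 : ((t:ℝ)⁻¹) ^ (-b : ℝ) = t ^ (b : ℝ) := by
      rw [Real.inv_rpow ht0.le, ← Real.rpow_neg ht0.le, neg_neg]
    have e3 : ((1-t)/t : ℝ) ^ (-a : ℝ) = (1-t) ^ (-a : ℝ) * t ^ (a : ℝ) := by
      rw [Real.div_rpow h1t.le ht0.le, div_eq_mul_inv, ← Real.rpow_neg ht0.le, neg_neg]
    have e5 : t ^ ((a+b-1)-1 : ℝ) = t ^ (-2:ℝ) * (t ^ (a:ℝ) * t ^ (b:ℝ)) := by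
      rw [← Real.rpow_add ht0, ← Real.rpow_add ht0]; ring_nf
    have e6 : (1-t : ℝ) ^ ((1-a)-1 : ℝ) = (1-t) ^ (-a : ℝ) := by norm_num
    simp only [smul_eq_mul, e0, eabs1, eabs2, e1, e3, e4, e5, e6]
    rw [abs_of_pos (Real.rpow_pos_of_pos ht0 _)]
    ring
  constructor
  · rw [← img_one_sub_inv,
      integrableOn_image_iff_integrableOn_abs_deriv_smul measurableSet_Ioo hderiv hinj]
    exact hint.congr_fun (fun t ht => (hpt t ht).symm) measurableSet_Ioo
  · rw [← img_one_sub_inv,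
      integral_image_eq_integral_abs_deriv_smul measurableSet_Ioo hderiv hinj,
      setIntegral_congr_fun measurableSet_Ioo hpt, hval,
      show (a+b-1)+(1-a) = b by ring]

lemma I2_lem (a b : ℝ) (ha0 : 0 < a) (ha1 : a < 1) (hb0 : 0 < b) (hb1 : b < 1) :
    IntegrableOn (fun x : ℝ => x ^ (-a) * (1-x) ^ (-b)) (Ioo 0 1) ∧
    ∫ x in Ioo (0:ℝ) 1, x ^ (-a) * (1-x) ^ (-b)
      = Real.Gamma (1-a) * Real.Gamma (1-b) / Real.Gamma (2-a-b) := by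
  obtain ⟨h1, h2⟩ := beta_Ioo (1-a) (1-b) (by linarith) (by linarith)
  simp only [show ((1-a)-1 : ℝ) = -a by ring, show ((1-b)-1 : ℝ) = -b by ring,
    show ((1-a)+(1-b) : ℝ) = 2-a-b by ring] at h1 h2
  exact ⟨h1, h2⟩


lemma key_identity (a b s c₁ c₂ c₃ : ℝ) (ha0 : 0 < a) (ha1 : a < 1)
    (hb0 : 0 < b) (hb1 : b < 1) (hab : 1 < a + b) :
    s * c₁ * (Real.Gamma (a+b-1) * Real.Gamma (1-a) / Real.Gamma b)
      + s * c₂ * (Real.Gamma (1-a) * Real.Gamma (1-b) / Real.Gamma (2-a-b))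
      + s * c₃ * (Real.Gamma (a+b-1) * Real.Gamma (1-b) / Real.Gamma a)
      = (1 / Real.pi) * s * Real.Gamma (1-b) * Real.Gamma (1-(2-a-b))
        * Real.Gamma (b+(2-a-b)-1)
        * (c₁ * Real.sin (Real.pi*b) + c₂ * Real.sin (Real.pi*(2-a-b))
          - c₃ * Real.sin (Real.pi*(b+(2-a-b)))) := by
  have hπ : (0:ℝ) < π := Real.pi_pos
  have hsa : 0 < Real.sin (π*a) :=
    Real.sin_pos_of_pos_of_lt_pi (by positivity) (by nlinarith)
  have hsb : 0 < Real.sin (π*b) :=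
    Real.sin_pos_of_pos_of_lt_pi (by positivity) (by nlinarith)
  have hsab : 0 < Real.sin (π*(a+b-1)) :=
    Real.sin_pos_of_pos_of_lt_pi (by nlinarith) (by nlinarith)
  have hΓa : 0 < Real.Gamma a := Real.Gamma_pos_of_pos ha0
  have hΓb : 0 < Real.Gamma b := Real.Gamma_pos_of_pos hb0
  have hΓ2 : 0 < Real.Gamma (2-a-b) := Real.Gamma_pos_of_pos (by linarith)
  have r1' : Real.Gamma b * Real.Gamma (1-b) * Real.sin (π*b) = π := by
    rw [Real.Gamma_mul_Gamma_one_sub b]; field_simp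
  have r2' : Real.Gamma a * Real.Gamma (1-a) * Real.sin (π*a) = π := by
    rw [Real.Gamma_mul_Gamma_one_sub a]; field_simp
  have r3' : Real.Gamma (a+b-1) * Real.Gamma (2-a-b) * Real.sin (π*(a+b-1)) = π := by
    have := Real.Gamma_mul_Gamma_one_sub (a+b-1)
    rw [show (1-(a+b-1) : ℝ) = 2-a-b by ring] at this
    rw [this]; field_simp
  have t1 : Real.sin (π*(2-a-b)) = Real.sin (π*(a+b-1)) := by
    rw [show π*(2-a-b) = 2*π - (π*(a+b)) by ring,
      show π*(a+b-1) = π*(a+b) - π by ring, Real.sin_sub, Real.sin_sub]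
    simp [Real.sin_two_pi, Real.cos_two_pi]
  have t2 : Real.sin (π*(b+(2-a-b))) = - Real.sin (π*a) := by
    rw [show π*(b+(2-a-b)) = 2*π - π*a by ring, Real.sin_sub]
    simp [Real.sin_two_pi, Real.cos_two_pi]
  have e₁ : Real.Gamma (a+b-1) * Real.Gamma (1-a) / Real.Gamma b
      = Real.Gamma (1-a)*Real.Gamma (1-b)*Real.Gamma (a+b-1) * Real.sin (π*b) / π := by
    rw [div_eq_div_iff hΓb.ne' hπ.ne']
    linear_combination -(Real.Gamma (a+b-1) * Real.Gamma (1-a)) * r1'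
  have e₂ : Real.Gamma (1-a) * Real.Gamma (1-b) / Real.Gamma (2-a-b)
      = Real.Gamma (1-a)*Real.Gamma (1-b)*Real.Gamma (a+b-1) * Real.sin (π*(a+b-1)) / π := by
    rw [div_eq_div_iff hΓ2.ne' hπ.ne']
    linear_combination -(Real.Gamma (1-a) * Real.Gamma (1-b)) * r3'
  have e₃ : Real.Gamma (a+b-1) * Real.Gamma (1-b) / Real.Gamma a
      = Real.Gamma (1-a)*Real.Gamma (1-b)*Real.Gamma (a+b-1) * Real.sin (π*a) / π := by
    rw [div_eq_div_iff hΓa.ne' hπ.ne']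
    linear_combination -(Real.Gamma (a+b-1) * Real.Gamma (1-b)) * r2'
  rw [e₁, e₂, e₃, t1, t2, show (1-(2-a-b) : ℝ) = a+b-1 by ring,
    show (b+(2-a-b)-1 : ℝ) = 1-a by ring]
  field_simp
  ring

end Helpers

/-- Evaluation of the expected boundary Liouville length
`E[L̃] = μ₁∫_{−∞}^0 + μ₂∫_0^1 + μ₃∫_1^∞` appearing in the residue computation of the boundary
three-point structure constant at `β₁ = 2Q − β₂ − β₃ − γ` (proof of Lemma 5.1 of the paper). -/
theorem expected_boundary_length (γ : ℝ) (hγ : 0 < γ) (hγ2 : γ < 2)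
    (β₁ β₂ β₃ Q σ₁ σ₂ σ₃ μ₁ μ₂ μ₃ : ℝ)
    (hQ : Q = γ / 2 + 2 / γ)
    (hβ₁ : β₁ ∈ Set.Ioo 0 (2 / γ)) (hβ₂ : β₂ ∈ Set.Ioo 0 (2 / γ))
    (hsum : 2 / γ < β₁ + β₂)
    (hβ₃ : β₃ = 4 / γ - β₁ - β₂)
    (hμ₁ : μ₁ = Real.sin (Real.pi * γ ^ 2 / 4) ^ (-(1 / 2 : ℝ)) *
      Real.cos (Real.pi * γ * (σ₁ - Q / 2)))
    (hμ₂ : μ₂ = Real.sin (Real.pi * γ ^ 2 / 4) ^ (-(1 / 2 : ℝ)) *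
      Real.cos (Real.pi * γ * (σ₂ - Q / 2)))
    (hμ₃ : μ₃ = Real.sin (Real.pi * γ ^ 2 / 4) ^ (-(1 / 2 : ℝ)) *
      Real.cos (Real.pi * γ * (σ₃ - Q / 2))) :
    IntegrableOn (fun x : ℝ => |x| ^ (-(γ * β₁ / 2)) * |x - 1| ^ (-(γ * β₂ / 2)))
      (Set.Iio 0) ∧
    IntegrableOn (fun x : ℝ => x ^ (-(γ * β₁ / 2)) * (1 - x) ^ (-(γ * β₂ / 2)))
      (Set.Ioo 0 1) ∧
    IntegrableOn (fun x : ℝ => x ^ (-(γ * β₁ / 2)) * (x - 1) ^ (-(γ * β₂ / 2)))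
      (Set.Ioi 1) ∧
    μ₁ * (∫ x in Set.Iio (0 : ℝ), |x| ^ (-(γ * β₁ / 2)) * |x - 1| ^ (-(γ * β₂ / 2)))
      + μ₂ * (∫ x in Set.Ioo (0 : ℝ) 1, x ^ (-(γ * β₁ / 2)) * (1 - x) ^ (-(γ * β₂ / 2)))
      + μ₃ * (∫ x in Set.Ioi (1 : ℝ), x ^ (-(γ * β₁ / 2)) * (x - 1) ^ (-(γ * β₂ / 2)))
      = (1 / Real.pi) * Real.sin (Real.pi * γ ^ 2 / 4) ^ (-(1 / 2 : ℝ))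
        * Real.Gamma (1 - γ * β₂ / 2) * Real.Gamma (1 - γ * β₃ / 2)
        * Real.Gamma (γ * β₂ / 2 + γ * β₃ / 2 - 1)
        * (Real.cos (Real.pi * γ * (σ₁ - Q / 2)) * Real.sin (Real.pi * γ * β₂ / 2)
          + Real.cos (Real.pi * γ * (σ₂ - Q / 2)) * Real.sin (Real.pi * γ * β₃ / 2)
          - Real.cos (Real.pi * γ * (σ₃ - Q / 2))
            * Real.sin (Real.pi * γ * (β₂ + β₃) / 2)) := by
  have hβ₁0 := hβ₁.1
  have hβ₂0 := hβ₂.1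
  have ha0 : 0 < γ * β₁ / 2 := by positivity
  have hb0 : 0 < γ * β₂ / 2 := by positivity
  have ha1 : γ * β₁ / 2 < 1 := by
    have := (lt_div_iff₀ hγ).1 hβ₁.2; nlinarith
  have hb1 : γ * β₂ / 2 < 1 := by
    have := (lt_div_iff₀ hγ).1 hβ₂.2; nlinarith
  have hab : 1 < γ * β₁ / 2 + γ * β₂ / 2 := by
    have := (div_lt_iff₀ hγ).1 hsum; nlinarith
  obtain ⟨hI1, hv1⟩ := I1_lem (γ * β₁ / 2) (γ * β₂ / 2) ha0 ha1 hb0 hab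
  obtain ⟨hI2, hv2⟩ := I2_lem (γ * β₁ / 2) (γ * β₂ / 2) ha0 ha1 hb0 hb1
  obtain ⟨hI3, hv3⟩ := I3_lem (γ * β₁ / 2) (γ * β₂ / 2) ha0 hb0 hb1 hab
  refine ⟨hI1, hI2, hI3, ?_⟩
  have hc : γ * β₃ / 2 = 2 - (γ * β₁ / 2) - (γ * β₂ / 2) := by
    rw [hβ₃]; field_simp; ring
  rw [hv1, hv2, hv3, hμ₁, hμ₂, hμ₃,
    show Real.pi * γ * β₂ / 2 = Real.pi * (γ * β₂ / 2) by ring,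
    show Real.pi * γ * β₃ / 2 = Real.pi * (γ * β₃ / 2) by ring,
    show Real.pi * γ * (β₂ + β₃) / 2 = Real.pi * (γ * β₂ / 2 + γ * β₃ / 2) by ring,
    show 1 - γ * β₂ / 2 = 1 - γ * β₂ / 2 from rfl,
    show γ * β₂ / 2 + γ * β₃ / 2 - 1 = γ * β₂ / 2 + γ * β₃ / 2 - 1 from rfl,
    hc]
  exact key_identity (γ * β₁ / 2) (γ * β₂ / 2) _ _ _ _ ha0 ha1 hb0 hb1 hab
end

section
/- Let p, q be real numbers with 0 < p < q < 1. Then the function u ↦ ((1+u)^p − u^p)·u^{−q} is Lebesgue integrable on (0, ∞) and ∫_0^∞ ((1+u)^p − u^p) u^{−q} du = Γ(q − p − 1) · Γ(1 − q) / Γ(−p), where Γ denotes the Gamma function. -/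
open MeasureTheory

section Aux
open Set Real

/-- Real Beta integral on `Ioc 0 1`, transferred from the complex version. -/
lemma betaReal_integrableOn {a b : ℝ} (ha : 0 < a) (hb : 0 < b) :
    IntegrableOn (fun x : ℝ => x ^ (a - 1) * (1 - x) ^ (b - 1)) (Ioc 0 1) := by
  have hc := Complex.betaIntegral_convergent (u := (a : ℂ)) (v := (b : ℂ)) (by simpa) (by simpa)
  rw [intervalIntegrable_iff_integrableOn_Ioc_of_le zero_le_one] at hc
  have heq : EqOn (fun x : ℝ => ((x ^ (a-1) * (1-x) ^ (b-1) : ℝ) : ℂ))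
      (fun x : ℝ => (x : ℂ) ^ ((a:ℂ) - 1) * ((1:ℂ) - x) ^ ((b:ℂ) - 1)) (Ioc 0 1) := by
    intro x hx
    have hx0 : (0:ℝ) ≤ x := hx.1.le
    have hx1 : (0:ℝ) ≤ 1 - x := by linarith [hx.2]
    simp only [Complex.ofReal_mul, Complex.ofReal_cpow hx0, Complex.ofReal_cpow hx1]
    push_cast
    ring_nf
  have hc' : IntegrableOn (fun x : ℝ => ((x ^ (a-1) * (1-x) ^ (b-1) : ℝ) : ℂ)) (Ioc 0 1) :=
    hc.congr_fun heq.symm measurableSet_Ioc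
  simpa [IntegrableOn] using hc'.re

lemma betaReal_eq {a b : ℝ} (ha : 0 < a) (hb : 0 < b) :
    ∫ x in Ioc (0:ℝ) 1, x ^ (a - 1) * (1 - x) ^ (b - 1) =
      Real.Gamma a * Real.Gamma b / Real.Gamma (a + b) := by
  have key := Complex.Gamma_mul_Gamma_eq_betaIntegral (s := (a : ℂ)) (t := (b : ℂ))
    (by simpa) (by simpa)
  have hG : Real.Gamma (a + b) ≠ 0 := (Real.Gamma_pos_of_pos (by linarith)).ne'
  have hbeta : Complex.betaIntegral a b =
      ((∫ x in Ioc (0:ℝ) 1, x ^ (a - 1) * (1 - x) ^ (b - 1) : ℝ) : ℂ) := by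
    rw [Complex.betaIntegral, intervalIntegral.integral_of_le zero_le_one]
    have hor : ∫ x in Ioc (0:ℝ) 1, ((x ^ (a-1) * (1-x) ^ (b-1) : ℝ) : ℂ) =
        ((∫ x in Ioc (0:ℝ) 1, x ^ (a-1) * (1-x) ^ (b-1) : ℝ) : ℂ) := integral_ofReal
    refine Eq.trans ?_ hor
    refine setIntegral_congr_fun measurableSet_Ioc fun x hx => ?_
    have hx0 : (0:ℝ) ≤ x := hx.1.le
    have hx1 : (0:ℝ) ≤ 1 - x := by linarith [hx.2]
    simp only [Complex.ofReal_mul, Complex.ofReal_cpow hx0, Complex.ofReal_cpow hx1]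
    push_cast
    ring_nf
  rw [hbeta] at key
  have : ((Real.Gamma a * Real.Gamma b : ℝ) : ℂ) =
      ((Real.Gamma (a+b) * ∫ x in Ioc (0:ℝ) 1, x ^ (a-1) * (1-x) ^ (b-1) : ℝ) : ℂ) := by
    push_cast
    rw [← Complex.Gamma_ofReal, ← Complex.Gamma_ofReal, ← Complex.Gamma_ofReal]
    push_cast
    exact key
  have h2 := Complex.ofReal_injective this
  field_simp
  linarith [h2]

lemma image_div_one_sub : (fun x : ℝ => x / (1 - x)) '' (Ioo 0 1) = Ioi 0 := by
  ext y
  constructor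
  · rintro ⟨x, hx, rfl⟩
    have h1 : 0 < 1 - x := by linarith [hx.2]
    exact div_pos hx.1 h1
  · intro hy
    refine ⟨y / (1 + y), ⟨?_, ?_⟩, ?_⟩
    · exact div_pos hy (by linarith [mem_Ioi.mp hy])
    · rw [div_lt_one (by linarith [mem_Ioi.mp hy])]; linarith [mem_Ioi.mp hy]
    · have h0 : (1:ℝ) + y ≠ 0 := by have := mem_Ioi.mp hy; intro h; linarith
      field_simp
      ring

lemma injOn_div_one_sub : Set.InjOn (fun x : ℝ => x / (1 - x)) (Ioo 0 1) := by
  intro x hx y hy h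
  have h1 : (0:ℝ) < 1 - x := by linarith [hx.2]
  have h2 : (0:ℝ) < 1 - y := by linarith [hy.2]
  field_simp at h
  nlinarith [h]

lemma hasDeriv_div_one_sub {x : ℝ} (hx : x ∈ Ioo (0:ℝ) 1) :
    HasDerivWithinAt (fun x : ℝ => x / (1 - x)) (((1 - x) ^ 2)⁻¹) (Ioo 0 1) x := by
  have h1 : (1:ℝ) - x ≠ 0 := by have := hx.2; intro h; simp [sub_eq_zero] at h; linarith
  have := (hasDerivAt_id x).div ((hasDerivAt_id x).const_sub 1) h1
  simp only [Pi.div_def, id_eq, one_mul, mul_neg, mul_one, sub_neg_eq_add] at this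
  refine this.hasDerivWithinAt.congr_deriv ?_
  ring

/-- Beta integral on `Ioi 0`: transform of the integrand. -/
lemma beta_Ioi_transform {a b : ℝ} (ha : 0 < a) (hb : 0 < b) {x : ℝ} (hx : x ∈ Ioo (0:ℝ) 1) :
    |((1 - x) ^ 2)⁻¹| • ((x / (1-x)) ^ (a-1) * (1 + x / (1-x)) ^ (-(a+b)))
      = x ^ (a-1) * (1-x) ^ (b-1) := by
  have hx0 : (0:ℝ) < x := hx.1
  have hx1 : (0:ℝ) < 1 - x := by linarith [hx.2]
  have h1 : (1:ℝ) + x / (1-x) = (1-x)⁻¹ := by field_simp; ring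
  have h2 : (x / (1-x)) ^ (a-1) = x ^ (a-1) * ((1-x) ^ (a-1))⁻¹ := by
    rw [Real.div_rpow hx0.le hx1.le, div_eq_mul_inv]
  have h3 : ((1-x)⁻¹) ^ (-(a+b)) = (1-x) ^ (a+b) := by
    rw [← Real.rpow_neg_one (1-x), ← Real.rpow_mul hx1.le]
    norm_num
  rw [smul_eq_mul, h1, h2, h3, abs_of_pos (by positivity)]
  rw [← Real.rpow_natCast (1-x) 2, ← Real.rpow_neg hx1.le, ← Real.rpow_neg hx1.le]
  rw [show ((1-x):ℝ) ^ (-((2:ℕ):ℝ)) * (x ^ (a-1) * (1-x) ^ (-(a-1)) * (1-x) ^ (a+b))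
      = x ^ (a-1) * ((1-x) ^ (-((2:ℕ):ℝ)) * (1-x) ^ (-(a-1)) * (1-x) ^ (a+b)) by ring]
  rw [← Real.rpow_add hx1, ← Real.rpow_add hx1,
    show (-((2:ℕ):ℝ) + -(a-1) + (a+b)) = b - 1 by push_cast; ring]

lemma beta_Ioi {a b : ℝ} (ha : 0 < a) (hb : 0 < b) :
    IntegrableOn (fun v : ℝ => v ^ (a-1) * (1+v) ^ (-(a+b))) (Ioi 0) ∧
    ∫ v in Ioi (0:ℝ), v ^ (a-1) * (1+v) ^ (-(a+b)) =
      Real.Gamma a * Real.Gamma b / Real.Gamma (a + b) := by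
  have hmeas : MeasurableSet (Ioo (0:ℝ) 1) := measurableSet_Ioo
  have hderiv : ∀ x ∈ Ioo (0:ℝ) 1,
      HasDerivWithinAt (fun x : ℝ => x / (1 - x)) (((1 - x) ^ 2)⁻¹) (Ioo 0 1) x :=
    fun x hx => hasDeriv_div_one_sub hx
  set g : ℝ → ℝ := fun v => v ^ (a-1) * (1+v) ^ (-(a+b)) with hg
  have hint := integrableOn_image_iff_integrableOn_abs_deriv_smul hmeas hderiv injOn_div_one_sub g
  have hval := integral_image_eq_integral_abs_deriv_smul hmeas hderiv injOn_div_one_sub g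
  rw [image_div_one_sub] at hint hval
  have hcong : ∀ x ∈ Ioo (0:ℝ) 1,
      |((1 - x) ^ 2)⁻¹| • g (x / (1-x)) = x ^ (a-1) * (1-x) ^ (b-1) :=
    fun x hx => beta_Ioi_transform ha hb hx
  have hI : IntegrableOn (fun x : ℝ => x ^ (a-1) * (1-x) ^ (b-1)) (Ioo 0 1) :=
    (betaReal_integrableOn ha hb).mono_set Ioo_subset_Ioc_self
  constructor
  · rw [hint]
    exact (hI.congr_fun (fun x hx => (hcong x hx).symm) hmeas)
  · rw [hval, setIntegral_congr_fun hmeas hcong, ← integral_Ioc_eq_integral_Ioo]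
    exact betaReal_eq ha hb

lemma inner_scaled (p q : ℝ) (hp : 0 < p) (hpq : p < q) (hq : q < 1) {t : ℝ} (ht : 0 < t) :
    IntegrableOn (fun u : ℝ => u ^ (-q) * (t + u) ^ (p-1)) (Ioi 0) ∧
    ∫ u in Ioi (0:ℝ), u ^ (-q) * (t + u) ^ (p-1) =
      t ^ (p - q) * ∫ v in Ioi (0:ℝ), v ^ (-q) * (1 + v) ^ (p-1) := by
  have hB := beta_Ioi (a := 1 - q) (b := q - p) (by linarith) (by linarith)
  have hgid : ∀ v : ℝ, v ^ ((1-q)-1) * (1+v) ^ (-((1-q)+(q-p))) = v ^ (-q) * (1+v) ^ (p-1) := by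
    intro v
    norm_num
  have hBint : IntegrableOn (fun v : ℝ => v ^ (-q) * (1+v) ^ (p-1)) (Ioi 0) := by
    have := hB.1
    simpa only [hgid] using this
  set f : ℝ → ℝ := fun u => u ^ (-q) * (t + u) ^ (p-1) with hf
  have hscale : ∀ x ∈ Ioi (0:ℝ), f (t * x) = t ^ (p-q-1) * (x ^ (-q) * (1+x) ^ (p-1)) := by
    intro x hx
    have hx0 : (0:ℝ) < x := hx
    simp only [hf]
    rw [show t + t * x = t * (1 + x) by ring, Real.mul_rpow ht.le hx0.le,
      Real.mul_rpow ht.le (by linarith : (0:ℝ) ≤ 1 + x),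
      show t ^ (p-q-1) = t ^ (-q) * t ^ (p-1) by
        rw [← Real.rpow_add ht]; ring_nf]
    ring
  have hmi : MeasurableSet (Ioi (0:ℝ)) := measurableSet_Ioi
  have hcomp : IntegrableOn (fun x : ℝ => f (t * x)) (Ioi 0) :=
    IntegrableOn.congr_fun (hBint.const_mul (t ^ (p-q-1)))
      (fun x hx => (hscale x hx).symm) hmi
  have hfi : IntegrableOn f (Ioi 0) := by
    have := (integrableOn_Ioi_comp_mul_left_iff f 0 ht).mp hcomp
    rwa [mul_zero] at this
  refine ⟨hfi, ?_⟩
  have hleft : ∫ x in Ioi (0:ℝ), f (t * x)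
      = t ^ (p-q-1) * ∫ v in Ioi (0:ℝ), v ^ (-q) * (1+v) ^ (p-1) := by
    rw [setIntegral_congr_fun hmi hscale, integral_const_mul]
  have hv := integral_comp_mul_left_Ioi f 0 ht
  rw [mul_zero, hleft, smul_eq_mul] at hv
  have h2 := congrArg (fun y => t * y) hv
  simp only [← mul_assoc, mul_inv_cancel₀ ht.ne', one_mul] at h2
  rw [← h2, show t * t ^ (p-q-1) = t ^ (p-q) by
    have h3 := Real.rpow_add ht 1 (p-q-1)
    rw [Real.rpow_one] at h3
    rw [← h3]; congr 1; ring]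

lemma ftc_piece (p : ℝ) (hp : 0 < p) {u : ℝ} (hu : 0 < u) :
    ∫ t in Ioc (0:ℝ) 1, p * (t + u) ^ (p - 1) = (1 + u) ^ p - u ^ p := by
  rw [← intervalIntegral.integral_of_le zero_le_one]
  have hderiv : ∀ t ∈ Set.uIcc (0:ℝ) 1,
      HasDerivAt (fun t : ℝ => (t + u) ^ p) (p * (t + u) ^ (p-1)) t := by
    intro t htm
    rw [Set.uIcc_of_le zero_le_one] at htm
    have htu : 0 < t + u := by have := htm.1; linarith
    have h1 : HasDerivAt (fun t : ℝ => t + u) 1 t := (hasDerivAt_id t).add_const u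
    have := h1.rpow_const (p := p) (Or.inl htu.ne')
    simpa using this
  have hcont : ContinuousOn (fun t : ℝ => p * (t + u) ^ (p-1)) (Set.uIcc (0:ℝ) 1) := by
    refine continuousOn_const.mul (ContinuousOn.rpow_const ?_ ?_)
    · fun_prop
    · intro t htm
      rw [Set.uIcc_of_le zero_le_one] at htm
      have htu : 0 < t + u := by have := htm.1; linarith
      exact Or.inl htu.ne'
  rw [intervalIntegral.integral_eq_sub_of_hasDerivAt hderiv hcont.intervalIntegrable]
  norm_num

theorem regularized_beta_integral' (p q : ℝ) (hp : 0 < p) (hpq : p < q) (hq : q < 1) :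
    IntegrableOn (fun u : ℝ => ((1 + u) ^ p - u ^ p) * u ^ (-q)) (Set.Ioi 0) ∧
    ∫ u in Set.Ioi (0 : ℝ), ((1 + u) ^ p - u ^ p) * u ^ (-q) =
      Real.Gamma (q - p - 1) * Real.Gamma (1 - q) / Real.Gamma (-p) := by
  set μ := volume.restrict (Ioc (0:ℝ) 1) with hμ
  set ν := volume.restrict (Ioi (0:ℝ)) with hν
  set C := ∫ v in Ioi (0:ℝ), v ^ (-q) * (1 + v) ^ (p-1) with hC
  set F : ℝ → ℝ → ℝ := fun t u => p * (u ^ (-q) * (t + u) ^ (p-1)) with hF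
  have hmeasF : AEStronglyMeasurable (Function.uncurry F) (μ.prod ν) :=
    (by fun_prop : Measurable (Function.uncurry F)).aestronglyMeasurable
  have h_inner_int : ∀ t ∈ Ioc (0:ℝ) 1, Integrable (fun u => F t u) ν :=
    fun t ht => ((inner_scaled p q hp hpq hq ht.1).1.const_mul p)
  have h_inner_val : ∀ t ∈ Ioc (0:ℝ) 1, ∫ u, F t u ∂ν = p * (t ^ (p-q) * C) := by
    intro t ht
    rw [hF]
    simp only
    rw [MeasureTheory.integral_const_mul, (inner_scaled p q hp hpq hq ht.1).2]
  have hnorm : ∀ t ∈ Ioc (0:ℝ) 1, ∫ u, ‖F t u‖ ∂ν = p * (t ^ (p-q) * C) := by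
    intro t ht
    rw [← h_inner_val t ht]
    refine integral_congr_ae ?_
    filter_upwards [ae_restrict_mem measurableSet_Ioi] with u hu
    have h0 : (0:ℝ) ≤ F t u := by
      have hu0 : (0:ℝ) < u := hu
      exact mul_nonneg hp.le (mul_nonneg (Real.rpow_nonneg hu0.le _)
        (Real.rpow_nonneg (by linarith [ht.1] : (0:ℝ) ≤ t + u) _))
    rw [Real.norm_eq_abs, abs_of_nonneg h0]
  have hpow : IntegrableOn (fun t : ℝ => t ^ (p-q)) (Ioc 0 1) := by
    have := intervalIntegral.intervalIntegrable_rpow' (a := 0) (b := 1)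
      (r := p - q) (by linarith)
    rwa [intervalIntegrable_iff_integrableOn_Ioc_of_le zero_le_one] at this
  have hFint : Integrable (Function.uncurry F) (μ.prod ν) := by
    rw [integrable_prod_iff hmeasF]
    constructor
    · filter_upwards [ae_restrict_mem measurableSet_Ioc] with t ht
      exact h_inner_int t ht
    · refine (((hpow.mul_const C).const_mul p).congr ?_)
      filter_upwards [ae_restrict_mem measurableSet_Ioc] with t ht
      exact (hnorm t ht).symm
  have heq : ∀ u ∈ Ioi (0:ℝ), ∫ t, F t u ∂μ = ((1+u) ^ p - u ^ p) * u ^ (-q) := by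
    intro u hu
    have hu0 : (0:ℝ) < u := hu
    have : (fun t : ℝ => F t u) = fun t => u ^ (-q) * (p * (t+u) ^ (p-1)) :=
      funext fun t => by rw [hF]; ring
    rw [this, MeasureTheory.integral_const_mul, hμ, ftc_piece p hp hu0]
    ring
  have hswap : Integrable (fun u => ∫ t, F t u ∂μ) ν :=
    hFint.integral_prod_right
  have haeq : (fun u : ℝ => ∫ t, F t u ∂μ)
      =ᵐ[ν] fun u : ℝ => ((1+u) ^ p - u ^ p) * u ^ (-q) := by
    filter_upwards [ae_restrict_mem measurableSet_Ioi] with u hu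
    exact heq u hu
  constructor
  · exact hswap.congr haeq
  · have h1 : ∫ u in Set.Ioi (0:ℝ), ((1 + u) ^ p - u ^ p) * u ^ (-q)
        = ∫ u, (∫ t, F t u ∂μ) ∂ν := (integral_congr_ae haeq).symm
    have h2 : ∫ u, (∫ t, F t u ∂μ) ∂ν = ∫ t, (∫ u, F t u ∂ν) ∂μ :=
      (integral_integral_swap hFint).symm
    have h3 : ∫ t, (∫ u, F t u ∂ν) ∂μ = ∫ t in Ioc (0:ℝ) 1, p * (t ^ (p-q) * C) := by
      refine integral_congr_ae ?_
      filter_upwards [ae_restrict_mem measurableSet_Ioc] with t ht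
      exact h_inner_val t ht
    have h4 : ∫ t in Ioc (0:ℝ) 1, p * (t ^ (p-q) * C)
        = (p * C) * ∫ t in Ioc (0:ℝ) 1, t ^ (p-q) := by
      rw [show (fun t : ℝ => p * (t ^ (p-q) * C)) = fun t => (p * C) * t ^ (p-q) from
        funext fun t => by ring]
      exact MeasureTheory.integral_const_mul _ _
    have h5 : ∫ t in Ioc (0:ℝ) 1, t ^ (p-q) = 1 / (p - q + 1) := by
      rw [← intervalIntegral.integral_of_le zero_le_one,
        integral_rpow (Or.inl (by linarith : (-1:ℝ) < p - q)),
        Real.one_rpow, Real.zero_rpow (by linarith : p - q + 1 ≠ 0)]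
      ring
    have hCval : C = Real.Gamma (1-q) * Real.Gamma (q-p) / Real.Gamma (1-p) := by
      have hB := beta_Ioi (a := 1 - q) (b := q - p) (by linarith) (by linarith)
      have hgid : ∀ v : ℝ, v ^ ((1-q)-1) * (1+v) ^ (-((1-q)+(q-p)))
          = v ^ (-q) * (1+v) ^ (p-1) := fun v => by norm_num
      rw [hC, ← setIntegral_congr_fun measurableSet_Ioi (fun v _ => hgid v), hB.2,
        show (1:ℝ) - q + (q - p) = 1 - p by ring]
    have hqp1 : q - p - 1 ≠ 0 := by intro h; linarith
    have hG1 : Real.Gamma (q-p) = (q-p-1) * Real.Gamma (q-p-1) := by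
      have := Real.Gamma_add_one hqp1
      rw [show q-p-1+1 = q-p by ring] at this
      exact this
    have hG2 : Real.Gamma (1-p) = (-p) * Real.Gamma (-p) := by
      have := Real.Gamma_add_one (s := -p) (neg_ne_zero.mpr hp.ne')
      rw [show -p+1 = 1-p by ring] at this
      exact this
    have hGne : Real.Gamma (-p) ≠ 0 := by
      refine Real.Gamma_ne_zero fun m => ?_
      intro hEq
      rcases m with _ | k
      · simp at hEq; linarith
      · push_cast at hEq
        have : (0:ℝ) ≤ (k:ℝ) := Nat.cast_nonneg k
        linarith
    rw [h1, h2, h3, h4, h5, hCval, hG1, hG2]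
    have hpq1 : p - q + 1 ≠ 0 := by linarith
    field_simp
    ring

end Aux

/-- The regularized Beta-type integral
`∫_0^∞ ((1+u)^p − u^p) u^{−q} du = Γ(q−p−1)Γ(1−q)/Γ(−p)` evaluated in the operator product
expansion without reflection (Lemma B.1 of the paper). -/
theorem regularized_beta_integral (p q : ℝ) (hp : 0 < p) (hpq : p < q) (hq : q < 1) :
    IntegrableOn (fun u : ℝ => ((1 + u) ^ p - u ^ p) * u ^ (-q)) (Set.Ioi 0) ∧
    ∫ u in Set.Ioi (0 : ℝ), ((1 + u) ^ p - u ^ p) * u ^ (-q) =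
      Real.Gamma (q - p - 1) * Real.Gamma (1 - q) / Real.Gamma (-p) :=
  regularized_beta_integral' p q hp hpq hq
end

section
/- Let γ > 0 be a real number with γ² irrational and let β₀ ∈ ℝ. Let M : ℝ → Matrix (Fin 2) (Fin 2) ℂ be continuous, and let A : ℝ → Matrix (Fin 2) (Fin 2) ℂ be such that A(β) is invertible for every β ∈ ℝ. Assume that for all β ∈ ℝ: A(β + 4/γ) = A(β); M(β + γ) = A(β) · M(β) · A(β)⁻¹; M(β + 4/γ) = M(β); and that M(β₀) = 1 (the 2×2 identity matrix). Then M(β) = 1 for all β ∈ ℝ. -/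
/-- Matrix rigidity lemma abstracting the uniqueness argument in the proof of Theorem 1.1 of
the paper: a continuous matrix-valued function satisfying a conjugation relation under
`β ↦ β + γ` (with `4/γ`-periodic conjugating matrices), which is `4/γ`-periodic and equals the
identity at one point, equals the identity everywhere, provided `γ²` is irrational. -/
theorem matrix_shift_rigidity (γ : ℝ) (hγ : 0 < γ) (hirr : Irrational (γ ^ 2)) (β₀ : ℝ)
    (M A : ℝ → Matrix (Fin 2) (Fin 2) ℂ)
    (hM : Continuous M)
    (hA : ∀ β : ℝ, IsUnit (A β))
    (hAper : ∀ β : ℝ, A (β + 4 / γ) = A β)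
    (hconj : ∀ β : ℝ, M (β + γ) = A β * M β * (A β)⁻¹)
    (hMper : ∀ β : ℝ, M (β + 4 / γ) = M β)
    (hM0 : M β₀ = 1) :
    ∀ β : ℝ, M β = 1 := by
  have hγ0 : γ ≠ 0 := hγ.ne'
  have hAdet : ∀ β : ℝ, IsUnit (A β).det := fun β =>
    (Matrix.isUnit_iff_isUnit_det (A β)).mp (hA β)
  have hAinv : ∀ β : ℝ, A β * (A β)⁻¹ = 1 := fun β => Matrix.mul_nonsing_inv _ (hAdet β)
  have hAinv' : ∀ β : ℝ, (A β)⁻¹ * A β = 1 := fun β => Matrix.nonsing_inv_mul _ (hAdet β)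
  -- the subgroup generated by γ and 4/γ
  set S : AddSubgroup ℝ := AddSubgroup.closure {γ, 4 / γ} with hS
  -- the key iff, stable under the subgroup operations
  have key : ∀ s ∈ S, ∀ β : ℝ, (M β = 1 ↔ M (β + s) = 1) := by
    intro s hs
    induction hs using AddSubgroup.closure_induction with
    | mem x hx =>
      rcases hx with rfl | rfl
      · intro β
        constructor
        · intro h
          rw [hconj β, h, mul_one, hAinv]
        · intro h
          have := hconj β
          rw [h] at this
          have h2 : (A β)⁻¹ * ((A β * M β) * (A β)⁻¹) * A β = (A β)⁻¹ * 1 * A β := by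
            rw [← this]
          rw [mul_one, hAinv'] at h2
          calc M β = 1 * M β * 1 := by rw [one_mul, mul_one]
            _ = ((A β)⁻¹ * A β) * M β * ((A β)⁻¹ * A β) := by rw [hAinv']
            _ = (A β)⁻¹ * ((A β * M β) * (A β)⁻¹) * A β := by
                simp only [Matrix.mul_assoc]
            _ = 1 := h2
      · intro β
        rw [hMper β]
    | zero => intro β; simp
    | add x y _ _ hx hy =>
      intro β
      rw [← add_assoc]
      exact (hx β).trans (hy (β + x))
    | neg x _ hx =>
      intro β
      have := hx (β + -x)
      rw [neg_add_cancel_right] at this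
      exact this.symm
  -- S is dense since γ² is irrational
  have hdense : Dense (S : Set ℝ) := by
    rcases S.dense_or_cyclic with h | ⟨a, ha⟩
    · exact h
    · exfalso
      have hγS : γ ∈ S := AddSubgroup.subset_closure (by simp)
      have h4S : (4 / γ) ∈ S := AddSubgroup.subset_closure (by simp)
      rw [ha, AddSubgroup.mem_closure_singleton] at hγS h4S
      obtain ⟨p, hp⟩ := hγS
      obtain ⟨q, hq⟩ := h4S
      have hqz : q ≠ 0 := by
        rintro rfl
        rw [zero_smul] at hq
        exact absurd hq.symm (ne_of_gt (div_pos (by norm_num : (0:ℝ) < 4) hγ))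
      have hq0 : (q : ℝ) ≠ 0 := Int.cast_ne_zero.mpr hqz
      -- q γ² = 4 p
      have hmain : (q : ℝ) * γ ^ 2 = 4 * p := by
        have h1 : (p : ℝ) * a = γ := by simpa [zsmul_eq_mul] using hp
        have h2 : (q : ℝ) * a = 4 / γ := by simpa [zsmul_eq_mul] using hq
        have : (q : ℝ) * a * γ = 4 := by rw [h2]; field_simp
        calc (q : ℝ) * γ ^ 2 = (q : ℝ) * a * γ * p := by rw [← h1]; ring
          _ = 4 * p := by rw [this]
      apply hirr
      refine ⟨(4 * p) / q, ?_⟩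
      push_cast
      field_simp at hmain ⊢
      linarith [hmain]
  -- the set β₀ + S is dense
  have hdense2 : Dense ((fun s => β₀ + s) '' (S : Set ℝ)) := by
    have : Dense ((fun s : ℝ => β₀ + s) '' (S : Set ℝ)) :=
      DenseRange.dense_image (Function.Surjective.denseRange
        (fun y => ⟨y - β₀, by ring⟩)) (by continuity) hdense
    exact this
  -- M equals 1 on this dense set
  have heq : Set.EqOn M (fun _ => (1 : Matrix (Fin 2) (Fin 2) ℂ)) ((fun s => β₀ + s) '' (S : Set ℝ)) := by
    rintro _ ⟨s, hs, rfl⟩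
    exact (key s hs β₀).mp hM0
  have := Continuous.ext_on hdense2 hM continuous_const heq
  intro β
  exact congrFun this β
end

section
/- Let γ > 0 and a > 0 be real and let ℓ ∈ ℂ satisfy Re ℓ ≥ 0. Then lim_{s → 0⁺} s · ∫_ℝ e^{sc} exp(−a e^{γc} − ℓ e^{γc/2}) dc = 1. -/
open MeasureTheory Filter Topology
open Set

noncomputable def gfun (γ a : ℝ) (ℓ : ℂ) (c : ℝ) : ℂ :=
  Complex.exp (-(a * Real.exp (γ * c)) - ℓ * Real.exp (γ * c / 2))

noncomputable def Hfun (γ a : ℝ) (ℓ : ℂ) (s u : ℝ) : ℂ :=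
  Complex.exp u * gfun γ a ℓ (u / s)

lemma gfun_norm (γ a : ℝ) (ℓ : ℂ) (hℓ : 0 ≤ ℓ.re) (c : ℝ) :
    ‖gfun γ a ℓ c‖ ≤ Real.exp (-(a * Real.exp (γ * c))) := by
  rw [gfun, Complex.norm_exp]
  apply Real.exp_le_exp.mpr
  have : ((-((a:ℂ) * (Real.exp (γ * c) : ℝ)) - ℓ * (Real.exp (γ * c / 2) : ℝ))).re
      = -(a * Real.exp (γ * c)) - ℓ.re * Real.exp (γ * c / 2) := by
    simp only [Complex.sub_re, Complex.neg_re, Complex.mul_re, Complex.ofReal_re,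
      Complex.ofReal_im, mul_zero, zero_mul, sub_zero]
  rw [this]
  nlinarith [Real.exp_pos (γ * c / 2), mul_nonneg hℓ (Real.exp_pos (γ * c / 2)).le]

lemma gfun_cont (γ a : ℝ) (ℓ : ℂ) : Continuous (gfun γ a ℓ) := by
  unfold gfun; fun_prop

lemma Hfun_norm (γ a : ℝ) (ℓ : ℂ) (hℓ : 0 ≤ ℓ.re) (s u : ℝ) :
    ‖Hfun γ a ℓ s u‖ ≤ Real.exp u * Real.exp (-(a * Real.exp (γ * (u / s)))) := by
  rw [Hfun, norm_mul, Complex.norm_exp,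
    Complex.ofReal_re]
  exact mul_le_mul_of_nonneg_left (gfun_norm γ a ℓ hℓ (u / s)) (Real.exp_pos u).le

lemma key_eq (γ a : ℝ) (ℓ : ℂ) {s : ℝ} (hs : 0 < s) :
    (s : ℂ) * ∫ c : ℝ, Complex.exp (s * c) *
          Complex.exp (-(a * Real.exp (γ * c)) - ℓ * Real.exp (γ * c / 2))
      = ∫ u : ℝ, Hfun γ a ℓ s u := by
  have h1 : ∀ c : ℝ, Complex.exp (s * c) *
        Complex.exp (-(a * Real.exp (γ * c)) - ℓ * Real.exp (γ * c / 2))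
      = Hfun γ a ℓ s (s * c) := by
    intro c
    rw [Hfun, mul_div_cancel_left₀ _ hs.ne', gfun, Complex.ofReal_mul]
  simp_rw [h1]
  rw [MeasureTheory.Measure.integral_comp_mul_left (Hfun γ a ℓ s) s,
    abs_of_pos (inv_pos.mpr hs), ← Complex.real_smul, smul_smul,
    mul_inv_cancel₀ hs.ne', one_smul]


/-- Deterministic core of the first residue computation in Lemma 5.1 of the paper:
`s · ∫_ℝ e^{sc} exp(−a e^{γc} − ℓ e^{γc/2}) dc → 1` as `s → 0⁺`. -/
theorem zero_mode_residue_limit (γ a : ℝ) (hγ : 0 < γ) (ha : 0 < a)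
    (ℓ : ℂ) (hℓ : 0 ≤ ℓ.re) :
    Tendsto (fun s : ℝ => (s : ℂ) *
        ∫ c : ℝ, Complex.exp (s * c) *
          Complex.exp (-(a * Real.exp (γ * c)) - ℓ * Real.exp (γ * c / 2)))
      (nhdsWithin 0 (Set.Ioi 0)) (nhds 1) := by
  have lim : Tendsto (fun s => ∫ u : ℝ, Hfun γ a ℓ s u) (nhdsWithin 0 (Set.Ioi 0))
      (nhds (∫ u : ℝ, (Iic (0:ℝ)).indicator (fun u => Complex.exp u) u)) := by
    apply tendsto_integral_filter_of_dominated_convergence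
      (fun u => Real.exp (-|u|))
    · filter_upwards with s
      exact ((Complex.continuous_exp.comp Complex.continuous_ofReal).mul
        ((gfun_cont γ a ℓ).comp (continuous_id.div_const s))).aestronglyMeasurable
    · have hmem : Set.Ioo 0 (min 1 (a * γ / 2)) ∈ nhdsWithin (0:ℝ) (Set.Ioi 0) :=
        Ioo_mem_nhdsGT_of_mem ⟨le_refl _, lt_min one_pos (by positivity)⟩
      filter_upwards [hmem] with s hs
      filter_upwards with u
      have hs0 : 0 < s := hs.1
      have hnorm := Hfun_norm γ a ℓ hℓ s u
      rcases le_or_gt u 0 with hu | hu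
      · calc ‖Hfun γ a ℓ s u‖ ≤ Real.exp u * Real.exp (-(a * Real.exp (γ * (u/s)))) := hnorm
          _ ≤ Real.exp u * 1 := by
              apply mul_le_mul_of_nonneg_left _ (Real.exp_pos u).le
              rw [← Real.exp_zero]
              apply Real.exp_le_exp.mpr
              nlinarith [Real.exp_pos (γ * (u/s))]
          _ = Real.exp (-|u|) := by rw [mul_one, abs_of_nonpos hu, neg_neg]
      · have h2u : 2 * u ≤ a * Real.exp (γ * (u/s)) := by
          have hx : γ * (u/s) ≤ Real.exp (γ * (u/s)) :=
            (Real.add_one_le_exp _).trans' (by linarith)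
          have hs2 : s < a * γ / 2 := lt_of_lt_of_le hs.2 (min_le_right _ _)
          have huds : 0 < u / s := by positivity
          have h1 : 2 * u ≤ a * (γ * (u/s)) := by
            have h2 : 2 * s ≤ a * γ := by linarith
            have h3 := mul_le_mul_of_nonneg_right h2 huds.le
            have h4 : (2 * s) * (u / s) = 2 * u := by field_simp
            nlinarith
          nlinarith
        calc ‖Hfun γ a ℓ s u‖ ≤ Real.exp u * Real.exp (-(a * Real.exp (γ * (u/s)))) := hnorm
          _ ≤ Real.exp u * Real.exp (-(2*u)) := by
              apply mul_le_mul_of_nonneg_left _ (Real.exp_pos u).le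
              exact Real.exp_le_exp.mpr (by linarith)
          _ = Real.exp (-u) := by rw [← Real.exp_add]; ring_nf
          _ = Real.exp (-|u|) := by rw [abs_of_pos hu]
    · -- integrable bound
      have h1 : IntegrableOn (fun u : ℝ => Real.exp (-|u|)) (Iic 0) := by
        apply (integrableOn_exp_Iic 0).congr_fun ?_ measurableSet_Iic
        intro x hx; simp [abs_of_nonpos (mem_Iic.mp hx)]
      have h2 : IntegrableOn (fun u : ℝ => Real.exp (-|u|)) (Ioi 0) := by
        apply (exp_neg_integrableOn_Ioi 0 one_pos).congr_fun ?_ measurableSet_Ioi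
        intro x hx; simp [abs_of_pos (mem_Ioi.mp hx)]
      have := h1.union h2
      rwa [Iic_union_Ioi, integrableOn_univ] at this
    · -- pointwise limit a.e.
      have hae : ∀ᵐ u : ℝ, u ≠ 0 := by
        refine ae_iff.mpr ?_
        have h : {u : ℝ | ¬ u ≠ 0} = {0} := by ext u; simp
        rw [h, measure_singleton]
      filter_upwards [hae] with u hu
      rcases hu.lt_or_gt with hu | hu
      · -- u < 0 : H s u → exp u
        rw [indicator_of_mem (mem_Iic.mpr hu.le)]
        have hbot : Tendsto (fun s : ℝ => u / s) (nhdsWithin 0 (Set.Ioi 0)) atBot := by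
          simp only [div_eq_mul_inv]
          exact (tendsto_const_mul_atBot_of_neg hu).mpr tendsto_inv_nhdsGT_zero
        have hgl : Tendsto (fun x : ℝ => gfun γ a ℓ x) atBot (nhds 1) := by
          have hγx : Tendsto (fun x : ℝ => γ * x) atBot atBot :=
            (tendsto_const_mul_atBot_of_pos hγ).mpr tendsto_id
          have he : Tendsto (fun x : ℝ => Real.exp (γ * x)) atBot (nhds 0) :=
            Real.tendsto_exp_atBot.comp hγx
          have he2 : Tendsto (fun x : ℝ => Real.exp (γ * x / 2)) atBot (nhds 0) :=
            Real.tendsto_exp_atBot.comp (hγx.atBot_div_const two_pos)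
          have harg : Tendsto (fun x : ℝ =>
              (-(a * Real.exp (γ * x)) - ℓ * Real.exp (γ * x / 2) : ℂ)) atBot (nhds 0) := by
            have t1 := (Complex.continuous_ofReal.tendsto 0).comp he
            have t2 := (Complex.continuous_ofReal.tendsto 0).comp he2
            have t3 := ((t1.const_mul (a:ℂ)).neg).sub (t2.const_mul ℓ)
            have t4 : Tendsto (fun x : ℝ =>
                (-(a * Real.exp (γ * x)) - ℓ * Real.exp (γ * x / 2) : ℂ)) atBot
                (nhds (-((a:ℂ) * ((0:ℝ):ℂ)) - ℓ * ((0:ℝ):ℂ))) := t3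
            simpa using t4
          have h5 := (Complex.continuous_exp.tendsto 0).comp harg
          have h6 : Tendsto (fun x : ℝ => gfun γ a ℓ x) atBot (nhds (Complex.exp 0)) := h5
          simpa [Complex.exp_zero] using h6
        have := (tendsto_const_nhds (x := Complex.exp (u:ℂ))
            (f := nhdsWithin (0:ℝ) (Set.Ioi 0))).mul (hgl.comp hbot)
        simpa [Hfun, Function.comp] using this
      · -- u > 0 : H s u → 0
        rw [indicator_of_notMem (by simpa using hu)]
        rw [tendsto_zero_iff_norm_tendsto_zero]
        have htop : Tendsto (fun s : ℝ => u / s) (nhdsWithin 0 (Set.Ioi 0)) atTop := by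
          simp only [div_eq_mul_inv]
          exact Tendsto.const_mul_atTop hu tendsto_inv_nhdsGT_zero
        have t2 := Tendsto.const_mul_atTop hγ htop
        have t3 := Real.tendsto_exp_atTop.comp t2
        have t4 := Tendsto.const_mul_atTop ha t3
        have t5 : Tendsto (fun s : ℝ => -(a * Real.exp (γ * (u/s))))
            (nhdsWithin 0 (Set.Ioi 0)) atBot := tendsto_neg_atBot_iff.mpr t4
        have t6 : Tendsto (fun s : ℝ => Real.exp (-(a * Real.exp (γ * (u/s)))))
            (nhdsWithin 0 (Set.Ioi 0)) (nhds 0) := Real.tendsto_exp_atBot.comp t5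
        have tb : Tendsto (fun s : ℝ => Real.exp u * Real.exp (-(a * Real.exp (γ * (u/s)))))
            (nhdsWithin 0 (Set.Ioi 0)) (nhds 0) := by
          simpa using (tendsto_const_nhds (x := Real.exp u)).mul t6
        exact squeeze_zero (fun s => norm_nonneg _) (fun s => Hfun_norm γ a ℓ hℓ s u) tb
  have lim_val : (∫ u : ℝ, (Iic (0:ℝ)).indicator (fun u => Complex.exp u) u) = 1 := by
    rw [integral_indicator measurableSet_Iic]
    have : ∀ u : ℝ, Complex.exp (u : ℂ) = ((Real.exp u : ℝ) : ℂ) := fun u =>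
      (Complex.ofReal_exp u).symm
    simp_rw [this]
    have h2 : ∫ x : ℝ in Iic 0, ((Real.exp x : ℝ) : ℂ) = ((∫ x : ℝ in Iic 0, Real.exp x : ℝ) : ℂ) :=
      integral_ofReal
    rw [h2, integral_exp_Iic]
    norm_num
  rw [← lim_val]
  apply lim.congr'
  filter_upwards [self_mem_nhdsWithin] with s hs
  exact (key_eq γ a ℓ hs).symm
end

section
/- Let γ > 0 and a > 0 be real and let ℓ ∈ ℂ satisfy Re ℓ ≥ 0. Then lim_{s → (−γ/2)⁺} (s + γ/2) · ∫_ℝ e^{sc} ( exp(−a e^{γc} − ℓ e^{γc/2}) − 1 ) dc = −ℓ. -/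
open MeasureTheory Filter Topology

section Helpers
open Set

lemma aux_integrableOn_exp_Iio {b : ℝ} (hb : 0 < b) :
    IntegrableOn (fun x : ℝ => Real.exp (b * x)) (Iio 0) := by
  have h := exp_neg_integrableOn_Ioi 0 hb
  rw [← integrable_indicator_iff measurableSet_Ioi] at h
  have h2 := h.comp_neg
  rw [← integrable_indicator_iff measurableSet_Iio]
  refine h2.congr (Filter.Eventually.of_forall fun x => ?_)
  by_cases hx : x < 0
  · simp [Set.indicator_apply, hx, neg_pos.2 hx, mul_comm]
  · simp [Set.indicator_apply, hx, fun h => hx (neg_pos.1 h)]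

lemma aux_integral_exp_Iio {b : ℝ} (hb : 0 < b) :
    ∫ x in Iio (0:ℝ), Real.exp (b * x) = 1 / b := by
  rw [← integral_Iic_eq_integral_Iio]
  have h1 : ∀ x : ℝ, Real.exp (b * x) = (fun y => Real.exp (-(b * y))) (-x) := by
    intro x; simp
  calc ∫ x in Iic (0:ℝ), Real.exp (b * x)
      = ∫ x in Iic (0:ℝ), (fun y => Real.exp (-(b*y))) (-x) := by
        refine setIntegral_congr_fun measurableSet_Iic fun x _ => h1 x
    _ = ∫ x in Ioi (-(0:ℝ)), (fun y => Real.exp (-(b*y))) x :=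
        integral_comp_neg_Iic (0:ℝ) (fun y => Real.exp (-(b*y)))
    _ = ∫ x in Ioi (0:ℝ), (fun y => Real.exp (-y)) (b * x) := by norm_num
    _ = b⁻¹ • ∫ x in Ioi (b * 0), (fun y => Real.exp (-y)) x :=
        integral_comp_mul_left_Ioi (fun y => Real.exp (-y)) 0 hb
    _ = 1 / b := by
        rw [mul_zero]
        simp only [smul_eq_mul]
        rw [integral_exp_neg_Ioi_zero]; simp [one_div]

lemma aux_norm_exp_le_one {a u v : ℝ} (ha : 0 ≤ a) (hu : 0 ≤ u) (hv : 0 ≤ v)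
    {ℓ : ℂ} (hℓ : 0 ≤ ℓ.re) :
    ‖Complex.exp (-((a:ℂ) * (u:ℂ)) - ℓ * (v:ℂ))‖ ≤ 1 := by
  rw [Complex.norm_exp, Real.exp_le_one_iff]
  have h1 : (-((a:ℂ) * (u:ℂ)) - ℓ * (v:ℂ)).re = -(a * u) - ℓ.re * v := by
    simp [Complex.sub_re, Complex.neg_re, Complex.mul_re]
  rw [h1]
  nlinarith [mul_nonneg ha hu, mul_nonneg hℓ hv]

lemma aux_H_bound {a u v : ℝ} (ha : 0 < a) (hu : 0 < u) (hv : 0 < v) (hv1 : v ≤ 1)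
    (huv : u = v ^ 2) {ℓ : ℂ} (hℓ : 0 ≤ ℓ.re) :
    ‖Complex.exp (-((a:ℂ) * (u:ℂ)) - ℓ * (v:ℂ)) - 1 + ℓ * (v:ℂ)‖
      ≤ ((a + ‖ℓ‖) ^ 2 + a + (2 + ‖ℓ‖) * (a + ‖ℓ‖) ^ 2) * u := by
  have huv' : u ≤ v := by nlinarith
  set z : ℂ := -((a:ℂ) * (u:ℂ)) - ℓ * (v:ℂ) with hz
  have hzabs : ‖z‖ ≤ (a + ‖ℓ‖) * v := by
    calc ‖z‖ ≤ ‖-((a:ℂ) * (u:ℂ))‖ + ‖ℓ * (v:ℂ)‖ := norm_sub_le _ _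
      _ = a * u + ‖ℓ‖ * v := by
          rw [norm_neg, norm_mul, norm_mul, Complex.norm_real, Complex.norm_real,
            Complex.norm_real, Real.norm_eq_abs, Real.norm_eq_abs, Real.norm_eq_abs,
            abs_of_nonneg ha.le, abs_of_nonneg hu.le, abs_of_nonneg hv.le]
      _ ≤ a * v + ‖ℓ‖ * v := by nlinarith [norm_nonneg ℓ]
      _ = (a + ‖ℓ‖) * v := by ring
  have hC2 : (0:ℝ) ≤ (a + ‖ℓ‖) ^ 2 := sq_nonneg _
  by_cases h1 : (a + ‖ℓ‖) * v ≤ 1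
  · have hz1 : ‖z‖ ≤ 1 := le_trans hzabs h1
    have hb := Complex.norm_exp_sub_one_sub_id_le hz1
    have key : Complex.exp z - 1 + ℓ * (v:ℂ) = (Complex.exp z - 1 - z) - ((a:ℂ) * (u:ℂ)) := by
      rw [hz]; ring
    rw [key]
    calc ‖(Complex.exp z - 1 - z) - ((a:ℂ) * (u:ℂ))‖
        ≤ ‖Complex.exp z - 1 - z‖ + ‖(a:ℂ) * (u:ℂ)‖ := norm_sub_le _ _
      _ ≤ ‖z‖ ^ 2 + a * u := by
          rw [norm_mul, Complex.norm_real, Complex.norm_real, Real.norm_eq_abs,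
            Real.norm_eq_abs, abs_of_nonneg ha.le, abs_of_nonneg hu.le]
          exact add_le_add hb le_rfl
      _ ≤ ((a + ‖ℓ‖) * v) ^ 2 + a * u := by
          have := pow_le_pow_left₀ (norm_nonneg z) hzabs 2
          linarith
      _ = (a + ‖ℓ‖) ^ 2 * u + a * u := by rw [huv]; ring
      _ ≤ ((a + ‖ℓ‖) ^ 2 + a + (2 + ‖ℓ‖) * (a + ‖ℓ‖) ^ 2) * u := by
          nlinarith [mul_nonneg (mul_nonneg (by positivity : (0:ℝ) ≤ 2 + ‖ℓ‖) hC2) hu.le]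
  · push_neg at h1
    have hb : ‖Complex.exp z - 1 + ℓ * (v:ℂ)‖ ≤ 2 + ‖ℓ‖ := by
      have hn := norm_sub_le (Complex.exp z) 1
      have h2 : ‖Complex.exp z‖ ≤ 1 := aux_norm_exp_le_one ha.le hu.le hv.le hℓ
      have h3 : ‖ℓ * (v:ℂ)‖ = ‖ℓ‖ * v := by
        rw [norm_mul, Complex.norm_real, Real.norm_eq_abs, abs_of_nonneg hv.le]
      calc ‖Complex.exp z - 1 + ℓ * (v:ℂ)‖
          ≤ ‖Complex.exp z - 1‖ + ‖ℓ * (v:ℂ)‖ := norm_add_le _ _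
        _ ≤ 2 + ‖ℓ‖ := by
            rw [h3]; rw [norm_one] at hn
            nlinarith [norm_nonneg ℓ]
    refine hb.trans ?_
    have h3 : 1 ≤ (a + ‖ℓ‖) ^ 2 * u := by rw [huv]; nlinarith
    nlinarith [norm_nonneg ℓ]

end Helpers

/-- Deterministic core of the second residue computation in Lemma 5.1 of the paper:
`(s + γ/2) · ∫_ℝ e^{sc} (exp(−a e^{γc} − ℓ e^{γc/2}) − 1) dc → −ℓ` as `s → (−γ/2)⁺`. -/
theorem truncated_zero_mode_residue_limit (γ a : ℝ) (hγ : 0 < γ) (ha : 0 < a)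
    (ℓ : ℂ) (hℓ : 0 ≤ ℓ.re) :
    Tendsto (fun s : ℝ => ((s : ℂ) + γ / 2) *
        ∫ c : ℝ, Complex.exp (s * c) *
          (Complex.exp (-(a * Real.exp (γ * c)) - ℓ * Real.exp (γ * c / 2)) - 1))
      (nhdsWithin (-(γ / 2)) (Set.Ioi (-(γ / 2)))) (nhds (-ℓ)) := by
  set C : ℝ := (a + ‖ℓ‖) ^ 2 + a + (2 + ‖ℓ‖) * (a + ‖ℓ‖) ^ 2 with hC
  have hC0 : 0 ≤ C := by positivity
  set F : ℝ → ℂ := fun c =>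
    Complex.exp (-(a * Real.exp (γ * c)) - ℓ * Real.exp (γ * c / 2)) with hF
  set H : ℝ → ℂ := fun c =>
    F c - 1 + Set.indicator (Set.Iio (0:ℝ)) (fun c => ℓ * (Real.exp (γ * c / 2) : ℂ)) c with hH
  set gd : ℝ → ℝ := fun c =>
    if c < 0 then C * Real.exp (γ / 2 * c) else 2 * Real.exp (-(γ / 4) * c) with hgd
  -- measurability facts
  have hc1 : Continuous fun c : ℝ => ((Real.exp (γ*c) : ℝ) : ℂ) :=
    Complex.continuous_ofReal.comp (Real.continuous_exp.comp (continuous_const.mul continuous_id))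
  have hc2 : Continuous fun c : ℝ => ((Real.exp (γ*c/2) : ℝ) : ℂ) :=
    Complex.continuous_ofReal.comp
      (Real.continuous_exp.comp ((continuous_const.mul continuous_id).div_const 2))
  have hFc : Continuous F :=
    Complex.continuous_exp.comp (((continuous_const.mul hc1).neg).sub (continuous_const.mul hc2))
  have hHm : AEStronglyMeasurable H (volume : Measure ℝ) := by
    apply ((hFc.sub continuous_const).aestronglyMeasurable).add
    exact ((continuous_const.mul hc2).aestronglyMeasurable).indicator measurableSet_Iio
  -- gd is integrable
  have hgd_int : Integrable gd := by
    rw [← integrableOn_univ, ← Set.Iio_union_Ici (a := (0:ℝ))]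
    apply IntegrableOn.union
    · refine IntegrableOn.congr_fun (f := fun x => C * Real.exp (γ/2 * x))
        ((aux_integrableOn_exp_Iio (b := γ/2) (by positivity)).const_mul C)
        (fun c hc => ?_) measurableSet_Iio
      simp only [hgd]; rw [if_pos (show c < 0 from hc)]
    · refine IntegrableOn.congr_fun (f := fun x => 2 * Real.exp (-(γ/4) * x))
        ((integrableOn_Ici_iff_integrableOn_Ioi (by simp)).2
          ((exp_neg_integrableOn_Ioi 0 (by positivity : (0:ℝ) < γ/4)).const_mul 2))
        (fun c hc => ?_) measurableSet_Ici
      simp only [hgd]; rw [if_neg (not_lt.2 (show (0:ℝ) ≤ c from hc))]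
  -- bounds on H
  have hHb : ∀ c : ℝ, ‖H c‖ ≤ if c < 0 then C * Real.exp (γ * c) else 2 := by
    intro c
    by_cases hc : c < 0
    · rw [if_pos hc]
      simp only [hH, Set.indicator_of_mem (show c ∈ Set.Iio (0:ℝ) from hc)]
      refine aux_H_bound ha (Real.exp_pos _) (Real.exp_pos _)
        (Real.exp_le_one_iff.2 (by nlinarith)) ?_ hℓ
      rw [sq, ← Real.exp_add]; congr 1; ring
    · rw [if_neg hc]
      simp only [hH, Set.indicator_of_notMem (show c ∉ Set.Iio (0:ℝ) from hc), add_zero]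
      calc ‖F c - 1‖ ≤ ‖F c‖ + ‖(1:ℂ)‖ := norm_sub_le _ _
        _ ≤ 2 := by
            have h2 : ‖F c‖ ≤ 1 := aux_norm_exp_le_one ha.le (Real.exp_pos (γ*c)).le
              (Real.exp_pos (γ*c/2)).le hℓ
            rw [norm_one]
            linarith
  have hexp_norm : ∀ s c : ℝ, ‖Complex.exp ((s:ℂ) * c)‖ = Real.exp (s * c) := by
    intro s c
    rw [← Complex.ofReal_mul, ← Complex.ofReal_exp, Complex.norm_real, Real.norm_eq_abs,
      abs_of_pos (Real.exp_pos _)]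
  -- dominating bound for s ∈ Ioo
  have hdom : ∀ s ∈ Set.Ioo (-(γ/2)) (-(γ/4)), ∀ c : ℝ,
      ‖Complex.exp ((s:ℂ) * c) * H c‖ ≤ gd c := by
    intro s hs c
    rw [norm_mul, hexp_norm]
    by_cases hc : c < 0
    · have h1 := hHb c
      rw [if_pos hc] at h1
      calc Real.exp (s * c) * ‖H c‖ ≤ Real.exp (s * c) * (C * Real.exp (γ * c)) :=
            mul_le_mul_of_nonneg_left h1 (Real.exp_pos _).le
        _ = C * Real.exp (s * c + γ * c) := by rw [Real.exp_add]; ring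
        _ ≤ C * Real.exp (γ / 2 * c) := by
            refine mul_le_mul_of_nonneg_left (Real.exp_le_exp.2 ?_) hC0
            nlinarith [hs.1, mul_nonneg (show (0:ℝ) ≤ s + γ/2 by nlinarith [hs.1])
              (neg_nonneg.2 hc.le)]
        _ = gd c := by rw [hgd]; simp [if_pos hc]
    · have h1 := hHb c
      rw [if_neg hc] at h1
      calc Real.exp (s * c) * ‖H c‖ ≤ Real.exp (s * c) * 2 :=
            mul_le_mul_of_nonneg_left h1 (Real.exp_pos _).le
        _ ≤ Real.exp (-(γ / 4) * c) * 2 := by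
            refine mul_le_mul_of_nonneg_right (Real.exp_le_exp.2 ?_) (by norm_num)
            nlinarith [hs.2, not_lt.1 hc]
        _ = gd c := by rw [hgd]; simp [if_neg hc]; ring
  -- integrability of the H part
  have hint1 : ∀ s ∈ Set.Ioo (-(γ/2)) (-(γ/4)),
      Integrable (fun c : ℝ => Complex.exp ((s:ℂ) * c) * H c) := by
    intro s hs
    refine Integrable.mono' hgd_int ?_ (Filter.Eventually.of_forall (hdom s hs))
    exact ((Complex.continuous_exp.comp
      (continuous_const.mul Complex.continuous_ofReal)).aestronglyMeasurable).mul hHm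
  -- key eventual identity
  have hmem : ∀ᶠ s in nhdsWithin (-(γ/2)) (Set.Ioi (-(γ/2))), s ∈ Set.Ioo (-(γ/2)) (-(γ/4)) :=
    Ioo_mem_nhdsGT (by linarith)
  have key : ∀ s ∈ Set.Ioo (-(γ/2)) (-(γ/4)),
      ((s:ℂ) + γ/2) * (∫ c : ℝ, Complex.exp ((s:ℂ) * c) * (F c - 1))
        = ((s:ℂ) + γ/2) * (∫ c : ℝ, Complex.exp ((s:ℂ) * c) * H c) + (-ℓ) := by
    intro s hs
    have hb : 0 < s + γ/2 := by nlinarith [hs.1]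
    have hne : ((s:ℂ) + γ/2) ≠ 0 := by
      have : ((s:ℂ) + γ/2) = ((s + γ/2 : ℝ) : ℂ) := by push_cast; ring
      rw [this]
      exact_mod_cast hb.ne'
    have hsplit : ∀ c : ℝ, Complex.exp ((s:ℂ) * c) * (F c - 1)
        = Complex.exp ((s:ℂ) * c) * H c
          - ℓ * Set.indicator (Set.Iio (0:ℝ))
              (fun c => ((Real.exp ((s + γ/2) * c)) : ℂ)) c := by
      intro c
      by_cases hc : c < 0
      · simp only [hH, Set.indicator_of_mem (show c ∈ Set.Iio (0:ℝ) from hc)]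
        have hx : ((Real.exp ((s + γ/2) * c)) : ℂ)
            = Complex.exp ((s:ℂ) * c) * (Real.exp (γ * c / 2) : ℂ) := by
          rw [Complex.ofReal_exp, Complex.ofReal_exp, ← Complex.exp_add]
          congr 1; push_cast; ring
        rw [hx]; ring
      · simp only [hH, Set.indicator_of_notMem (show c ∉ Set.Iio (0:ℝ) from hc)]
        ring
    have hind_int : Integrable (Set.indicator (Set.Iio (0:ℝ))
        (fun c => ((Real.exp ((s + γ/2) * c)) : ℂ))) := by
      rw [integrable_indicator_iff measurableSet_Iio]
      exact (aux_integrableOn_exp_Iio hb).ofReal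
    have hind_val : (∫ c : ℝ, Set.indicator (Set.Iio (0:ℝ))
        (fun c => ((Real.exp ((s + γ/2) * c)) : ℂ)) c) = ((1 / (s + γ/2) : ℝ) : ℂ) := by
      rw [integral_indicator measurableSet_Iio, ← aux_integral_exp_Iio hb]
      exact integral_ofReal
    calc ((s:ℂ) + γ/2) * (∫ c : ℝ, Complex.exp ((s:ℂ) * c) * (F c - 1))
        = ((s:ℂ) + γ/2) * (∫ c : ℝ, (Complex.exp ((s:ℂ) * c) * H c
            - ℓ * Set.indicator (Set.Iio (0:ℝ))
                (fun c => ((Real.exp ((s + γ/2) * c)) : ℂ)) c)) := by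
          congr 1
          exact integral_congr_ae (Filter.Eventually.of_forall hsplit)
      _ = ((s:ℂ) + γ/2) * ((∫ c : ℝ, Complex.exp ((s:ℂ) * c) * H c)
            - ℓ * ((1 / (s + γ/2) : ℝ) : ℂ)) := by
          rw [integral_sub (hint1 s hs) (hind_int.const_mul ℓ), integral_const_mul, hind_val]
      _ = ((s:ℂ) + γ/2) * (∫ c : ℝ, Complex.exp ((s:ℂ) * c) * H c) + (-ℓ) := by
          have hcast : ((1 / (s + γ/2) : ℝ) : ℂ) = 1 / ((s:ℂ) + γ/2) := by push_cast; ring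
          have hcancel : ((s:ℂ) + γ/2) * (ℓ * (1 / ((s:ℂ) + γ/2))) = ℓ := by
            rw [mul_comm ℓ, ← mul_assoc, mul_one_div_cancel hne, one_mul]
          rw [hcast, mul_sub, hcancel, sub_eq_add_neg]
  -- the remainder tends to zero
  set M : ℝ := ∫ c, gd c with hM
  have hrem : Tendsto (fun s : ℝ => ((s:ℂ) + γ/2) * (∫ c : ℝ, Complex.exp ((s:ℂ) * c) * H c))
      (nhdsWithin (-(γ/2)) (Set.Ioi (-(γ/2)))) (nhds 0) := by
    have hbound : ∀ᶠ (s : ℝ) in nhdsWithin (-(γ/2)) (Set.Ioi (-(γ/2))),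
        ‖((s:ℂ) + γ/2) * (∫ c : ℝ, Complex.exp ((s:ℂ) * c) * H c)‖ ≤ (s + γ/2) * M := by
      filter_upwards [hmem] with s hs
      have hb : 0 < s + γ/2 := by nlinarith [hs.1]
      rw [norm_mul]
      have h1 : ‖((s:ℂ) + γ/2)‖ = s + γ/2 := by
        have : ((s:ℂ) + γ/2) = ((s + γ/2 : ℝ) : ℂ) := by push_cast; ring
        rw [this, Complex.norm_real, Real.norm_eq_abs, abs_of_pos hb]
      rw [h1]
      refine mul_le_mul_of_nonneg_left ?_ hb.le
      exact norm_integral_le_of_norm_le hgd_int (Filter.Eventually.of_forall (hdom s hs))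
    refine squeeze_zero_norm' hbound ?_
    have h0 : Tendsto (fun s : ℝ => (s + γ/2) * M) (nhds (-(γ/2)))
        (nhds ((-(γ/2) + γ/2) * M)) := by
      exact ((continuous_id.add continuous_const).mul continuous_const).tendsto _
    have hz0 : (-(γ/2) + γ/2) * M = 0 := by ring
    rw [hz0] at h0
    exact h0.mono_left nhdsWithin_le_nhds
  have hfinal : Tendsto (fun s : ℝ =>
      ((s:ℂ) + γ/2) * (∫ c : ℝ, Complex.exp ((s:ℂ) * c) * H c) + (-ℓ))
      (nhdsWithin (-(γ/2)) (Set.Ioi (-(γ/2)))) (nhds (-ℓ)) := by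
    simpa using hrem.add (tendsto_const_nhds (x := -ℓ))
  refine hfinal.congr' ?_
  filter_upwards [hmem] with s hs
  exact (key s hs).symm
end
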